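/- arXiv:0705.1310 — 13 statements merged into one kernel-verified Lean document; each statement's English description precedes it below -/
import Mathlib

section
/- Assume: (i) U₁ is an open neighborhood of 0 in E₁ and B : V × U₁ → E₀ is of class C¹ (Fréchet differentiable with continuous derivative, one-sided at boundary points of the quadrant); (ii) B takes values in ι(E₁), and there exist constants 0 < ρ₀ < 1, 0 < ρ₁ < 1 and r > 0 such that ‖B(v,u) − B(v,u′)‖₀ ≤ ρ₀‖ι(u) − ι(u′)‖₀ and ‖ι⁻¹(B(v,u)) − ι⁻¹(B(v,u′))‖₁ ≤ ρ₁‖u − u′‖₁ for all v ∈ V with |v| < r and u, u′ ∈ U₁ with ‖u‖₁ < r; (iii) δ : V → U₁ is continuous as a map into E₁ with δ(0) = 0 and ι(δ(v)) = B(v, δ(v)) for all v ∈ V. Then for every v in a relatively open neighborhood of 0 in V: (a) the partial derivative D₂B(v, δ(v)) : E₁ → E₀ satisfies ‖D₂B(v, δ(v))h‖₀ ≤ ρ₀‖ι(h)‖₀ for all h ∈ E₁, hence extends uniquely to a bounded operator T(v) on E₀ of norm at most ρ₀, and L(v) := id_{E₀} − T(v) is a Banach space isomorphism of E₀; (b)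 the map v ↦ ι(δ(v)) from V into E₀ is of class C¹ near 0, with derivative δ′(v) = L(v)⁻¹ ∘ D₁B(v, δ(v)) ∈ L(ℝ^n, E₀) depending continuously on v. (Regularity of the solution germ: Theorem 2.3, stated on a fixed pair of adjacent levels.) -/
open Filter Asymptotics Topology Set

theorem aux_extend {E₀ E₁ : Type*} [NormedAddCommGroup E₀] [NormedSpace ℝ E₀] [CompleteSpace E₀]
    [NormedAddCommGroup E₁] [NormedSpace ℝ E₁]
    (ι : E₁ →L[ℝ] E₀) (hinj : Function.Injective ι) (hd : DenseRange ι)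
    (S : E₁ →L[ℝ] E₀) (ρ : ℝ) (hρ : 0 ≤ ρ) (hb : ∀ h, ‖S h‖ ≤ ρ * ‖ι h‖) :
    ∃ T : E₀ →L[ℝ] E₀, ‖T‖ ≤ ρ ∧ ∀ h, T (ι h) = S h := by
  set F : Submodule ℝ E₀ := LinearMap.range (ι : E₁ →ₗ[ℝ] E₀) with hF
  have hinj' : Function.Injective (ι : E₁ →ₗ[ℝ] E₀) := hinj
  set eqv : E₁ ≃ₗ[ℝ] F := LinearEquiv.ofInjective (ι : E₁ →ₗ[ℝ] E₀) hinj' with heqv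
  have heqv_coe : ∀ h : E₁, ((eqv h : F) : E₀) = ι h := fun h => rfl
  set fL : F →ₗ[ℝ] E₀ := (S : E₁ →ₗ[ℝ] E₀).comp (eqv.symm : F →ₗ[ℝ] E₁) with hfL
  have hfbound : ∀ x : F, ‖fL x‖ ≤ ρ * ‖x‖ := by
    intro x
    have hx : ((eqv (eqv.symm x) : F) : E₀) = (x : E₀) := by rw [eqv.apply_symm_apply]
    have : ‖S (eqv.symm x)‖ ≤ ρ * ‖ι (eqv.symm x)‖ := hb _
    simpa [hfL, ← heqv_coe (eqv.symm x), hx] using this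
  set f : F →L[ℝ] E₀ := fL.mkContinuous ρ hfbound with hf
  set e : F →L[ℝ] E₀ := F.subtypeL with he
  have hdense : DenseRange e := by
    have h1 : Set.range e = (F : Set E₀) := Subtype.range_coe
    rw [DenseRange, h1]
    have h2 : (F : Set E₀) = Set.range ι := by
      ext x; simp [hF, LinearMap.mem_range]
    rw [h2]; exact hd
  have hui : IsUniformInducing e := isometry_subtype_coe.isUniformInducing
  refine ⟨f.extend e, ?_, ?_⟩
  · have h_e : ∀ x : F, ‖x‖ ≤ (1 : NNReal) * ‖e x‖ := by
      intro x; simp [he]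
    have hb2 := ContinuousLinearMap.opNorm_extend_le f hdense h_e
    have hfe : (ContinuousLinearMap.isUniformEmbedding_of_bound e h_e).isUniformInducing = hui :=
      rfl
    refine hb2.trans ?_
    have hfn : ‖f‖ ≤ ρ := fL.mkContinuous_norm_le hρ hfbound
    calc ((1:NNReal) : ℝ) * ‖f‖ ≤ 1 * ρ := by simpa using hfn
      _ = ρ := one_mul ρ
  · intro h
    have : ι h = e (eqv h) := rfl
    rw [this, ContinuousLinearMap.extend_eq (h_dense := hdense) (h_e := hui)]
    simp [hf, fL]

theorem aux_deriv_bound {E₀ E₁ : Type*} [NormedAddCommGroup E₀] [NormedSpace ℝ E₀]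
    [NormedAddCommGroup E₁] [NormedSpace ℝ E₁]
    (ι : E₁ →L[ℝ] E₀) (f : E₁ → E₀) (S : E₁ →L[ℝ] E₀) (u₀ : E₁)
    (hf : HasFDerivAt f S u₀) (ρ : ℝ) (s : Set E₁) (hs : s ∈ nhds u₀)
    (hlip : ∀ u ∈ s, ‖f u - f u₀‖ ≤ ρ * ‖ι u - ι u₀‖) (h : E₁) :
    ‖S h‖ ≤ ρ * ‖ι h‖ := by
  have hline : HasDerivAt (fun t : ℝ => f (u₀ + t • h)) (S h) 0 := by
    have h1 : HasDerivAt (fun t : ℝ => u₀ + t • h) h 0 := by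
      simpa using ((hasDerivAt_id (0:ℝ)).smul_const h).const_add u₀
    have hf' : HasFDerivAt f S (u₀ + (0:ℝ) • h) := by simpa using hf
    simpa [Function.comp_def] using hf'.comp_hasDerivAt (x := (0:ℝ)) h1
  refine le_of_forall_pos_le_add fun ε hε => ?_
  have hlo := hline.isLittleO
  rw [isLittleO_iff] at hlo
  have h1 : ∀ᶠ t : ℝ in nhds 0,
      ‖f (u₀ + t • h) - f u₀ - t • S h‖ ≤ ε * |t| := by
    filter_upwards [hlo hε] with t ht
    simpa using ht
  have h2 : ∀ᶠ t : ℝ in nhds 0, u₀ + t • h ∈ s := by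
    have hc : Continuous fun t : ℝ => u₀ + t • h := by continuity
    have := hc.tendsto 0
    simp only [zero_smul, add_zero] at this
    exact this.eventually_mem hs
  have hall : ∀ᶠ t : ℝ in nhdsWithin 0 (Set.Ioi 0),
      (‖f (u₀ + t • h) - f u₀ - t • S h‖ ≤ ε * |t| ∧ u₀ + t • h ∈ s) :=
    nhdsWithin_le_nhds (h1.and h2)
  obtain ⟨t, ⟨ht1, ht2⟩, ht0'⟩ := (hall.and self_mem_nhdsWithin).exists
  have ht0 : 0 < t := ht0'
  have key : ‖t • S h‖ ≤ ρ * ‖t • ι h‖ + ε * |t| := by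
    have hL := hlip _ ht2
    have hι : ι (u₀ + t • h) - ι u₀ = t • ι h := by
      rw [map_add, map_smul]; abel
    rw [hι] at hL
    calc ‖t • S h‖
        ≤ ‖f (u₀ + t • h) - f u₀‖ + ‖f (u₀ + t • h) - f u₀ - t • S h‖ := by
            have h6 := norm_le_insert' (t • S h) (f (u₀ + t • h) - f u₀)
            have h5 : ‖t • S h - (f (u₀ + t • h) - f u₀)‖
                = ‖f (u₀ + t • h) - f u₀ - t • S h‖ := norm_sub_rev _ _
            rwa [h5] at h6
      _ ≤ ρ * ‖t • ι h‖ + ε * |t| := add_le_add hL ht1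
  rw [norm_smul, norm_smul, Real.norm_eq_abs, abs_of_pos ht0] at key
  nlinarith [norm_nonneg (S h), norm_nonneg (ι h)]



set_option maxHeartbeats 8000000 in
/-- Regularity of the solution germ, Theorem 2.3, stated on a fixed pair of
adjacent levels `E₁ ⊆ E₀` realized by an injective dense-range bounded map `ι : E₁ → E₀`. -/
theorem contraction_germ_regularity
    (n l : ℕ) (hl : l ≤ n)
    (E₀ E₁ : Type*) [NormedAddCommGroup E₀] [NormedSpace ℝ E₀] [CompleteSpace E₀]
    [NormedAddCommGroup E₁] [NormedSpace ℝ E₁] [CompleteSpace E₁]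
    (ι : E₁ →L[ℝ] E₀) (hιinj : Function.Injective ι) (hιdense : DenseRange ι)
    -- the partial quadrant [0,∞)^l × ℝ^{n-l} in ℝ^n
    (Q : Set (Fin n → ℝ)) (hQ : Q = {x : Fin n → ℝ | ∀ i : Fin n, (i : ℕ) < l → 0 ≤ x i})
    -- V is a relatively open neighborhood of 0 in Q
    (V : Set (Fin n → ℝ)) (hVQ : V ⊆ Q)
    (hVopen : ∃ U : Set (Fin n → ℝ), IsOpen U ∧ V = Q ∩ U)
    (hV0 : (0 : Fin n → ℝ) ∈ V)
    -- (i) U₁ is an open neighborhood of 0 in E₁ and B : V × U₁ → E₀ is of class C¹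
    -- (one-sided, i.e. derivatives within the set, with continuous derivative)
    (U₁ : Set E₁) (hU₁ : IsOpen U₁) (hU₁0 : (0 : E₁) ∈ U₁)
    (B : (Fin n → ℝ) → E₁ → E₀)
    (DB : (Fin n → ℝ) × E₁ → ((Fin n → ℝ) × E₁) →L[ℝ] E₀)
    (hBdiff : ∀ p ∈ V ×ˢ U₁,
      HasFDerivWithinAt (fun q : (Fin n → ℝ) × E₁ => B q.1 q.2) (DB p) (V ×ˢ U₁) p)
    (hDBcont : ContinuousOn DB (V ×ˢ U₁))
    -- (ii) B takes values in ι(E₁) and the two contraction estimates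
    (hBrange : ∀ v ∈ V, ∀ u ∈ U₁, B v u ∈ Set.range ι)
    (ρ₀ ρ₁ r : ℝ) (hρ₀0 : 0 < ρ₀) (hρ₀1 : ρ₀ < 1) (hρ₁0 : 0 < ρ₁) (hρ₁1 : ρ₁ < 1) (hr : 0 < r)
    (hcontr₀ : ∀ v ∈ V, ‖v‖ < r → ∀ u ∈ U₁, ∀ u' ∈ U₁, ‖u‖ < r → ‖u'‖ < r →
      ‖B v u - B v u'‖ ≤ ρ₀ * ‖ι u - ι u'‖)
    (hcontr₁ : ∀ v ∈ V, ‖v‖ < r → ∀ u ∈ U₁, ∀ u' ∈ U₁, ‖u‖ < r → ‖u'‖ < r →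
      ∀ w w' : E₁, ι w = B v u → ι w' = B v u' → ‖w - w'‖ ≤ ρ₁ * ‖u - u'‖)
    -- (iii) δ is a continuous solution germ
    (δ : (Fin n → ℝ) → E₁) (hδcont : ContinuousOn δ V) (hδ0 : δ 0 = 0)
    (hδU : ∀ v ∈ V, δ v ∈ U₁) (hδfix : ∀ v ∈ V, ι (δ v) = B v (δ v)) :
    -- conclusion: on a relatively open neighborhood V' of 0 in V
    ∃ V' : Set (Fin n → ℝ), V' ⊆ V ∧ (0 : Fin n → ℝ) ∈ V' ∧
      (∃ U' : Set (Fin n → ℝ), IsOpen U' ∧ V' = V ∩ U') ∧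
      ∃ T : (Fin n → ℝ) → (E₀ →L[ℝ] E₀),
        (∀ v ∈ V',
          -- (a) the bound on D₂B(v, δ(v)), its unique bounded extension T(v),
          -- and L(v) = id - T(v) is a Banach space isomorphism of E₀
          (∀ h : E₁, ‖DB (v, δ v) (0, h)‖ ≤ ρ₀ * ‖ι h‖) ∧
          ‖T v‖ ≤ ρ₀ ∧
          (∀ h : E₁, T v (ι h) = DB (v, δ v) (0, h)) ∧
          (∀ T' : E₀ →L[ℝ] E₀, (∀ h : E₁, T' (ι h) = DB (v, δ v) (0, h)) → T' = T v) ∧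
          (∃ Lv : E₀ ≃L[ℝ] E₀, ∀ x : E₀, Lv x = x - T v x)) ∧
        -- (b) v ↦ ι(δ(v)) is C¹ near 0 with derivative δ'(v) = L(v)⁻¹ ∘ D₁B(v, δ(v)),
        -- depending continuously on v
        ∃ δ' : (Fin n → ℝ) → ((Fin n → ℝ) →L[ℝ] E₀),
          ContinuousOn δ' V' ∧
          ∀ v ∈ V', HasFDerivWithinAt (fun z => ι (δ z)) (δ' v) V' v ∧
            ∀ b : Fin n → ℝ, δ' v b - T v (δ' v b) = DB (v, δ v) (b, 0) := by
  classical
  -- ## construction of V'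
  obtain ⟨W, hWopen, hWeq⟩ :=
    (continuousOn_iff'.1 hδcont) (Metric.ball (0:E₁) r) Metric.isOpen_ball
  set U' : Set (Fin n → ℝ) := Metric.ball (0 : Fin n → ℝ) r ∩ W with hU'def
  have hU'open : IsOpen U' := Metric.isOpen_ball.inter hWopen
  set V' : Set (Fin n → ℝ) := V ∩ U' with hV'def
  have hV'V : V' ⊆ V := Set.inter_subset_left
  have hmem : ∀ z ∈ V', z ∈ V ∧ ‖z‖ < r ∧ δ z ∈ U₁ ∧ ‖δ z‖ < r := by
    rintro z ⟨hzV, hzb, hzW⟩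
    refine ⟨hzV, by simpa using hzb, hδU z hzV, ?_⟩
    have h1 : z ∈ W ∩ V := ⟨hzW, hzV⟩
    rw [← hWeq] at h1
    simpa using h1.1
  have h0V' : (0 : Fin n → ℝ) ∈ V' := by
    refine ⟨hV0, by simpa using hr, ?_⟩
    have h1 : (0 : Fin n → ℝ) ∈ δ ⁻¹' Metric.ball (0:E₁) r ∩ V := by
      constructor
      · simp only [Set.mem_preimage, hδ0]
        simpa using hr
      · exact hV0
    rw [hWeq] at h1
    exact h1.1
  -- ## the partial derivative in the `E₁` direction, and its bound
  have hpV : ∀ v ∈ V', (v, δ v) ∈ V ×ˢ U₁ := fun v hv =>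
    ⟨hV'V hv, hδU v (hV'V hv)⟩
  have hpartial : ∀ v ∈ V', HasFDerivAt (fun u => B v u)
      ((DB (v, δ v)).comp (ContinuousLinearMap.inr ℝ (Fin n → ℝ) E₁)) (δ v) := by
    intro v hv
    have hg : HasFDerivWithinAt (fun u : E₁ => ((v, u) : (Fin n → ℝ) × E₁))
        (ContinuousLinearMap.inr ℝ (Fin n → ℝ) E₁) U₁ (δ v) := by
      have h1 : HasFDerivAt (fun u : E₁ => ((v, u) : (Fin n → ℝ) × E₁))
          ((0 : E₁ →L[ℝ] (Fin n → ℝ)).prod (ContinuousLinearMap.id ℝ E₁)) (δ v) :=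
        (hasFDerivAt_const v (δ v)).prodMk (hasFDerivAt_id (δ v))
      have h2 : (0 : E₁ →L[ℝ] (Fin n → ℝ)).prod (ContinuousLinearMap.id ℝ E₁)
          = ContinuousLinearMap.inr ℝ (Fin n → ℝ) E₁ := by
        ext u <;> simp
      exact (h2 ▸ h1).hasFDerivWithinAt
    have hmapsto : Set.MapsTo (fun u : E₁ => ((v, u) : (Fin n → ℝ) × E₁)) U₁ (V ×ˢ U₁) :=
      fun u hu => ⟨hV'V hv, hu⟩
    have hcomp := (hBdiff (v, δ v) (hpV v hv)).comp (δ v) hg hmapsto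
    exact (hcomp.hasFDerivAt (hU₁.mem_nhds (hδU v (hV'V hv))))
  have key : ∀ v ∈ V', ∀ h : E₁, ‖DB (v, δ v) (0, h)‖ ≤ ρ₀ * ‖ι h‖ := by
    intro v hv h
    obtain ⟨hvV, hvr, hδvU, hδvr⟩ := hmem v hv
    have hsopen : IsOpen (U₁ ∩ Metric.ball (0:E₁) r) := hU₁.inter Metric.isOpen_ball
    have hsmem : U₁ ∩ Metric.ball (0:E₁) r ∈ nhds (δ v) :=
      hsopen.mem_nhds ⟨hδvU, by simpa using hδvr⟩
    have hlip : ∀ u ∈ U₁ ∩ Metric.ball (0:E₁) r,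
        ‖B v u - B v (δ v)‖ ≤ ρ₀ * ‖ι u - ι (δ v)‖ := by
      intro u hu
      exact hcontr₀ v hvV hvr u hu.1 (δ v) hδvU (by simpa using hu.2) hδvr
    have := aux_deriv_bound ι (fun u => B v u)
      ((DB (v, δ v)).comp (ContinuousLinearMap.inr ℝ (Fin n → ℝ) E₁)) (δ v)
      (hpartial v hv) ρ₀ _ hsmem hlip h
    simpa using this
  -- ## the extension T
  have hTex : ∀ v : Fin n → ℝ, ∃ T : E₀ →L[ℝ] E₀, v ∈ V' →
      (‖T‖ ≤ ρ₀ ∧ ∀ h, T (ι h) = DB (v, δ v) (0, h)) := by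
    intro v
    by_cases hv : v ∈ V'
    · obtain ⟨T, h1, h2⟩ := aux_extend ι hιinj hιdense
        ((DB (v, δ v)).comp (ContinuousLinearMap.inr ℝ (Fin n → ℝ) E₁)) ρ₀ hρ₀0.le
        (fun h => by simpa using key v hv h)
      exact ⟨T, fun _ => ⟨h1, fun h => by simpa using h2 h⟩⟩
    · exact ⟨0, fun h => absurd h hv⟩
  choose T hT using hTex
  have hTnorm : ∀ v ∈ V', ‖T v‖ ≤ ρ₀ := fun v hv => (hT v hv).1
  have hTι : ∀ v ∈ V', ∀ h, T v (ι h) = DB (v, δ v) (0, h) := fun v hv => (hT v hv).2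
  have hTlt : ∀ v ∈ V', ‖T v‖ < 1 := fun v hv => lt_of_le_of_lt (hTnorm v hv) hρ₀1
  -- ## inverse of 1 - T v
  set Qi : (Fin n → ℝ) → (E₀ →L[ℝ] E₀) := fun v => Ring.inverse (1 - T v) with hQidef
  have hQval : ∀ (v) (hv : v ∈ V'), Qi v = ↑(Units.oneSub (T v) (hTlt v hv))⁻¹ := by
    intro v hv
    have : (1 - T v) = ((Units.oneSub (T v) (hTlt v hv) : (E₀ →L[ℝ] E₀)ˣ) : E₀ →L[ℝ] E₀) := rfl
    rw [hQidef]
    simp only []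
    rw [this, Ring.inverse_unit]
  have hQl : ∀ v ∈ V', (1 - T v) * Qi v = 1 := by
    intro v hv
    rw [hQval v hv]
    exact (Units.oneSub (T v) (hTlt v hv)).mul_inv
  have hQr : ∀ v ∈ V', Qi v * (1 - T v) = 1 := by
    intro v hv
    rw [hQval v hv]
    exact (Units.oneSub (T v) (hTlt v hv)).inv_mul
  have hQnorm : ∀ v ∈ V', ‖Qi v‖ ≤ (1 - ρ₀)⁻¹ := by
    intro v hv
    have h1 : Qi v = 1 + T v * Qi v := by
      have h0 := hQl v hv
      rw [sub_mul, one_mul] at h0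
      exact eq_add_of_sub_eq h0
    have h2 : ‖Qi v‖ ≤ 1 + ρ₀ * ‖Qi v‖ := by
      calc ‖Qi v‖ = ‖1 + T v * Qi v‖ := by rw [← h1]
        _ ≤ ‖(1 : E₀ →L[ℝ] E₀)‖ + ‖T v * Qi v‖ := norm_add_le _ _
        _ ≤ 1 + ρ₀ * ‖Qi v‖ := by
            refine add_le_add ContinuousLinearMap.norm_id_le ?_
            calc ‖T v * Qi v‖ ≤ ‖T v‖ * ‖Qi v‖ := norm_mul_le _ _
              _ ≤ ρ₀ * ‖Qi v‖ := by
                  exact mul_le_mul_of_nonneg_right (hTnorm v hv) (norm_nonneg _)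
    rw [inv_eq_one_div, le_div_iff₀ (by linarith : (0:ℝ) < 1 - ρ₀)]
    nlinarith [norm_nonneg (Qi v)]
  -- ## δ'
  set P : (Fin n → ℝ) → ((Fin n → ℝ) →L[ℝ] E₀) := fun v =>
    (DB (v, δ v)).comp (ContinuousLinearMap.inl ℝ (Fin n → ℝ) E₁) with hPdef
  set δ' : (Fin n → ℝ) → ((Fin n → ℝ) →L[ℝ] E₀) := fun v => (Qi v).comp (P v) with hδ'def
  have hMT : ∀ v ∈ V', ∀ b : Fin n → ℝ, δ' v b - T v (δ' v b) = DB (v, δ v) (b, 0) := by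
    intro v hv b
    have h1 : ((1 - T v) * Qi v) (P v b) = P v b := by
      rw [hQl v hv]; simp
    have h2 : ((1 - T v) * Qi v) (P v b)
        = Qi v (P v b) - T v (Qi v (P v b)) := by
      rw [ContinuousLinearMap.mul_apply]
      simp [ContinuousLinearMap.sub_apply]
    have h3 : δ' v b = Qi v (P v b) := rfl
    rw [h3, ← h2, h1, hPdef]
    simp
  -- basis decomposition
  set e : Fin n → (Fin n → ℝ) := fun i => fun j => if i = j then (1:ℝ) else 0 with hedef
  have hAb : ∀ (A : (Fin n → ℝ) →L[ℝ] E₀) (b : Fin n → ℝ), A b = ∑ i, b i • A (e i) := by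
    intro A b
    conv_lhs => rw [pi_eq_sum_univ b, map_sum]
    simp [hedef]
  -- ## derivative
  have hderiv : ∀ v ∈ V', HasFDerivWithinAt (fun z => ι (δ z)) (δ' v) V' v := by
    intro v hv
    obtain ⟨hvV, hvr, hδvU, hδvr⟩ := hmem v hv
    refine hasFDerivWithinAt_iff_isLittleO.2 ?_
    rw [isLittleO_iff]
    intro c hc
    set ε : ℝ := ((1 - ρ₀) * c) / (2 * ρ₀ * (n:ℝ) + 1) with hεdef
    have hden : (0:ℝ) < 2 * ρ₀ * (n:ℝ) + 1 := by positivity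
    have hεpos : 0 < ε := div_pos (mul_pos (by linarith) hc) hden
    have hεeq : (2 * ρ₀ * (n:ℝ) + 1) * ε = (1 - ρ₀) * c := by
      rw [hεdef]; field_simp
    -- approximate the candidate derivative directions by elements of E₁
    have hhex : ∀ i : Fin n, ∃ h : E₁, ‖ι h - δ' v (e i)‖ ≤ ε := by
      intro i
      obtain ⟨a, ha⟩ := hιdense.exists_dist_lt (δ' v (e i)) hεpos
      exact ⟨a, by rw [← dist_eq_norm, dist_comm]; exact ha.le⟩
    choose hh hhp using hhex
    set H : (Fin n → ℝ) →L[ℝ] E₁ :=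
      ∑ i, (ContinuousLinearMap.proj (R := ℝ) (φ := fun _ : Fin n => ℝ) i).smulRight (hh i)
      with hHdef
    have hHe : ∀ b : Fin n → ℝ, H b = ∑ i, b i • hh i := by
      intro b
      rw [hHdef]
      simp [ContinuousLinearMap.sum_apply]
    have hCb : ∀ b : Fin n → ℝ, ‖ι (H b) - δ' v b‖ ≤ ((n:ℝ) * ε) * ‖b‖ := by
      intro b
      have h1 : ι (H b) - δ' v b = ∑ i, b i • (ι (hh i) - δ' v (e i)) := by
        rw [hHe, map_sum, hAb (δ' v) b, ← Finset.sum_sub_distrib]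
        congr 1; funext i; rw [map_smul, smul_sub]
      rw [h1]
      calc ‖∑ i, b i • (ι (hh i) - δ' v (e i))‖
          ≤ ∑ i, ‖b i • (ι (hh i) - δ' v (e i))‖ := norm_sum_le _ _
        _ ≤ ∑ _i : Fin n, ε * ‖b‖ := by
            refine Finset.sum_le_sum fun i _ => ?_
            rw [norm_smul]
            calc ‖b i‖ * ‖ι (hh i) - δ' v (e i)‖ ≤ ‖b‖ * ε :=
                  mul_le_mul (norm_le_pi_norm b i) (hhp i) (norm_nonneg _) (norm_nonneg _)
              _ = ε * ‖b‖ := mul_comm _ _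
        _ = (n:ℝ) * ε * ‖b‖ := by
            rw [Finset.sum_const, Finset.card_univ, Fintype.card_fin, nsmul_eq_mul]; ring
    -- the comparison path and Taylor expansion
    set ψ : (Fin n → ℝ) → E₁ := fun z => δ v + H (z - v) with hψdef
    have hψv : ψ v = δ v := by simp [hψdef]
    have hψcont : Continuous ψ :=
      continuous_const.add (H.continuous.comp (continuous_id.sub continuous_const))
    set s₀ : Set (Fin n → ℝ) := V' ∩ ψ ⁻¹' U₁ with hs₀def
    have hs₀mem : s₀ ∈ nhdsWithin v V' := by
      refine Filter.inter_mem self_mem_nhdsWithin ?_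
      refine mem_nhdsWithin_of_mem_nhds ((hU₁.preimage hψcont).mem_nhds ?_)
      rw [Set.mem_preimage, hψv]; exact hδvU
    have hψd : HasFDerivAt ψ H v := by
      have h1 : ψ = fun z => (δ v - H v) + H z := by
        funext z; rw [hψdef]; simp only []; rw [map_sub]; abel
      rw [h1]
      exact H.hasFDerivAt.const_add _
    set A : (Fin n → ℝ) →L[ℝ] E₀ :=
      (DB (v, δ v)).comp ((ContinuousLinearMap.id ℝ (Fin n → ℝ)).prod H) with hAdef
    have houter : HasFDerivWithinAt (fun q : (Fin n → ℝ) × E₁ => B q.1 q.2)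
        (DB (v, δ v)) (V ×ˢ U₁) (v, ψ v) := by
      rw [hψv]; exact hBdiff _ (hpV v hv)
    have hφd : HasFDerivWithinAt (fun z => ((z, ψ z) : (Fin n → ℝ) × E₁))
        ((ContinuousLinearMap.id ℝ (Fin n → ℝ)).prod H) s₀ v :=
      ((hasFDerivAt_id v).prodMk hψd).hasFDerivWithinAt
    have hmaps : Set.MapsTo (fun z => ((z, ψ z) : (Fin n → ℝ) × E₁)) s₀ (V ×ˢ U₁) :=
      fun z hz => ⟨hV'V hz.1, hz.2⟩
    have hcomp : HasFDerivWithinAt (fun z => B z (ψ z)) A s₀ v := by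
      have := houter.comp v hφd hmaps
      simpa [Function.comp_def] using this
    have hcomp' : HasFDerivWithinAt (fun z => B z (ψ z)) A V' v := hcomp.mono_of_mem_nhdsWithin hs₀mem
    have hTay := isLittleO_iff.1 (hasFDerivWithinAt_iff_isLittleO.1 hcomp') hεpos
    have hev1 : ∀ᶠ z in nhdsWithin v V', ψ z ∈ U₁ ∧ ‖ψ z‖ < r := by
      have hop : IsOpen (U₁ ∩ Metric.ball (0:E₁) r) := hU₁.inter Metric.isOpen_ball
      have hmem' : ψ v ∈ U₁ ∩ Metric.ball (0:E₁) r := by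
        rw [hψv]; exact ⟨hδvU, by simpa using hδvr⟩
      have h2 := hψcont.continuousAt.eventually_mem (hop.mem_nhds hmem')
      have h3 : ∀ᶠ z in nhdsWithin v V', ψ z ∈ U₁ ∩ Metric.ball (0:E₁) r :=
        nhdsWithin_le_nhds h2
      filter_upwards [h3] with z hz
      exact ⟨hz.1, by simpa using hz.2⟩
    filter_upwards [hTay, hev1, eventually_mem_nhdsWithin] with z hz1 hz2 hzV'
    obtain ⟨hzV, hzr, hδzU, hδzr⟩ := hmem z hzV'
    set b : Fin n → ℝ := z - v with hbdef
    have hfixz : ι (δ z) = B z (δ z) := hδfix z hzV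
    have hfixv : ι (δ v) = B v (δ v) := hδfix v hvV
    set X : E₀ := ι (δ z) - ι (δ v) - δ' v b with hXdef
    have hD1 : ‖B z (δ z) - B z (ψ z)‖ ≤ ρ₀ * ‖ι (δ z) - ι (ψ z)‖ :=
      hcontr₀ z hzV hzr (δ z) hδzU (ψ z) hz2.1 hδzr hz2.2
    have hιψ : ι (ψ z) = ι (δ v) + ι (H b) := by
      rw [hψdef]; simp only []; rw [map_add]
    have hd1 : ‖ι (δ z) - ι (ψ z)‖ ≤ ‖X‖ + ((n:ℝ) * ε) * ‖b‖ := by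
      have h4 : ι (δ z) - ι (ψ z) = X + (δ' v b - ι (H b)) := by
        rw [hιψ, hXdef]; abel
      rw [h4]
      refine (norm_add_le _ _).trans (add_le_add le_rfl ?_)
      rw [norm_sub_rev]; exact hCb b
    have hAb2 : A b = DB (v, δ v) (b, 0) + T v (ι (H b)) := by
      have h1 : A b = DB (v, δ v) (b, H b) := by rw [hAdef]; simp
      have h2 : ((b, H b) : (Fin n → ℝ) × E₁) = (b, 0) + (0, H b) := by simp
      rw [h1, h2, map_add, hTι v hv (H b)]
    have hthird : A b - δ' v b = T v (ι (H b)) - T v (δ' v b) := by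
      rw [hAb2, ← hMT v hv b]; abel
    have hXeq : X = (B z (δ z) - B z (ψ z)) + (B z (ψ z) - B v (ψ v) - A b)
        + (A b - δ' v b) := by
      rw [hXdef, hψv, hfixz, hfixv]; abel
    have hthird' : ‖A b - δ' v b‖ ≤ ρ₀ * (((n:ℝ) * ε) * ‖b‖) := by
      rw [hthird, ← map_sub]
      calc ‖T v (ι (H b) - δ' v b)‖ ≤ ‖T v‖ * ‖ι (H b) - δ' v b‖ := (T v).le_opNorm _
        _ ≤ ρ₀ * (((n:ℝ) * ε) * ‖b‖) :=
            mul_le_mul (hTnorm v hv) (hCb b) (norm_nonneg _) hρ₀0.le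
    have hXle : ‖X‖ ≤ ρ₀ * (‖X‖ + ((n:ℝ) * ε) * ‖b‖) + ε * ‖b‖
        + ρ₀ * (((n:ℝ) * ε) * ‖b‖) := by
      conv_lhs => rw [hXeq]
      refine (norm_add₃_le).trans ?_
      refine add_le_add (add_le_add ?_ hz1) hthird'
      exact hD1.trans (mul_le_mul_of_nonneg_left hd1 hρ₀0.le)
    have h5 : (2 * ρ₀ * (n:ℝ) + 1) * ε * ‖b‖ = (1 - ρ₀) * c * ‖b‖ := by rw [hεeq]
    have h6 : (1 - ρ₀) * ‖X‖ ≤ (1 - ρ₀) * (c * ‖b‖) := by nlinarith [hXle, h5]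
    have h7 : ‖X‖ ≤ c * ‖b‖ := by
      have h8 : (0:ℝ) < 1 - ρ₀ := by linarith
      exact le_of_mul_le_mul_left h6 h8
    exact h7
  -- ## continuity of δ'
  have hDcont : ContinuousOn (fun v => DB (v, δ v)) V' := by
    have h1 : ContinuousOn (fun v : Fin n → ℝ => ((v, δ v) : (Fin n → ℝ) × E₁)) V' :=
      continuousOn_id.prodMk (hδcont.mono hV'V)
    exact hDBcont.comp h1 fun z hz => ⟨hV'V hz, hδU z (hV'V hz)⟩
  have hδ'cont : ContinuousOn δ' V' := by
    intro v₀ hv₀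
    have hC : (0:ℝ) < (1 - ρ₀)⁻¹ := by
      rw [inv_pos]; linarith
    set C : ℝ := (1 - ρ₀)⁻¹ with hCdef
    unfold ContinuousWithinAt
    rw [Metric.tendsto_nhds]
    intro ε hε
    set β : ℝ := ε / (4 * ((n:ℝ) + 1) * (C + 1)) with hβdef
    have hβpos : 0 < β := by positivity
    set η : ℝ := β / (2 * (2 * ρ₀ + 1)) with hηdef
    have hηpos : 0 < η := by positivity
    -- approximate the vectors δ' v₀ (e i)
    have hgex : ∀ i : Fin n, ∃ g : E₁, ‖δ' v₀ (e i) - ι g‖ ≤ η := by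
      intro i
      obtain ⟨a, ha⟩ := hιdense.exists_dist_lt (δ' v₀ (e i)) hηpos
      exact ⟨a, by rw [← dist_eq_norm]; exact ha.le⟩
    choose g hg using hgex
    set κ : ℝ := 1 + ∑ i, ‖g i‖ with hκdef
    have hκpos : (0:ℝ) < κ := by positivity
    have hκge : ∀ i : Fin n, ‖g i‖ ≤ κ := by
      intro i
      have h1 : ‖g i‖ ≤ ∑ j, ‖g j‖ :=
        Finset.single_le_sum (fun j _ => norm_nonneg (g j)) (Finset.mem_univ i)
      rw [hκdef]; linarith
    set θ : ℝ := min β (β / (2 * κ)) with hθdef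
    have hθpos : 0 < θ := lt_min hβpos (by positivity)
    have hDev : ∀ᶠ v in nhdsWithin v₀ V', ‖DB (v, δ v) - DB (v₀, δ v₀)‖ < θ := by
      have h1 := hDcont v₀ hv₀
      unfold ContinuousWithinAt at h1
      have h2 := Metric.tendsto_nhds.1 h1 θ hθpos
      filter_upwards [h2] with v hv2
      rwa [dist_eq_norm] at hv2
    filter_upwards [hDev, eventually_mem_nhdsWithin] with v hD hvV'
    -- strong continuity on the vectors δ' v₀ (e i)
    have hTx : ∀ i : Fin n, ‖T v (δ' v₀ (e i)) - T v₀ (δ' v₀ (e i))‖ ≤ β := by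
      intro i
      set x : E₀ := δ' v₀ (e i)
      have e1 : T v x - T v₀ x
          = T v (x - ι (g i)) - T v₀ (x - ι (g i)) + (T v (ι (g i)) - T v₀ (ι (g i))) := by
        rw [map_sub, map_sub]; abel
      have e2 : ‖T v (x - ι (g i))‖ ≤ ρ₀ * η := by
        calc ‖T v (x - ι (g i))‖ ≤ ‖T v‖ * ‖x - ι (g i)‖ := (T v).le_opNorm _
          _ ≤ ρ₀ * η := mul_le_mul (hTnorm v hvV') (hg i) (norm_nonneg _) hρ₀0.le
      have e3 : ‖T v₀ (x - ι (g i))‖ ≤ ρ₀ * η := by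
        calc ‖T v₀ (x - ι (g i))‖ ≤ ‖T v₀‖ * ‖x - ι (g i)‖ := (T v₀).le_opNorm _
          _ ≤ ρ₀ * η := mul_le_mul (hTnorm v₀ hv₀) (hg i) (norm_nonneg _) hρ₀0.le
      have e4 : ‖T v (ι (g i)) - T v₀ (ι (g i))‖ ≤ β / 2 := by
        rw [hTι v hvV' (g i), hTι v₀ hv₀ (g i)]
        have e5 : DB (v, δ v) (0, g i) - DB (v₀, δ v₀) (0, g i)
            = (DB (v, δ v) - DB (v₀, δ v₀)) ((0 : Fin n → ℝ), g i) := by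
          simp [ContinuousLinearMap.sub_apply]
        rw [e5]
        have e6 : ‖((0 : Fin n → ℝ), g i)‖ = ‖g i‖ := by
          simp [Prod.norm_def]
        calc ‖(DB (v, δ v) - DB (v₀, δ v₀)) ((0 : Fin n → ℝ), g i)‖
            ≤ ‖DB (v, δ v) - DB (v₀, δ v₀)‖ * ‖((0 : Fin n → ℝ), g i)‖ :=
              ContinuousLinearMap.le_opNorm _ _
          _ ≤ (β / (2 * κ)) * κ := by
              rw [e6]
              refine mul_le_mul (hD.le.trans (min_le_right _ _)) (hκge i) (norm_nonneg _) ?_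
              positivity
          _ = β / 2 := by field_simp
      have e7 : 2 * (ρ₀ * η) ≤ β / 2 := by
        have h2ρ : η * (2 * (2 * ρ₀ + 1)) = β := by
          rw [hηdef]; field_simp
        nlinarith [hηpos.le, hρ₀0.le, h2ρ]
      calc ‖T v x - T v₀ x‖
          ≤ ‖T v (x - ι (g i)) - T v₀ (x - ι (g i))‖ + ‖T v (ι (g i)) - T v₀ (ι (g i))‖ := by
            rw [e1]; exact norm_add_le _ _
        _ ≤ (‖T v (x - ι (g i))‖ + ‖T v₀ (x - ι (g i))‖) + β / 2 :=
            add_le_add (norm_sub_le _ _) e4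
        _ ≤ (ρ₀ * η + ρ₀ * η) + β / 2 := by linarith
        _ ≤ β := by linarith
    -- strong bound on δ' v₀ b
    have hTb : ∀ b : Fin n → ℝ, ‖T v (δ' v₀ b) - T v₀ (δ' v₀ b)‖ ≤ ((n:ℝ) * β) * ‖b‖ := by
      intro b
      have h1 : T v (δ' v₀ b) - T v₀ (δ' v₀ b)
          = ∑ i, b i • (T v (δ' v₀ (e i)) - T v₀ (δ' v₀ (e i))) := by
        conv_lhs => rw [hAb (δ' v₀) b]
        rw [map_sum, map_sum, ← Finset.sum_sub_distrib]
        congr 1; funext i; rw [map_smul, map_smul, smul_sub]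
      rw [h1]
      calc ‖∑ i, b i • (T v (δ' v₀ (e i)) - T v₀ (δ' v₀ (e i)))‖
          ≤ ∑ i, ‖b i • (T v (δ' v₀ (e i)) - T v₀ (δ' v₀ (e i)))‖ := norm_sum_le _ _
        _ ≤ ∑ _i : Fin n, β * ‖b‖ := by
            refine Finset.sum_le_sum fun i _ => ?_
            rw [norm_smul]
            calc ‖b i‖ * ‖T v (δ' v₀ (e i)) - T v₀ (δ' v₀ (e i))‖ ≤ ‖b‖ * β :=
                  mul_le_mul (norm_le_pi_norm b i) (hTx i) (norm_nonneg _) (norm_nonneg _)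
              _ = β * ‖b‖ := mul_comm _ _
        _ = (n:ℝ) * β * ‖b‖ := by
            rw [Finset.sum_const, Finset.card_univ, Fintype.card_fin, nsmul_eq_mul]; ring
    -- splitting identity
    have hQd : ∀ y : E₀, Qi v y - Qi v₀ y = Qi v (T v (Qi v₀ y) - T v₀ (Qi v₀ y)) := by
      intro y
      set w : E₀ := Qi v₀ y with hw
      have k1 : Qi v ((1 - T v) w) = w := by
        have k := congrArg (fun (A : E₀ →L[ℝ] E₀) => A w) (hQr v hvV')
        simpa [ContinuousLinearMap.mul_apply] using k
      have k2 : (1 - T v₀) w = y := by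
        have k := congrArg (fun (A : E₀ →L[ℝ] E₀) => A y) (hQl v₀ hv₀)
        simpa [ContinuousLinearMap.mul_apply] using k
      have k3 : (1 - T v) w = w - T v w := by
        simp [ContinuousLinearMap.sub_apply]
      have k4 : w - T v₀ w = y := by
        simpa [ContinuousLinearMap.sub_apply] using k2
      calc Qi v y - w = Qi v y - Qi v ((1 - T v) w) := by rw [k1]
        _ = Qi v (y - (1 - T v) w) := by rw [← map_sub]
        _ = Qi v (T v w - T v₀ w) := by
            congr 1
            rw [k3, ← k4]; abel
    have hsplit : ∀ b : Fin n → ℝ, δ' v b - δ' v₀ b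
        = Qi v ((DB (v, δ v) - DB (v₀, δ v₀)) (b, 0))
          + Qi v (T v (δ' v₀ b) - T v₀ (δ' v₀ b)) := by
      intro b
      have r1 : δ' v b = Qi v (P v b) := rfl
      have r2 : δ' v₀ b = Qi v₀ (P v₀ b) := rfl
      have r3 : P v b - P v₀ b = (DB (v, δ v) - DB (v₀, δ v₀)) (b, 0) := by
        rw [hPdef]; simp [ContinuousLinearMap.sub_apply]
      have r4 : Qi v₀ (P v₀ b) = δ' v₀ b := rfl
      calc δ' v b - δ' v₀ b
          = Qi v (P v b - P v₀ b) + (Qi v (P v₀ b) - Qi v₀ (P v₀ b)) := by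
            rw [r1, r2, map_sub]; abel
        _ = _ := by rw [r3, hQd (P v₀ b), r4]
    -- final norm bound
    have hbound : ∀ b : Fin n → ℝ, ‖(δ' v - δ' v₀) b‖ ≤ (C * β + C * ((n:ℝ) * β)) * ‖b‖ := by
      intro b
      rw [ContinuousLinearMap.sub_apply, hsplit b]
      have n1 : ‖Qi v ((DB (v, δ v) - DB (v₀, δ v₀)) (b, 0))‖ ≤ C * (β * ‖b‖) := by
        calc ‖Qi v ((DB (v, δ v) - DB (v₀, δ v₀)) (b, 0))‖
            ≤ ‖Qi v‖ * ‖(DB (v, δ v) - DB (v₀, δ v₀)) (b, 0)‖ := (Qi v).le_opNorm _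
          _ ≤ C * (β * ‖b‖) := by
              refine mul_le_mul (hQnorm v hvV') ?_ (norm_nonneg _) hC.le
              calc ‖(DB (v, δ v) - DB (v₀, δ v₀)) (b, 0)‖
                  ≤ ‖DB (v, δ v) - DB (v₀, δ v₀)‖ * ‖((b, 0) : (Fin n → ℝ) × E₁)‖ :=
                    ContinuousLinearMap.le_opNorm _ _
                _ ≤ β * ‖b‖ := by
                    have e6 : ‖((b, 0) : (Fin n → ℝ) × E₁)‖ = ‖b‖ := by
                      simp [Prod.norm_def]
                    rw [e6]
                    exact mul_le_mul (hD.le.trans (min_le_left _ _)) le_rfl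
                      (norm_nonneg _) hβpos.le
      have n2 : ‖Qi v (T v (δ' v₀ b) - T v₀ (δ' v₀ b))‖ ≤ C * (((n:ℝ) * β) * ‖b‖) := by
        calc ‖Qi v (T v (δ' v₀ b) - T v₀ (δ' v₀ b))‖
            ≤ ‖Qi v‖ * ‖T v (δ' v₀ b) - T v₀ (δ' v₀ b)‖ := (Qi v).le_opNorm _
          _ ≤ C * (((n:ℝ) * β) * ‖b‖) :=
              mul_le_mul (hQnorm v hvV') (hTb b) (norm_nonneg _) hC.le
      calc ‖Qi v ((DB (v, δ v) - DB (v₀, δ v₀)) (b, 0))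
            + Qi v (T v (δ' v₀ b) - T v₀ (δ' v₀ b))‖
          ≤ ‖Qi v ((DB (v, δ v) - DB (v₀, δ v₀)) (b, 0))‖
            + ‖Qi v (T v (δ' v₀ b) - T v₀ (δ' v₀ b))‖ := norm_add_le _ _
        _ ≤ C * (β * ‖b‖) + C * (((n:ℝ) * β) * ‖b‖) := add_le_add n1 n2
        _ = (C * β + C * ((n:ℝ) * β)) * ‖b‖ := by ring
    have hop : ‖δ' v - δ' v₀‖ ≤ C * β + C * ((n:ℝ) * β) := by
      refine ContinuousLinearMap.opNorm_le_bound _ ?_ hbound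
      positivity
    rw [dist_eq_norm]
    calc ‖δ' v - δ' v₀‖ ≤ C * β + C * ((n:ℝ) * β) := hop
      _ < ε := by
          have hnn : (0:ℝ) ≤ (n:ℝ) := Nat.cast_nonneg n
          have key2 : C * β + C * ((n:ℝ) * β) = C * ((n:ℝ) + 1) * β := by ring
          rw [key2, hβdef]
          have hC1 : (0:ℝ) < C + 1 := by linarith
          have ha : (0:ℝ) < (n:ℝ) + 1 := by positivity
          have keq : C * ((n:ℝ) + 1) * (ε / (4 * ((n:ℝ) + 1) * (C + 1)))
              = ε * (C / (4 * (C + 1))) := by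
            field_simp
          rw [keq]
          have hq : C / (4 * (C + 1)) < 1 := by
            rw [div_lt_one (by linarith)]; linarith
          have hq0 : 0 ≤ C / (4 * (C + 1)) := by positivity
          nlinarith [hε, hq, hq0]
  -- ## assembly
  refine ⟨V', hV'V, h0V', ⟨U', hU'open, rfl⟩, T, fun v hv =>
    ⟨key v hv, hTnorm v hv, hTι v hv, ?_, ?_⟩, δ', hδ'cont, fun v hv =>
    ⟨hderiv v hv, hMT v hv⟩⟩
  · intro T' hT'
    refine ContinuousLinearMap.coeFn_injective
      (hιdense.equalizer T'.continuous (T v).continuous (funext fun h => ?_))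
    simp only [Function.comp_apply]
    rw [hT' h, hTι v hv h]
  · refine ⟨ContinuousLinearEquiv.unitsEquiv ℝ E₀ (Units.oneSub (T v) (hTlt v hv)), fun x => ?_⟩
    rw [ContinuousLinearEquiv.unitsEquiv_apply]
    simp
end

section
/- Assume: (i) U₁ is an open neighborhood of 0 in E₁ and B : V × U₁ → E₀ is of class C¹; (ii) there exist constants 0 < ρ₀ < 1 and r > 0 such that ‖B(v,u) − B(v,u′)‖₀ ≤ ρ₀‖ι(u) − ι(u′)‖₀ for all v ∈ V with |v| < r and u, u′ ∈ U₁ with ‖u‖₁ < r; (iii) δ : V → U₁ is continuous as a map into E₁ with δ(0) = 0 and ι(δ(v)) = B(v, δ(v)) for all v ∈ V. Then the map v ↦ ι(δ(v)) is locally Lipschitz at 0 into E₀: there exist a relatively open neighborhood V′ of 0 in V and a constant c ≥ 0 such that ‖ι(δ(v + b)) − ι(δ(v))‖₀ ≤ c·|b| whenever v and v + b both lie in V′. (Difference-quotient bound (2.2) in the proof of Theorem 2.3.) -/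
/-- difference-quotient bound (2.2) in the proof of Theorem 2.3:
the solution germ of a contraction germ of class C¹ is locally Lipschitz at 0 on the lower
level. -/
theorem contraction_germ_lipschitz
    (n l : ℕ) (hl : l ≤ n)
    (E₀ E₁ : Type*) [NormedAddCommGroup E₀] [NormedSpace ℝ E₀]
    [NormedAddCommGroup E₁] [NormedSpace ℝ E₁]
    (ι : E₁ →L[ℝ] E₀) (hιinj : Function.Injective ι) (hιdense : DenseRange ι)
    -- the partial quadrant [0,∞)^l × ℝ^{n-l} in ℝ^n
    (Q : Set (Fin n → ℝ)) (hQ : Q = {x : Fin n → ℝ | ∀ i : Fin n, (i : ℕ) < l → 0 ≤ x i})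
    -- V is a relatively open neighborhood of 0 in Q
    (V : Set (Fin n → ℝ)) (hVQ : V ⊆ Q)
    (hVopen : ∃ U : Set (Fin n → ℝ), IsOpen U ∧ V = Q ∩ U)
    (hV0 : (0 : Fin n → ℝ) ∈ V)
    -- (i) U₁ is an open neighborhood of 0 in E₁ and B : V × U₁ → E₀ is of class C¹
    (U₁ : Set E₁) (hU₁ : IsOpen U₁) (hU₁0 : (0 : E₁) ∈ U₁)
    (B : (Fin n → ℝ) → E₁ → E₀)
    (hB : ContDiffOn ℝ 1 (fun q : (Fin n → ℝ) × E₁ => B q.1 q.2) (V ×ˢ U₁))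
    -- (ii) the contraction estimate
    (ρ₀ r : ℝ) (hρ₀0 : 0 < ρ₀) (hρ₀1 : ρ₀ < 1) (hr : 0 < r)
    (hcontr₀ : ∀ v ∈ V, ‖v‖ < r → ∀ u ∈ U₁, ∀ u' ∈ U₁, ‖u‖ < r → ‖u'‖ < r →
      ‖B v u - B v u'‖ ≤ ρ₀ * ‖ι u - ι u'‖)
    -- (iii) δ is a continuous solution germ
    (δ : (Fin n → ℝ) → E₁) (hδcont : ContinuousOn δ V) (hδ0 : δ 0 = 0)
    (hδU : ∀ v ∈ V, δ v ∈ U₁) (hδfix : ∀ v ∈ V, ι (δ v) = B v (δ v)) :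
    -- conclusion: v ↦ ι(δ(v)) is locally Lipschitz at 0 into E₀
    ∃ V' : Set (Fin n → ℝ), V' ⊆ V ∧ (0 : Fin n → ℝ) ∈ V' ∧
      (∃ U' : Set (Fin n → ℝ), IsOpen U' ∧ V' = V ∩ U') ∧
      ∃ c : ℝ, 0 ≤ c ∧ ∀ v ∈ V', ∀ v' ∈ V', ‖ι (δ v') - ι (δ v)‖ ≤ c * ‖v' - v‖ := by
  obtain ⟨U, hUopen, hVU⟩ := hVopen
  have hU0 : (0 : Fin n → ℝ) ∈ U := by rw [hVU] at hV0; exact hV0.2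
  obtain ⟨εU, hεU0, hεU⟩ := Metric.isOpen_iff.1 hUopen 0 hU0
  obtain ⟨ε₁, hε₁0, hε₁⟩ := Metric.isOpen_iff.1 hU₁ 0 hU₁0
  have hQconv : Convex ℝ Q := by
    rw [hQ]
    intro x hx y hy a b ha hb hab
    intro i hi
    have := hx i hi; have := hy i hi
    simp only [Pi.add_apply, Pi.smul_apply, smul_eq_mul]
    positivity
  set s : Set ((Fin n → ℝ) × E₁) :=
    (Q ∩ Metric.ball 0 εU) ×ˢ Metric.ball (0 : E₁) ε₁ with hs
  have hsconv : Convex ℝ s := (hQconv.inter (convex_ball 0 εU)).prod (convex_ball 0 ε₁)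
  have hsub : s ⊆ V ×ˢ U₁ := by
    rintro ⟨v, u⟩ ⟨⟨hvQ, hvb⟩, hub⟩
    exact ⟨by rw [hVU]; exact ⟨hvQ, hεU hvb⟩, hε₁ hub⟩
  have h0s : ((0 : Fin n → ℝ), (0 : E₁)) ∈ s := by
    refine ⟨⟨?_, Metric.mem_ball_self hεU0⟩, Metric.mem_ball_self hε₁0⟩
    rw [hQ]; intro i _; rfl
  obtain ⟨K, t, htmem, hlip⟩ :=
    ((hB.mono hsub) _ h0s).exists_lipschitzOnWith hsconv
  obtain ⟨ε₂, hε₂0, hε₂⟩ := Metric.mem_nhdsWithin_iff.1 htmem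
  -- continuity of δ at 0
  set η := min ε₁ (min ε₂ r) with hη
  have hη0 : 0 < η := lt_min hε₁0 (lt_min hε₂0 hr)
  have hδ0' : ContinuousWithinAt δ V 0 := hδcont 0 hV0
  have : Metric.ball (0 : E₁) η ∈ Filter.map δ (nhdsWithin 0 V) := by
    apply hδ0'
    rw [hδ0]
    exact Metric.ball_mem_nhds _ hη0
  obtain ⟨σ, hσ0, hσ⟩ := Metric.mem_nhdsWithin_iff.1 this
  set ρ := min σ (min εU (min ε₂ r)) with hρ
  have hρ0 : 0 < ρ := lt_min hσ0 (lt_min hεU0 (lt_min hε₂0 hr))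
  refine ⟨V ∩ Metric.ball 0 ρ, Set.inter_subset_left, ⟨hV0, Metric.mem_ball_self hρ0⟩,
    ⟨Metric.ball 0 ρ, Metric.isOpen_ball, rfl⟩, K / (1 - ρ₀), div_nonneg K.coe_nonneg (by linarith), ?_⟩
  have key : ∀ v ∈ V ∩ Metric.ball 0 ρ,
      v ∈ V ∧ ‖v‖ < r ∧ δ v ∈ U₁ ∧ ‖δ v‖ < r ∧
      (v, δ v) ∈ t ∧ v ∈ Q ∩ Metric.ball 0 εU ∧ δ v ∈ Metric.ball (0 : E₁) ε₁ ∧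
      ‖δ v‖ < ε₂ := by
    rintro v ⟨hvV, hvb⟩
    have hvn : ‖v‖ < ρ := by simpa [dist_eq_norm] using hvb
    have hδv : δ v ∈ Metric.ball (0 : E₁) η := by
      apply hσ
      exact ⟨Metric.mem_ball.2 (lt_of_lt_of_le hvb (min_le_left _ _)), hvV⟩
    have hδvn : ‖δ v‖ < η := by simpa [dist_eq_norm] using hδv
    have hvεU : ‖v‖ < εU := lt_of_lt_of_le hvn (le_trans (min_le_right _ _) (min_le_left _ _))
    have hvε₂ : ‖v‖ < ε₂ := lt_of_lt_of_le hvn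
      (le_trans (min_le_right _ _) (le_trans (min_le_right _ _) (min_le_left _ _)))
    have hvr : ‖v‖ < r := lt_of_lt_of_le hvn
      (le_trans (min_le_right _ _) (le_trans (min_le_right _ _) (min_le_right _ _)))
    have hδε₁ : ‖δ v‖ < ε₁ := lt_of_lt_of_le hδvn (min_le_left _ _)
    have hδε₂ : ‖δ v‖ < ε₂ := lt_of_lt_of_le hδvn (le_trans (min_le_right _ _) (min_le_left _ _))
    have hδr : ‖δ v‖ < r := lt_of_lt_of_le hδvn (le_trans (min_le_right _ _) (min_le_right _ _))
    have hvQb : v ∈ Q ∩ Metric.ball 0 εU :=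
      ⟨hVQ hvV, by simpa [dist_eq_norm] using hvεU⟩
    have hδb : δ v ∈ Metric.ball (0 : E₁) ε₁ := by simpa [dist_eq_norm] using hδε₁
    refine ⟨hvV, hvr, hδU v hvV, hδr, ?_, hvQb, hδb, hδε₂⟩
    apply hε₂
    refine ⟨?_, ⟨hvQb, hδb⟩⟩
    rw [Metric.mem_ball, Prod.dist_eq]
    simp only [dist_zero_right]
    exact max_lt hvε₂ hδε₂
  rintro v hv v' hv'
  obtain ⟨hvV, hvr, hδvU, hδvr, hvt, hvQb, hδvb, hδvε₂⟩ := key v hv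
  obtain ⟨hv'V, hv'r, hδv'U, hδv'r, hv't, hv'Qb, hδv'b, hδv'ε₂⟩ := key v' hv'
  -- the mixed point (v', δ v) is in t
  have hmix : (v', δ v) ∈ t := by
    apply hε₂
    refine ⟨?_, ⟨hv'Qb, hδvb⟩⟩
    rw [Metric.mem_ball, Prod.dist_eq]
    simp only [dist_zero_right]
    have hv'ε₂ : ‖v'‖ < ε₂ := by
      have := hv'.2
      have hvn : ‖v'‖ < ρ := by simpa [dist_eq_norm] using hv'.2
      exact lt_of_lt_of_le hvn
        (le_trans (min_le_right _ _) (le_trans (min_le_right _ _) (min_le_left _ _)))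
    exact max_lt hv'ε₂ hδvε₂
  -- main estimate
  have h1 : ‖B v' (δ v') - B v' (δ v)‖ ≤ ρ₀ * ‖ι (δ v') - ι (δ v)‖ :=
    hcontr₀ v' hv'V hv'r (δ v') hδv'U (δ v) hδvU hδv'r hδvr
  have h2 : ‖B v' (δ v) - B v (δ v)‖ ≤ K * ‖v' - v‖ := by
    have := hlip.dist_le_mul (v', δ v) hmix (v, δ v) hvt
    rw [dist_eq_norm, Prod.dist_eq] at this
    simp only [dist_eq_norm] at this
    calc ‖B v' (δ v) - B v (δ v)‖ ≤ K * max ‖v' - v‖ ‖δ v - δ v‖ := this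
    _ = K * ‖v' - v‖ := by rw [sub_self, norm_zero, max_eq_left (norm_nonneg _)]
  have heq : ι (δ v') - ι (δ v) = (B v' (δ v') - B v' (δ v)) + (B v' (δ v) - B v (δ v)) := by
    rw [hδfix v hvV, hδfix v' hv'V]; abel
  have h3 : ‖ι (δ v') - ι (δ v)‖ ≤ ρ₀ * ‖ι (δ v') - ι (δ v)‖ + K * ‖v' - v‖ :=
    calc ‖ι (δ v') - ι (δ v)‖
        = ‖(B v' (δ v') - B v' (δ v)) + (B v' (δ v) - B v (δ v))‖ := by rw [heq]
      _ ≤ ‖B v' (δ v') - B v' (δ v)‖ + ‖B v' (δ v) - B v (δ v)‖ := norm_add_le _ _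
      _ ≤ ρ₀ * ‖ι (δ v') - ι (δ v)‖ + K * ‖v' - v‖ := add_le_add h1 h2
  have hM : (0:ℝ) ≤ ‖ι (δ v') - ι (δ v)‖ := norm_nonneg _
  rw [div_mul_eq_mul_div, le_div_iff₀ (by linarith)]
  nlinarith [norm_nonneg (v' - v)]
end

section
/- Let E and F be real Banach spaces and let t ↦ T_t be a map from [0,1] into the space of bounded linear operators from E to F, continuous in the operator norm. Assume each T_t is Fredholm: ker T_t is finite-dimensional and the range of T_t is closed and has a finite-dimensional complement in F. Then there exist a finite-dimensional subspace C ⊆ F and a closed subspace R ⊆ F with F = C ⊕ R (a topological direct sum) such that, denoting by P : F → F the continuous linear projection onto R along C, the operator P ∘ T_t : E → R is surjective for every t ∈ [0,1]. (Existence of a common stabilizing projection for a continuous arc of Fredholm operators, used in the construction of the determinant line bundle.) -/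
open Filter Topology

/-- Surjectivity of bounded operators between Banach spaces is an open condition. -/
lemma surjective_open_aux {X Y : Type*} [NormedAddCommGroup X] [NormedSpace ℝ X]
    [CompleteSpace X] [NormedAddCommGroup Y] [NormedSpace ℝ Y] [CompleteSpace Y]
    (f : X →L[ℝ] Y) (hf : Function.Surjective f) :
    ∃ ε > 0, ∀ g : X →L[ℝ] Y, ‖g - f‖ < ε → Function.Surjective g := by
  obtain ⟨φ, hφ⟩ := f.exists_nonlinearRightInverse_of_surjective
    (LinearMap.range_eq_top.2 hf)
  set M : ℝ := (φ.nnnorm : ℝ) with hM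
  have hMpos : 0 < M := by exact_mod_cast hφ
  refine ⟨1 / (2 * M), by positivity, fun g hg y => ?_⟩
  -- iterative construction
  have hgM : ‖g - f‖ * M ≤ 1 / 2 := by
    have h2M : (0:ℝ) < 2 * M := by positivity
    have := (lt_div_iff₀ h2M).mp hg
    nlinarith [norm_nonneg (g - f)]
  set u : ℕ → Y := fun n => Nat.rec y (fun _ w => w - g (φ w)) n with hu
  have hu0 : u 0 = y := rfl
  have huS : ∀ n, u (n + 1) = u n - g (φ (u n)) := fun n => rfl
  have hubound : ∀ n, ‖u n‖ ≤ (1 / 2) ^ n * ‖y‖ := by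
    intro n
    induction n with
    | zero => simp [hu0]
    | succ n ih =>
      have h1 : u (n + 1) = (f - g) (φ (u n)) := by
        rw [huS, ContinuousLinearMap.sub_apply, φ.right_inv (u n)]
      have h2 : ‖u (n + 1)‖ ≤ ‖f - g‖ * (M * ‖u n‖) := by
        rw [h1]
        exact le_trans ((f - g).le_opNorm _)
          (mul_le_mul_of_nonneg_left (φ.bound (u n)) (norm_nonneg _))
      have h3 : ‖f - g‖ = ‖g - f‖ := norm_sub_rev f g
      calc ‖u (n + 1)‖ ≤ ‖g - f‖ * M * ‖u n‖ := by rw [h3] at h2; linarith [h2, mul_assoc ‖g - f‖ M ‖u n‖]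
        _ ≤ (1 / 2) * ‖u n‖ := mul_le_mul_of_nonneg_right hgM (norm_nonneg _)
        _ ≤ (1 / 2) * ((1 / 2) ^ n * ‖y‖) := by linarith
        _ = (1 / 2) ^ (n + 1) * ‖y‖ := by ring
  have hvsum : Summable fun n => φ (u n) := by
    apply Summable.of_norm_bounded (g := fun n => M * ‖y‖ * (1 / 2) ^ n)
    · exact (summable_geometric_of_lt_one (by norm_num) (by norm_num)).mul_left _
    · intro n
      calc ‖φ (u n)‖ ≤ M * ‖u n‖ := φ.bound (u n)
        _ ≤ M * ((1 / 2) ^ n * ‖y‖) :=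
          mul_le_mul_of_nonneg_left (hubound n) hMpos.le
        _ = M * ‖y‖ * (1 / 2) ^ n := by ring
  refine ⟨∑' n, φ (u n), ?_⟩
  have hgsum : g (∑' n, φ (u n)) = ∑' n, g (φ (u n)) := g.map_tsum hvsum
  have hterm : ∀ n, g (φ (u n)) = u n - u (n + 1) := by
    intro n; rw [huS, sub_sub_cancel]
  have hulim : Tendsto u atTop (𝓝 0) := by
    have : Tendsto (fun n => (1 / 2 : ℝ) ^ n * ‖y‖) atTop (𝓝 0) := by
      simpa using (tendsto_pow_atTop_nhds_zero_of_lt_one (by norm_num) (by norm_num : (1:ℝ)/2 < 1)).mul_const ‖y‖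
    exact squeeze_zero_norm hubound this
  have hs : Summable fun n => g (φ (u n)) := hvsum.map g g.continuous
  have htel : ∀ n, ∑ i ∈ Finset.range n, g (φ (u i)) = y - u n := by
    intro n
    simp only [hterm]
    rw [Finset.sum_range_sub' u, hu0]
  have h1 : Tendsto (fun n => ∑ i ∈ Finset.range n, g (φ (u i))) atTop (𝓝 y) := by
    simp only [htel]
    simpa using tendsto_const_nhds.sub hulim
  have h2 : (∑' n, g (φ (u n))) = y :=
    tendsto_nhds_unique hs.hasSum.tendsto_sum_nat h1
  rw [hgsum, h2]

/-- If `range (T t) ⊔ C = ⊤` is witnessed via compl, it persists for nearby operators. -/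
lemma local_cosurj_aux {E F : Type*} [NormedAddCommGroup E] [NormedSpace ℝ E] [CompleteSpace E]
    [NormedAddCommGroup F] [NormedSpace ℝ F] [CompleteSpace F]
    (A : E →L[ℝ] F) (C : Submodule ℝ F) [FiniteDimensional ℝ C]
    (hsup : LinearMap.range (A : E →ₗ[ℝ] F) ⊔ C = ⊤) :
    ∃ ε > 0, ∀ B : E →L[ℝ] F, ‖B - A‖ < ε → LinearMap.range (B : E →ₗ[ℝ] F) ⊔ C = ⊤ := by
  let S : (E →L[ℝ] F) → ((E × ↥C) →L[ℝ] F) := fun A =>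
    A.comp (ContinuousLinearMap.fst ℝ E ↥C) +
      C.subtypeL.comp (ContinuousLinearMap.snd ℝ E ↥C)
  have hSapp : ∀ (A : E →L[ℝ] F) (p : E × ↥C), S A p = A p.1 + (p.2 : F) := fun _ _ => rfl
  have hsurj_iff : ∀ A : E →L[ℝ] F, Function.Surjective (S A) ↔
      LinearMap.range (A : E →ₗ[ℝ] F) ⊔ C = ⊤ := by
    intro A
    constructor
    · intro h
      rw [eq_top_iff]
      intro y _
      obtain ⟨⟨x, c⟩, hx⟩ := h y
      rw [hSapp] at hx
      exact hx ▸ Submodule.add_mem_sup (LinearMap.mem_range_self _ x) c.2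
    · intro h y
      have hy : y ∈ LinearMap.range (A : E →ₗ[ℝ] F) ⊔ C := h ▸ Submodule.mem_top
      obtain ⟨a, ha, b, hb, hab⟩ := Submodule.mem_sup.mp hy
      obtain ⟨x, hx⟩ := ha
      rw [ContinuousLinearMap.coe_coe] at hx
      exact ⟨(x, ⟨b, hb⟩), by rw [hSapp]; simp [hx, hab]⟩
  obtain ⟨ε, hε, hball⟩ := surjective_open_aux (S A) ((hsurj_iff A).2 hsup)
  refine ⟨ε, hε, fun B hB => (hsurj_iff B).1 (hball _ (lt_of_le_of_lt ?_ hB))⟩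
  refine ContinuousLinearMap.opNorm_le_bound _ (norm_nonneg (B - A)) fun p => ?_
  have h1 : (S B - S A) p = (B - A) p.1 := by
    simp only [ContinuousLinearMap.sub_apply, hSapp]
    abel
  rw [h1]
  calc ‖(B - A) p.1‖ ≤ ‖B - A‖ * ‖p.1‖ := ContinuousLinearMap.le_opNorm _ _
    _ ≤ ‖B - A‖ * ‖p‖ := by
        gcongr
        exact norm_fst_le p

/-- existence of a common stabilizing projection for a norm-continuous arc
of Fredholm operators (used in the construction of the determinant line bundle). -/
theorem common_stabilizing_projection
    (E F : Type*) [NormedAddCommGroup E] [NormedSpace ℝ E] [CompleteSpace E]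
    [NormedAddCommGroup F] [NormedSpace ℝ F] [CompleteSpace F]
    (T : ℝ → (E →L[ℝ] F)) (hTcont : ContinuousOn T (Set.Icc 0 1))
    (hker : ∀ t ∈ Set.Icc (0 : ℝ) 1, FiniteDimensional ℝ (LinearMap.ker (T t : E →ₗ[ℝ] F)))
    (hclosed : ∀ t ∈ Set.Icc (0 : ℝ) 1,
      IsClosed ((LinearMap.range (T t : E →ₗ[ℝ] F) : Submodule ℝ F) : Set F))
    (hcoker : ∀ t ∈ Set.Icc (0 : ℝ) 1, ∃ Ct : Submodule ℝ F, FiniteDimensional ℝ Ct ∧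
      IsCompl (LinearMap.range (T t : E →ₗ[ℝ] F)) Ct) :
    ∃ (C R : Submodule ℝ F), FiniteDimensional ℝ C ∧ IsClosed (R : Set F) ∧ IsCompl C R ∧
      ∃ P : F →L[ℝ] F, (∀ x : F, P x ∈ R) ∧ (∀ x ∈ R, P x = x) ∧ (∀ x ∈ C, P x = 0) ∧
        ∀ t ∈ Set.Icc (0 : ℝ) 1, ∀ y ∈ R, ∃ x : E, P (T t x) = y := by
  -- Step 1. For every `t` find a finite-dimensional `Cs t` and an open nbhd on which
  -- `range (T s) ⊔ Cs t = ⊤`.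
  have step1 : ∀ t ∈ Set.Icc (0 : ℝ) 1, ∃ Ct : Submodule ℝ F, FiniteDimensional ℝ Ct ∧
      ∃ O : Set ℝ, IsOpen O ∧ t ∈ O ∧
        ∀ s ∈ O ∩ Set.Icc (0 : ℝ) 1, LinearMap.range (T s : E →ₗ[ℝ] F) ⊔ Ct = ⊤ := by
    intro t ht
    obtain ⟨Ct, hCfin, hCcompl⟩ := hcoker t ht
    haveI := hCfin
    obtain ⟨ε, hε, hball⟩ := local_cosurj_aux (T t) Ct (codisjoint_iff.1 hCcompl.codisjoint)
    have hnhds : {s : ℝ | ‖T s - T t‖ < ε} ∈ 𝓝[Set.Icc (0:ℝ) 1] t := by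
      have hc : ContinuousWithinAt (fun s => ‖T s - T t‖) (Set.Icc (0:ℝ) 1) t :=
        ((hTcont t ht).sub continuousWithinAt_const).norm
      have : Set.Iio ε ∈ 𝓝 ‖T t - T t‖ := by
        rw [sub_self, norm_zero]; exact Iio_mem_nhds hε
      exact hc this
    rw [mem_nhdsWithin] at hnhds
    obtain ⟨O, hOopen, htO, hOsub⟩ := hnhds
    exact ⟨Ct, hCfin, O, hOopen, htO, fun s hs => hball _ (hOsub hs)⟩
  choose! Cs hCsfin Os hOsopen htOs hOsgood using step1
  -- Step 2. Compactness: finitely many of the `Os t` cover `[0,1]`.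
  obtain ⟨ts, hts⟩ := isCompact_Icc.elim_nhds_subcover' (fun t ht => Os t)
    (fun t ht => (hOsopen t ht).mem_nhds (htOs t ht))
  set C : Submodule ℝ F := ts.sup fun t => Cs t with hC
  haveI hCfin : FiniteDimensional ℝ C := by
    haveI : ∀ i : ↥(Set.Icc (0:ℝ) 1), FiniteDimensional ℝ (Cs (i : ℝ)) :=
      fun i => hCsfin _ i.2
    exact Submodule.finiteDimensional_finset_sup _ _
  have hCgood : ∀ s ∈ Set.Icc (0 : ℝ) 1, LinearMap.range (T s : E →ₗ[ℝ] F) ⊔ C = ⊤ := by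
    intro s hs
    obtain ⟨t, htmem, hst⟩ := Set.mem_iUnion₂.mp (hts hs)
    have h1 : LinearMap.range (T s : E →ₗ[ℝ] F) ⊔ Cs t = ⊤ := hOsgood _ t.2 s ⟨hst, hs⟩
    have h2 : (Cs t : Submodule ℝ F) ≤ C := Finset.le_sup (f := fun t : ↥(Set.Icc (0:ℝ) 1) => Cs (t : ℝ)) htmem
    rw [eq_top_iff, ← h1]
    exact sup_le_sup_left h2 _
  -- Step 3. Build the projection along `C`.
  obtain ⟨f, hf⟩ := Submodule.ClosedComplemented.of_finiteDimensional C
  set Q : F →L[ℝ] F := C.subtypeL.comp f with hQ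
  have hQmem : ∀ x : F, Q x ∈ C := fun x => (f x).2
  have hQid : ∀ x ∈ C, Q x = x := by
    intro x hx
    have := hf ⟨x, hx⟩
    simp only [hQ, ContinuousLinearMap.comp_apply, Submodule.subtypeL_apply]
    rw [show f x = f ((⟨x, hx⟩ : C) : F) from rfl, this]
  have hQQ : ∀ x : F, Q (Q x) = Q x := fun x => hQid _ (hQmem x)
  set R : Submodule ℝ F := LinearMap.ker (Q : F →ₗ[ℝ] F) with hR
  set P : F →L[ℝ] F := ContinuousLinearMap.id ℝ F - Q with hP
  have hPapp : ∀ x : F, P x = x - Q x := fun x => rfl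
  have hPR : ∀ x : F, P x ∈ R := by
    intro x
    rw [hR, LinearMap.mem_ker]
    show Q (P x) = 0
    rw [hPapp, map_sub, hQQ, sub_self]
  have hRid : ∀ x ∈ R, P x = x := by
    intro x hx
    rw [hR, LinearMap.mem_ker] at hx
    rw [hPapp]
    show x - Q x = x
    rw [show Q x = 0 from hx, sub_zero]
  have hCzero : ∀ x ∈ C, P x = 0 := by
    intro x hx
    rw [hPapp, hQid x hx, sub_self]
  refine ⟨C, R, hCfin, ?_, ?_, P, hPR, hRid, hCzero, ?_⟩
  · exact ContinuousLinearMap.isClosed_ker Q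
  · constructor
    · rw [Submodule.disjoint_def]
      intro x hxC hxR
      have h1 := hRid x hxR
      have h2 := hCzero x hxC
      rw [h1] at h2
      exact h2
    · rw [codisjoint_iff, eq_top_iff]
      intro x _
      have : x = Q x + P x := by rw [hPapp]; abel
      exact this ▸ Submodule.add_mem_sup (hQmem x) (hPR x)
  · intro t ht y hy
    have hsup := hCgood t ht
    have hymem : y ∈ LinearMap.range (T t : E →ₗ[ℝ] F) ⊔ C := hsup ▸ Submodule.mem_top
    obtain ⟨a, ha, b, hb, hab⟩ := Submodule.mem_sup.mp hymem
    obtain ⟨x, hx⟩ := ha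
    rw [ContinuousLinearMap.coe_coe] at hx
    refine ⟨x, ?_⟩
    rw [hx, show a = y - b by rw [← hab]; abel, map_sub, hRid y hy, hCzero b hb, sub_zero]
end

section
/- Let N be a finite-dimensional linear subspace of E = ℝ^n × W which is in good position to the partial quadrant C = [0,∞)^n × W. Then C ∩ N is a partial quadrant in N: there exist an integer 0 ≤ k ≤ d = dim N and a linear isomorphism of N onto ℝ^d carrying C ∩ N onto [0,∞)^k × ℝ^{d−k}. (Proposition 5.2.) -/
set_option maxHeartbeats 1000000

open Module

/-- From a surjective linear map onto `ℝ^k`, build a global coordinate system whose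
first `k` coordinates are the given map. -/
theorem build_phi {V : Type*} [AddCommGroup V] [Module ℝ V] [FiniteDimensional ℝ V]
    (k : ℕ) (G : V →ₗ[ℝ] (Fin k → ℝ)) (hG : Function.Surjective G) :
    k ≤ Module.finrank ℝ V ∧
      ∃ φ : V ≃ₗ[ℝ] (Fin (Module.finrank ℝ V) → ℝ),
        ∀ (x : V) (i : Fin (Module.finrank ℝ V)) (h : (i : ℕ) < k), φ x i = G x ⟨i, h⟩ := by
  classical
  set d := Module.finrank ℝ V with hd
  have hrange : LinearMap.range G = ⊤ := LinearMap.range_eq_top.2 hG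
  have hrk : k + Module.finrank ℝ (LinearMap.ker G) = d := by
    have := LinearMap.finrank_range_add_finrank_ker G
    rw [hrange, finrank_top, Module.finrank_fin_fun] at this
    exact this
  have hkd : k ≤ d := le_of_add_le_left hrk.le
  obtain ⟨s, hs⟩ := G.exists_rightInverse_of_surjective hrange
  have hGs : ∀ u, G (s u) = u := fun u => LinearMap.ext_iff.1 hs u
  obtain ⟨ψ⟩ : Nonempty (LinearMap.ker G ≃ₗ[ℝ] (Fin (d - k) → ℝ)) := by
    refine FiniteDimensional.nonempty_linearEquiv_of_finrank_eq ?_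
    rw [Module.finrank_fin_fun]; omega
  -- the projection onto the kernel
  have kermem : ∀ x : V, x - s (G x) ∈ LinearMap.ker G := by
    intro x; simp [LinearMap.mem_ker, map_sub, hGs]
  let ρ : V →ₗ[ℝ] LinearMap.ker G :=
    { toFun := fun x => ⟨x - s (G x), kermem x⟩
      map_add' := by intro x y; ext; simp [map_add]; abel
      map_smul' := by intro t x; ext; simp [map_smul, smul_sub] }
  have hρ : ∀ x : V, ((ρ x : V)) = x - s (G x) := fun _ => rfl
  let F : V →ₗ[ℝ] (Fin d → ℝ) :=
    { toFun := fun x => fun i =>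
        if h : (i : ℕ) < k then G x ⟨i, h⟩ else ψ (ρ x) ⟨(i : ℕ) - k, by omega⟩
      map_add' := by
        intro x y; funext i; by_cases h : (i : ℕ) < k <;> simp [h, map_add]
      map_smul' := by
        intro t x; funext i; by_cases h : (i : ℕ) < k <;> simp [h, map_smul] }
  have hF : ∀ (x : V) (i : Fin d), F x i =
      if h : (i : ℕ) < k then G x ⟨i, h⟩ else ψ (ρ x) ⟨(i : ℕ) - k, by omega⟩ := fun _ _ => rfl
  let L : (Fin d → ℝ) →ₗ[ℝ] V :=
    { toFun := fun a => s (fun j : Fin k => a ⟨j, lt_of_lt_of_le j.2 hkd⟩) +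
        ((ψ.symm (fun j : Fin (d - k) => a ⟨k + j, by omega⟩) : LinearMap.ker G) : V)
      map_add' := by
        intro a b
        rw [show (fun j : Fin k => (a + b) ⟨j, lt_of_lt_of_le j.2 hkd⟩) =
            (fun j : Fin k => a ⟨j, lt_of_lt_of_le j.2 hkd⟩) +
            (fun j : Fin k => b ⟨j, lt_of_lt_of_le j.2 hkd⟩) from rfl,
          show (fun j : Fin (d - k) => (a + b) ⟨k + j, by omega⟩) =
            (fun j : Fin (d - k) => a ⟨k + j, by omega⟩) +
            (fun j : Fin (d - k) => b ⟨k + j, by omega⟩) from rfl,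
          map_add, map_add, Submodule.coe_add]
        abel
      map_smul' := by
        intro t a
        rw [show (fun j : Fin k => (t • a) ⟨j, lt_of_lt_of_le j.2 hkd⟩) =
            t • (fun j : Fin k => a ⟨j, lt_of_lt_of_le j.2 hkd⟩) from rfl,
          show (fun j : Fin (d - k) => (t • a) ⟨k + j, by omega⟩) =
            t • (fun j : Fin (d - k) => a ⟨k + j, by omega⟩) from rfl,
          map_smul, map_smul, Submodule.coe_smul, RingHom.id_apply, smul_add] }
  have hLF : ∀ x : V, L (F x) = x := by
    intro x
    have h1 : (fun j : Fin k => F x ⟨j, lt_of_lt_of_le j.2 hkd⟩) = G x := by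
      funext j
      rw [hF]
      rw [dif_pos (show ((⟨(j : ℕ), lt_of_lt_of_le j.2 hkd⟩ : Fin d) : ℕ) < k from j.2)]
    have h2 : (fun j : Fin (d - k) => F x ⟨k + j, by omega⟩) = ψ (ρ x) := by
      funext j
      rw [hF]
      rw [dif_neg (show ¬((⟨k + (j : ℕ), by omega⟩ : Fin d) : ℕ) < k by simp)]
      simp only [show k + (j:ℕ) - k = (j:ℕ) from by omega, Fin.eta]
    show s (fun j : Fin k => F x ⟨j, lt_of_lt_of_le j.2 hkd⟩) +
        ((ψ.symm (fun j : Fin (d - k) => F x ⟨k + j, by omega⟩) : LinearMap.ker G) : V) = x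
    rw [h1, h2, LinearEquiv.symm_apply_apply, hρ]
    abel
  have hFL : ∀ a : Fin d → ℝ, F (L a) = a := by
    intro a
    set a1 : Fin k → ℝ := fun j : Fin k => a ⟨j, lt_of_lt_of_le j.2 hkd⟩ with ha1
    set a2 : Fin (d - k) → ℝ := fun j : Fin (d - k) => a ⟨k + j, by omega⟩ with ha2
    have hLa : L a = s a1 + ((ψ.symm a2 : LinearMap.ker G) : V) := rfl
    have hGL : G (L a) = a1 := by
      rw [hLa, map_add, hGs, (ψ.symm a2).2, add_zero]
    have hρL : ρ (L a) = ψ.symm a2 := by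
      apply Subtype.ext
      rw [hρ, hGL, hLa]
      abel
    funext i
    rw [hF]
    by_cases h : (i : ℕ) < k
    · rw [dif_pos h, hGL, ha1]
    · rw [dif_neg h, hρL, LinearEquiv.apply_symm_apply, ha2]
      show a _ = a i
      congr 1
      exact Fin.ext (by show k + ((i:ℕ) - k) = (i:ℕ); omega)
  refine ⟨hkd, ⟨LinearEquiv.ofLinear F L (LinearMap.ext fun a => hFL a) (LinearMap.ext fun x => hLF x), ?_⟩⟩
  intro x i h
  show F x i = _
  rw [hF, dif_pos h]

/-- Proposition 5.2: if a finite-dimensional subspace `N` of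
`E = ℝ^n × W` is in good position to the partial quadrant `C = [0,∞)^n × W`, then
`C ∩ N` is a partial quadrant in `N`. -/
theorem good_position_partial_quadrant
    (n : ℕ) (W : Type*) [NormedAddCommGroup W] [NormedSpace ℝ W] [CompleteSpace W]
    (C : Set ((Fin n → ℝ) × W)) (hC : C = {p : (Fin n → ℝ) × W | ∀ i : Fin n, 0 ≤ p.1 i})
    (N : Submodule ℝ ((Fin n → ℝ) × W)) [FiniteDimensional ℝ N]
    -- N ∩ C has nonempty interior in N
    (hint : ∃ x, x ∈ N ∧ x ∈ C ∧ ∃ ε > 0, ∀ y ∈ N, ‖y - x‖ < ε → y ∈ C)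
    -- a good complement N⊥ with constant c
    (Nperp : Submodule ℝ ((Fin n → ℝ) × W))
    (hclosed : IsClosed (Nperp : Set ((Fin n → ℝ) × W)))
    (hcompl : IsCompl N Nperp)
    (c : ℝ) (hc : 0 < c)
    (hgood : ∀ v ∈ N, ∀ m ∈ Nperp, ‖m‖ ≤ c * ‖v‖ → ((v + m ∈ C) ↔ v ∈ C)) :
    -- C ∩ N is a partial quadrant in N
    ∃ k : ℕ, k ≤ Module.finrank ℝ N ∧
      ∃ φ : N ≃ₗ[ℝ] (Fin (Module.finrank ℝ N) → ℝ),
        ∀ x : N, (x : (Fin n → ℝ) × W) ∈ C ↔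
          ∀ i : Fin (Module.finrank ℝ N), (i : ℕ) < k → 0 ≤ φ x i := by
  classical
  subst hC
  obtain ⟨x0, hx0N, hx0C, ε, hε, hball⟩ := hint
  simp only [Set.mem_setOf_eq] at hx0C
  -- general reduction
  have key : ∀ (k : ℕ) (G : N →ₗ[ℝ] (Fin k → ℝ)), Function.Surjective G →
      (∀ x : N, (∀ i, 0 ≤ (x : (Fin n → ℝ) × W).1 i) ↔ ∀ j, 0 ≤ G x j) →
      (∃ k : ℕ, k ≤ Module.finrank ℝ N ∧
        ∃ φ : N ≃ₗ[ℝ] (Fin (Module.finrank ℝ N) → ℝ),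
          ∀ x : N, (x : (Fin n → ℝ) × W) ∈ {p : (Fin n → ℝ) × W | ∀ i : Fin n, 0 ≤ p.1 i} ↔
            ∀ i : Fin (Module.finrank ℝ N), (i : ℕ) < k → 0 ≤ φ x i) := by
    intro k G hsurj hiff
    obtain ⟨hkd, φ, hφ⟩ := build_phi k G hsurj
    refine ⟨k, hkd, φ, ?_⟩
    intro x
    rw [Set.mem_setOf_eq, hiff]
    constructor
    · intro h i hik
      rw [hφ x i hik]; exact h _
    · intro h j
      have := h ⟨j, lt_of_lt_of_le j.2 hkd⟩ j.2
      rwa [hφ x _ j.2] at this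
  by_cases hx0z : x0 = 0
  · -- interior point is 0 : everything is in C
    have hNC : ∀ x : (Fin n → ℝ) × W, x ∈ N → ∀ i, 0 ≤ x.1 i := by
      intro x hx i
      rcases eq_or_ne x 0 with rfl | hxne
      · simp
      have hxp : (0:ℝ) < ‖x‖ := norm_pos_iff.2 hxne
      set δ := ε / (2 * ‖x‖) with hδ
      have hδp : 0 < δ := by positivity
      have hnorm : ∀ s : ℝ, |s| = δ → ‖s • x - x0‖ < ε := by
        intro s hs
        rw [hx0z, sub_zero, norm_smul, Real.norm_eq_abs, hs]
        have heq : δ * ‖x‖ = ε / 2 := by rw [hδ]; field_simp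
        rw [heq]; linarith
      have h1 := hball (δ • x) (N.smul_mem _ hx) (hnorm δ (abs_of_pos hδp))
      have h2 := hball ((-δ) • x) (N.smul_mem _ hx)
        (hnorm (-δ) (by rw [abs_neg, abs_of_pos hδp]))
      simp only [Set.mem_setOf_eq] at h1 h2
      have e1 := h1 i
      have e2 := h2 i
      simp only [Prod.smul_fst, Pi.smul_apply, smul_eq_mul] at e1 e2
      nlinarith
    refine key 0 0 (fun u => ⟨0, funext fun j => j.elim0⟩) ?_
    intro x
    exact ⟨fun _ j => j.elim0, fun _ => hNC _ x.2⟩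
  by_cases hA : ∀ z ∈ N, z ∈ Submodule.span ℝ ({x0} : Set ((Fin n → ℝ) × W))
  · -- N is the line through x0
    by_cases hneg : ∀ i, 0 ≤ (-x0).1 i
    · -- all of N is in C
      have hNC : ∀ x : (Fin n → ℝ) × W, x ∈ N → ∀ i, 0 ≤ x.1 i := by
        intro x hx i
        obtain ⟨a, ha⟩ := Submodule.mem_span_singleton.1 (hA x hx)
        have hz : x0.1 i = 0 := by
          have h1 := hx0C i
          have h2 := hneg i
          simp only [Prod.fst_neg, Pi.neg_apply] at h2
          linarith
        rw [← ha]
        simp [hz]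
      refine key 0 0 (fun u => ⟨0, funext fun j => j.elim0⟩) ?_
      intro x
      exact ⟨fun _ j => j.elim0, fun _ => hNC _ x.2⟩
    · push_neg at hneg
      obtain ⟨i1, hi1⟩ := hneg
      have hx0i1 : 0 < x0.1 i1 := by
        simp only [Prod.fst_neg, Pi.neg_apply] at hi1
        linarith
      -- k = 1, basis given by x0
      set v0 : N := ⟨x0, hx0N⟩ with hv0
      have hv0ne : v0 ≠ 0 := by
        intro h
        exact hx0z (by simpa [hv0, Submodule.mk_eq_zero] using h)
      have li : LinearIndependent ℝ (fun _ : Fin 1 => v0) := linearIndependent_unique_iff.2 hv0ne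
      have hsp : ⊤ ≤ Submodule.span ℝ (Set.range (fun _ : Fin 1 => v0)) := by
        intro x _
        obtain ⟨a, ha⟩ := Submodule.mem_span_singleton.1 (hA (x : (Fin n → ℝ) × W) x.2)
        have : x = a • v0 := by
          apply Subtype.ext
          simp [hv0, ha]
        rw [this]
        exact Submodule.smul_mem _ _ (Submodule.subset_span ⟨0, rfl⟩)
      set b := Basis.mk li hsp with hb
      have hbx : ∀ x : N, (x : (Fin n → ℝ) × W) = (b.equivFun x 0) • x0 := by
        intro x
        have h1 : (b.equivFun x 0) • v0 = x := by
          have h2 := b.sum_equivFun x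
          rwa [Fin.sum_univ_one, hb, Basis.mk_apply, ← hb] at h2
        conv_lhs => rw [← h1]
        simp [hv0]
      refine key 1 b.equivFun.toLinearMap b.equivFun.surjective ?_
      intro x
      constructor
      · intro h j
        have hj : j = 0 := Subsingleton.elim _ _
        subst hj
        by_contra hlt
        push_neg at hlt
        simp only [LinearEquiv.coe_coe] at hlt
        have hco := h i1
        rw [hbx x] at hco
        simp only [Prod.smul_fst, Pi.smul_apply, smul_eq_mul] at hco
        nlinarith
      · intro h i
        have h0 := h 0
        simp only [LinearEquiv.coe_coe] at h0
        rw [hbx x]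
        simp only [Prod.smul_fst, Pi.smul_apply, smul_eq_mul]
        exact mul_nonneg h0 (hx0C i)
  · -- main case : there is z1 ∈ N outside the line through x0
    push_neg at hA
    obtain ⟨z1, hz1N, hz1span⟩ := hA
    -- the set of "active" coordinates
    set P : Fin n → Prop := fun l => ∃ w : (Fin n → ℝ) × W,
      w ∈ N ∧ (∀ i, 0 ≤ w.1 i) ∧ w ≠ 0 ∧ w.1 l = 0 with hP
    -- active coordinates vanish on the complement
    have hvanish : ∀ l, P l → ∀ m ∈ Nperp, m.1 l = 0 := by
      intro l hl m hm
      obtain ⟨w, hwN, hwC, hwne, hwl⟩ := hl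
      rcases eq_or_ne m 0 with rfl | hmne
      · simp
      have hw : (0:ℝ) < ‖w‖ := norm_pos_iff.2 hwne
      have hm' : (0:ℝ) < ‖m‖ := norm_pos_iff.2 hmne
      set t := c * ‖w‖ / ‖m‖ with ht
      have htpos : 0 < t := by positivity
      have key2 : ∀ s : ℝ, |s| = t → 0 ≤ s * m.1 l := by
        intro s hs
        have hmem : s • m ∈ Nperp := Nperp.smul_mem _ hm
        have hnorm : ‖s • m‖ ≤ c * ‖w‖ := by
          rw [norm_smul, Real.norm_eq_abs, hs, ht]
          rw [div_mul_eq_mul_div]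
          rw [mul_div_assoc]
          rw [div_self (ne_of_gt hm'), mul_one]
        have hin := (hgood w hwN (s • m) hmem hnorm).2 (by exact hwC)
        have h2 := hin l
        simp only [Prod.fst_add, Prod.smul_fst, Pi.add_apply, Pi.smul_apply,
          smul_eq_mul, hwl, zero_add] at h2
        exact h2
      have h1 := key2 t (abs_of_pos htpos)
      have h2 := key2 (-t) (by rw [abs_neg, abs_of_pos htpos])
      nlinarith
    set Sfin : Finset (Fin n) := Finset.univ.filter P with hSfin
    set k : ℕ := Sfin.card with hk
    set σ : Fin k → Fin n := fun j => ((Sfin.equivFin.symm j : Sfin) : Fin n) with hσ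
    have hσinj : Function.Injective σ := by
      intro a b hab
      exact Sfin.equivFin.symm.injective (Subtype.ext hab)
    have hσP : ∀ j, P (σ j) := by
      intro j
      exact (Finset.mem_filter.1 (Sfin.equivFin.symm j).2).2
    have hσsurj : ∀ l, P l → ∃ j, σ j = l := by
      intro l hl
      refine ⟨Sfin.equivFin ⟨l, Finset.mem_filter.2 ⟨Finset.mem_univ _, hl⟩⟩, ?_⟩
      show ((Sfin.equivFin.symm (Sfin.equivFin _) : Sfin) : Fin n) = l
      rw [Equiv.symm_apply_apply]
    set G : N →ₗ[ℝ] (Fin k → ℝ) :=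
      { toFun := fun x => fun j => (x : (Fin n → ℝ) × W).1 (σ j)
        map_add' := by intro x y; funext j; simp
        map_smul' := by intro t x; funext j; simp } with hG
    have hGapp : ∀ (x : N) (j : Fin k), G x j = (x : (Fin n → ℝ) × W).1 (σ j) :=
      fun x j => rfl
    -- the iff description
    have hGC : ∀ x : N, (∀ i, 0 ≤ (x : (Fin n → ℝ) × W).1 i) ↔ ∀ j, 0 ≤ G x j := by
      intro x
      constructor
      · intro h j; rw [hGapp]; exact h _
      · intro h
        by_contra hcon
        push_neg at hcon
        obtain ⟨i0, hi0⟩ := hcon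
        have hxne : (x : (Fin n → ℝ) × W) ≠ 0 := by
          intro h0
          rw [h0] at hi0
          simp at hi0
        -- find y ∈ C ∩ N outside the line through x
        obtain ⟨y, hyN, hyC, hyspan⟩ : ∃ y : (Fin n → ℝ) × W, y ∈ N ∧ (∀ i, 0 ≤ y.1 i) ∧
            y ∉ Submodule.span ℝ ({(x : (Fin n → ℝ) × W)} : Set ((Fin n → ℝ) × W)) := by
          by_cases hx0s : x0 ∈ Submodule.span ℝ ({(x : (Fin n → ℝ) × W)} : Set ((Fin n → ℝ) × W))
          · have hz1ne : z1 ≠ 0 := fun h => hz1span (h ▸ Submodule.zero_mem _)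
            have hz1pos : (0:ℝ) < ‖z1‖ := norm_pos_iff.2 hz1ne
            set δ := ε / (2 * ‖z1‖) with hδ
            have hδp : 0 < δ := by positivity
            refine ⟨x0 + δ • z1, N.add_mem hx0N (N.smul_mem _ hz1N), ?_, ?_⟩
            · have := hball (x0 + δ • z1) (N.add_mem hx0N (N.smul_mem _ hz1N)) ?_
              · exact this
              · rw [add_sub_cancel_left, norm_smul, Real.norm_eq_abs, abs_of_pos hδp, hδ]
                have heq : ε / (2 * ‖z1‖) * ‖z1‖ = ε / 2 := by field_simp
                rw [heq]; linarith
            · intro hmem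
              obtain ⟨a, ha⟩ := Submodule.mem_span_singleton.1 hx0s
              have hane : a ≠ 0 := by
                intro h0; rw [h0, zero_smul] at ha; exact hx0z ha.symm
              have hz1mem : z1 ∈ Submodule.span ℝ ({(x : (Fin n → ℝ) × W)} : Set ((Fin n → ℝ) × W)) := by
                have h2 : δ • z1 ∈ Submodule.span ℝ ({(x : (Fin n → ℝ) × W)} : Set ((Fin n → ℝ) × W)) := by
                  have := Submodule.sub_mem _ hmem hx0s
                  rwa [add_sub_cancel_left] at this
                rwa [Submodule.smul_mem_iff _ (ne_of_gt hδp)] at h2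
              obtain ⟨b, hb⟩ := Submodule.mem_span_singleton.1 hz1mem
              apply hz1span
              rw [Submodule.mem_span_singleton]
              refine ⟨b * a⁻¹, ?_⟩
              rw [← ha, smul_smul, mul_assoc, inv_mul_cancel₀ hane, mul_one, hb]
          · exact ⟨x0, hx0N, hx0C, hx0s⟩
        -- walk from y towards x; the first coordinate to exit gives an active index
        set Bf : Finset (Fin n) := Finset.univ.filter
          (fun i => (x : (Fin n → ℝ) × W).1 i < 0) with hBf
        have hiBf : i0 ∈ Bf := Finset.mem_filter.2 ⟨Finset.mem_univ _, hi0⟩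
        obtain ⟨l, hlB, hlmin⟩ := Bf.exists_min_image
          (fun i => y.1 i / (y.1 i - (x : (Fin n → ℝ) × W).1 i)) ⟨i0, hiBf⟩
        have hmemBf : ∀ i ∈ Bf, (x : (Fin n → ℝ) × W).1 i < 0 := by
          intro i hi; exact (Finset.mem_filter.1 hi).2
        have hden : ∀ i ∈ Bf, 0 < y.1 i - (x : (Fin n → ℝ) × W).1 i := by
          intro i hi
          have := hmemBf i hi
          have := hyC i
          linarith
        set t := y.1 l / (y.1 l - (x : (Fin n → ℝ) × W).1 l) with htdef
        have ht0 : 0 ≤ t := div_nonneg (hyC l) (le_of_lt (hden l hlB))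
        have ht1 : t < 1 := by
          rw [htdef, div_lt_one (hden l hlB)]
          have := hmemBf l hlB
          linarith
        set w := (1 - t) • y + t • (x : (Fin n → ℝ) × W) with hw
        have hwN : w ∈ N := N.add_mem (N.smul_mem _ hyN) (N.smul_mem _ x.2)
        have hwcoord : ∀ i, w.1 i = (1 - t) * y.1 i + t * (x : (Fin n → ℝ) × W).1 i := by
          intro i
          rw [hw]
          simp [Prod.fst_add, Prod.smul_fst]
        have hwC : ∀ i, 0 ≤ w.1 i := by
          intro i
          rw [hwcoord]
          by_cases hi : i ∈ Bf
          · have h1 := hlmin i hi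
            have h2 := hden i hi
            rw [le_div_iff₀ h2] at h1
            nlinarith
          · have hxi : 0 ≤ (x : (Fin n → ℝ) × W).1 i := by
              by_contra hcon2
              push_neg at hcon2
              exact hi (Finset.mem_filter.2 ⟨Finset.mem_univ _, hcon2⟩)
            have := hyC i
            nlinarith
        have hwl : w.1 l = 0 := by
          rw [hwcoord, htdef]
          have h2 : y.1 l - (x : (Fin n → ℝ) × W).1 l ≠ 0 := ne_of_gt (hden l hlB)
          field_simp
          ring
        have hwne : w ≠ 0 := by
          intro h0
          apply hyspan
          rw [Submodule.mem_span_singleton]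
          have h1t : (1:ℝ) - t ≠ 0 := by linarith
          refine ⟨(1 - t)⁻¹ * (-t), ?_⟩
          rw [hw] at h0
          have h2 : (1 - t) • y = -(t • (x : (Fin n → ℝ) × W)) :=
            add_eq_zero_iff_eq_neg.1 h0
          have h3 := congrArg (fun v => (1 - t)⁻¹ • v) h2
          simp only [smul_smul, inv_mul_cancel₀ h1t, one_smul, smul_neg] at h3
          rw [h3, mul_neg, neg_smul]
        have hPl : P l := ⟨w, hwN, hwC, hwne, hwl⟩
        obtain ⟨j, hj⟩ := hσsurj l hPl
        have := h j
        rw [hGapp, hj] at this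
        have := hmemBf l hlB
        linarith
    -- surjectivity of G
    have hGsurj : Function.Surjective G := by
      by_contra hns
      have hrne : LinearMap.range G ≠ ⊤ := fun h => hns (LinearMap.range_eq_top.1 h)
      obtain ⟨u, hu⟩ : ∃ u, u ∉ LinearMap.range G := by
        by_contra h
        push_neg at h
        exact hrne (eq_top_iff.2 fun u _ => h u)
      obtain ⟨f, hfu, hfmap⟩ := Submodule.exists_dual_map_eq_bot_of_notMem hu inferInstance
      have hfR : ∀ v ∈ LinearMap.range G, f v = 0 := by
        intro v hv
        have : f v ∈ Submodule.map f (LinearMap.range G) := ⟨v, hv, rfl⟩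
        rw [hfmap] at this
        exact this
      set a : Fin k → ℝ := fun j => f (Pi.single j 1) with haa
      have hfdec : ∀ u : Fin k → ℝ, f u = ∑ j, u j * a j := by
        intro u
        conv_lhs => rw [← Finset.univ_sum_single u]
        rw [map_sum]
        apply Finset.sum_congr rfl
        intro j _
        have hsingle : Pi.single j (u j) = u j • (Pi.single j (1:ℝ) : Fin k → ℝ) := by
          rw [← Pi.single_smul, smul_eq_mul, mul_one]
        rw [hsingle, map_smul, smul_eq_mul]
      have haz : ∀ j0, a j0 = 0 := by
        intro j0
        set Fl : ((Fin n → ℝ) × W) →ₗ[ℝ] ℝ :=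
          ∑ j : Fin k, a j • ((LinearMap.proj (σ j)).comp
            (LinearMap.fst ℝ (Fin n → ℝ) W)) with hFl
        have hFlapp : ∀ e : (Fin n → ℝ) × W, Fl e = ∑ j, a j * e.1 (σ j) := by
          intro e
          rw [hFl, LinearMap.sum_apply]
          apply Finset.sum_congr rfl
          intro j _
          simp
        have hFlN : ∀ v, (hv : v ∈ N) → Fl v = 0 := by
          intro v hv
          have h1 : Fl v = f (G ⟨v, hv⟩) := by
            rw [hfdec, hFlapp]
            apply Finset.sum_congr rfl
            intro j _
            rw [hGapp]
            ring
          rw [h1, hfR _ (LinearMap.mem_range_self _ _)]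
        have hFlP : ∀ m ∈ Nperp, Fl m = 0 := by
          intro m hm
          rw [hFlapp]
          apply Finset.sum_eq_zero
          intro j _
          rw [hvanish (σ j) (hσP j) m hm, mul_zero]
        have hFlall : ∀ e : (Fin n → ℝ) × W, Fl e = 0 := by
          intro e
          have : e ∈ N ⊔ Nperp := by rw [hcompl.sup_eq_top]; trivial
          obtain ⟨p, hp, q, hq, rfl⟩ := Submodule.mem_sup.1 this
          rw [map_add, hFlN p hp, hFlP q hq, add_zero]
        have hev := hFlall (Pi.single (σ j0) 1, 0)
        rw [hFlapp] at hev
        rw [Finset.sum_eq_single j0] at hev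
        · simpa using hev
        · intro b _ hb
          have : σ b ≠ σ j0 := fun h => hb (hσinj h)
          simp [Pi.single_eq_of_ne this]
        · intro hii; exact absurd (Finset.mem_univ j0) hii
      apply hfu
      rw [hfdec]
      simp [haz]
    exact key k G hGsurj hGC
end

section
/- Let N be a finite-dimensional linear subspace of E = ℝ^n × W admitting a closed linear subspace N⊥ with E = N ⊕ N⊥ (a topological direct sum) and N⊥ ⊆ C, i.e. N is neat with respect to the partial quadrant C = [0,∞)^n × W. Then N is in good position to C: N ∩ C has nonempty interior in N, and for all n ∈ N, m ∈ N⊥ with ‖m‖ ≤ ‖n‖ one has n + m ∈ C if and only if n ∈ C (so N⊥ is a good complement with constant c = 1); moreover C ∩ N is a partial quadrant in N. (Proposition 5.3.) -/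
open Module

/-- Auxiliary: if `p : N →ₗ ℝⁿ` is surjective on a finite-dimensional space `N`, then
`n ≤ finrank N` and there is a linear iso `φ : N ≃ Fin (finrank N) → ℝ` whose first `n`
coordinates are those of `p`. -/
lemma quadrant_aux {N : Type*} [AddCommGroup N] [Module ℝ N] [FiniteDimensional ℝ N]
    (n : ℕ) (p : N →ₗ[ℝ] (Fin n → ℝ)) (hp : Function.Surjective p) :
    n ≤ Module.finrank ℝ N ∧
      ∃ φ : N ≃ₗ[ℝ] (Fin (Module.finrank ℝ N) → ℝ),
        ∀ (x : N) (i : Fin (Module.finrank ℝ N)) (h : (i : ℕ) < n),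
          φ x i = p x ⟨i, h⟩ := by
  have hd : Module.finrank ℝ N = n + Module.finrank ℝ (LinearMap.ker p) := by
    have h1 := p.finrank_range_add_finrank_ker
    rw [LinearMap.range_eq_top.mpr hp, finrank_top, Module.finrank_fin_fun] at h1
    omega
  have hn : n ≤ Module.finrank ℝ N := by omega
  obtain ⟨s, hs⟩ := p.exists_rightInverse_of_surjective (LinearMap.range_eq_top.mpr hp)
  have hps : ∀ y, p (s y) = y := fun y => LinearMap.ext_iff.mp hs y
  -- projection to the kernel
  set q : N →ₗ[ℝ] LinearMap.ker p :=
    LinearMap.codRestrict (LinearMap.ker p) (LinearMap.id - s ∘ₗ p)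
      (fun x => by simp [LinearMap.mem_ker, hps]) with hq
  have hqval : ∀ x : N, (q x : N) = x - s (p x) := fun x => rfl
  set b := Module.finBasis ℝ (LinearMap.ker p) with hb
  set g : N →ₗ[ℝ] (Fin (Module.finrank ℝ N) → ℝ) :=
    LinearMap.pi (fun i : Fin (Module.finrank ℝ N) =>
      if h : (i : ℕ) < n then (LinearMap.proj (⟨i, h⟩ : Fin n)).comp p
      else (b.coord ⟨(i : ℕ) - n, by have := i.isLt; omega⟩).comp q) with hg
  have hgpos : ∀ (x : N) (i : Fin (Module.finrank ℝ N)) (h : (i : ℕ) < n),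
      g x i = p x ⟨i, h⟩ := by
    intro x i h
    simp only [hg, LinearMap.pi_apply, dif_pos h]
    rfl
  have hgneg : ∀ (x : N) (i : Fin (Module.finrank ℝ N)) (h : ¬ (i : ℕ) < n),
      g x i = b.coord ⟨(i : ℕ) - n, by have := i.isLt; omega⟩ (q x) := by
    intro x i h
    simp only [hg, LinearMap.pi_apply, dif_neg h]
    rfl
  have hinj : Function.Injective g := by
    rw [← LinearMap.ker_eq_bot]
    apply (Submodule.eq_bot_iff _).mpr
    intro x hx
    rw [LinearMap.mem_ker] at hx
    have hpx : p x = 0 := by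
      funext j
      have := congrFun hx (Fin.castLE hn j)
      rw [hgpos x _ (by simpa using j.isLt)] at this
      simpa using this
    have hqx : (q x : N) = 0 := by
      have : ∀ l, b.coord l (q x) = 0 := by
        intro l
        have hl : n + (l : ℕ) < Module.finrank ℝ N := by have := l.isLt; omega
        have := congrFun hx ⟨n + (l : ℕ), hl⟩
        rw [hgneg x ⟨n + (l : ℕ), hl⟩ (by simp)] at this
        simp only [Pi.zero_apply] at this
        convert this using 3
        exact Fin.ext (by simp)
      have h0 : q x = 0 := (Basis.forall_coord_eq_zero_iff _).mp this
      rw [h0]; rfl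
    rw [hqval, hpx, map_zero, sub_zero] at hqx
    exact hqx
  refine ⟨hn, g.linearEquivOfInjective hinj (by rw [Module.finrank_fin_fun]), ?_⟩
  intro x i h
  rw [LinearMap.linearEquivOfInjective_apply]
  exact hgpos x i h

/-- Proposition 5.3: a neat finite-dimensional subspace is in good position
to the partial quadrant `C = [0,∞)^n × W`, with good complement constant `c = 1`, and
`C ∩ N` is a partial quadrant in `N`. -/
theorem neat_implies_good_position
    (n : ℕ) (W : Type*) [NormedAddCommGroup W] [NormedSpace ℝ W] [CompleteSpace W]
    (C : Set ((Fin n → ℝ) × W)) (hC : C = {p : (Fin n → ℝ) × W | ∀ i : Fin n, 0 ≤ p.1 i})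
    (N Nperp : Submodule ℝ ((Fin n → ℝ) × W)) [FiniteDimensional ℝ N]
    (hclosed : IsClosed (Nperp : Set ((Fin n → ℝ) × W)))
    (hcompl : IsCompl N Nperp)
    -- neatness: N⊥ ⊆ C
    (hneat : (Nperp : Set ((Fin n → ℝ) × W)) ⊆ C) :
    -- N ∩ C has nonempty interior in N
    (∃ x, x ∈ N ∧ x ∈ C ∧ ∃ ε > 0, ∀ y ∈ N, ‖y - x‖ < ε → y ∈ C) ∧
    -- N⊥ is a good complement with constant c = 1
    (∀ v ∈ N, ∀ m ∈ Nperp, ‖m‖ ≤ ‖v‖ → ((v + m ∈ C) ↔ v ∈ C)) ∧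
    -- C ∩ N is a partial quadrant in N
    (∃ k : ℕ, k ≤ Module.finrank ℝ N ∧
      ∃ φ : N ≃ₗ[ℝ] (Fin (Module.finrank ℝ N) → ℝ),
        ∀ x : N, (x : (Fin n → ℝ) × W) ∈ C ↔
          ∀ i : Fin (Module.finrank ℝ N), (i : ℕ) < k → 0 ≤ φ x i) := by
  -- Every element of Nperp has vanishing first component.
  have hperp1 : ∀ m ∈ Nperp, (m : (Fin n → ℝ) × W).1 = 0 := by
    intro m hm
    funext i
    have h1 : 0 ≤ m.1 i := by have := hneat hm; rw [hC] at this; exact this i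
    have h2 : 0 ≤ (-m).1 i := by
      have := hneat (Nperp.neg_mem hm); rw [hC] at this; exact this i
    simp only [Prod.fst_neg, Pi.neg_apply, neg_nonneg] at h2
    exact le_antisymm h2 h1
  -- Decomposition: every element of E is a sum of elements of N and Nperp.
  have hdec : ∀ e : (Fin n → ℝ) × W, ∃ a ∈ N, ∃ b ∈ Nperp, a + b = e := by
    intro e
    have he : e ∈ N ⊔ Nperp := by rw [hcompl.codisjoint.eq_top]; trivial
    exact Submodule.mem_sup.mp he
  -- The first projection restricted to N is surjective.
  set p : N →ₗ[ℝ] (Fin n → ℝ) := (LinearMap.fst ℝ (Fin n → ℝ) W).comp N.subtype with hp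
  have hsurj : Function.Surjective p := by
    intro y
    obtain ⟨a, ha, b, hb, hab⟩ := hdec (y, 0)
    refine ⟨⟨a, ha⟩, ?_⟩
    have h1 : a.1 + b.1 = y := congrArg Prod.fst hab
    rw [hperp1 b hb, add_zero] at h1
    exact h1
  constructor
  · -- nonempty interior
    obtain ⟨⟨a, ha⟩, hap⟩ := hsurj (fun _ => 1)
    have ha1 : a.1 = fun _ => 1 := hap
    refine ⟨a, ha, ?_, 1, one_pos, ?_⟩
    · rw [hC]; intro i; rw [ha1]; norm_num
    · intro y _ hy
      rw [hC]
      intro i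
      have h1 : |(y - a).1 i| ≤ ‖y - a‖ :=
        le_trans (norm_le_pi_norm (y - a).1 i) (norm_fst_le (y - a))
      have h2 : (y - a).1 i = y.1 i - 1 := by
        simp [Prod.fst_sub, ha1]
      rw [h2] at h1
      have := abs_le.mp (le_of_lt (lt_of_le_of_lt h1 hy))
      linarith [this.1]
  constructor
  · -- good complement with c = 1
    intro v _ m hm _
    rw [hC]
    have h1 : (v + m).1 = v.1 := by
      rw [Prod.fst_add, hperp1 m hm, add_zero]
    constructor
    · intro h i; have := h i; rwa [h1] at this
    · intro h i; rw [h1]; exact h i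
  · -- partial quadrant
    obtain ⟨hn, φ, hφ⟩ := quadrant_aux n p hsurj
    refine ⟨n, hn, φ, ?_⟩
    intro x
    rw [hC]
    constructor
    · intro h i hi
      rw [hφ x i hi]
      exact h ⟨i, hi⟩
    · intro h j
      have hj : ((Fin.castLE hn j : Fin (Module.finrank ℝ N)) : ℕ) < n := by
        simpa using j.isLt
      have := h (Fin.castLE hn j) hj
      rw [hφ x _ hj] at this
      convert this using 2
      rfl
end

section
/- Let P be a closed convex cone in a finite-dimensional real normed vector space N, with P ≠ {0}. Then P is the closed convex hull of the union of its extreme rays. (Lemma 5.4, a cone version of the Krein–Milman theorem.) -/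
open Pointwise

/-- An extreme ray of a cone `P`: the ray `[0,∞)·x` generated by a nonzero `x ∈ P` such that
every `y ∈ P` with `x - y ∈ P` belongs to the ray. -/
def IsExtremeRay {N : Type*} [AddCommGroup N] [Module ℝ N] (P R : Set N) : Prop :=
  ∃ x, x ∈ P ∧ x ≠ 0 ∧ R = {y | ∃ t : ℝ, 0 ≤ t ∧ y = t • x} ∧
    ∀ y ∈ P, x - y ∈ P → y ∈ R

section Aux

open Set

variable {N : Type*} [NormedAddCommGroup N] [NormedSpace ℝ N] [FiniteDimensional ℝ N]

/-- Convex hull of a compact set is compact in finite dimensions. -/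
lemma aux_isCompact_convexHull {S : Set N} (hS : IsCompact S) :
    IsCompact (convexHull ℝ S) := by
  rcases S.eq_empty_or_nonempty with rfl | ⟨s₀, hs₀⟩
  · simp
  set d := Module.finrank ℝ N + 1 with hd
  set φ : (Fin d → ℝ) × (Fin d → N) → N := fun p => ∑ i, p.1 i • p.2 i with hφ
  have hcont : Continuous φ := by fun_prop
  have hT : IsCompact ((stdSimplex ℝ (Fin d)) ×ˢ (Set.univ.pi fun _ : Fin d => S)) :=
    (isCompact_stdSimplex (𝕜 := ℝ) (ι := Fin d)).prod (isCompact_univ_pi fun _ => hS)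
  have himg : convexHull ℝ S =
      φ '' ((stdSimplex ℝ (Fin d)) ×ˢ (Set.univ.pi fun _ : Fin d => S)) := by
    apply Set.Subset.antisymm
    · intro x hx
      obtain ⟨ι, hfin, z, w, hzS, hai, hw0, hw1, hxx⟩ :=
        eq_pos_convex_span_of_mem_convexHull hx
      have hcard : Fintype.card ι ≤ d := by
        refine hai.card_le_finrank_succ.trans ?_
        have := Submodule.finrank_le (vectorSpan ℝ (Set.range z))
        omega
      obtain ⟨g⟩ : Nonempty (ι ↪ Fin d) := by
        refine Function.Embedding.nonempty_of_card_le ?_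
        simpa using hcard
      classical
      set W : Fin d → ℝ := fun j => if h : ∃ i, g i = j then w h.choose else 0 with hW
      set Z : Fin d → N := fun j => if h : ∃ i, g i = j then z h.choose else s₀ with hZ
      have hkey : ∀ i : ι, W (g i) = w i ∧ Z (g i) = z i := by
        intro i
        have h : ∃ i', g i' = g i := ⟨i, rfl⟩
        have : h.choose = i := g.injective h.choose_spec
        constructor
        · simp only [hW, dif_pos h, this]
        · simp only [hZ, dif_pos h, this]
      have hsum : ∀ (F : Fin d → ℝ) (G : Fin d → N),
          True := fun _ _ => trivial
      have hmap : ∀ (f : Fin d → N), (∀ j ∉ Finset.univ.map g, f j = 0) →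
          ∑ j, f j = ∑ i, f (g i) := by
        intro f hf
        rw [← Finset.sum_subset (Finset.subset_univ (Finset.univ.map g)) (fun j _ hj => hf j hj),
          Finset.sum_map]
      have hmapR : ∀ (f : Fin d → ℝ), (∀ j ∉ Finset.univ.map g, f j = 0) →
          ∑ j, f j = ∑ i, f (g i) := by
        intro f hf
        rw [← Finset.sum_subset (Finset.subset_univ (Finset.univ.map g)) (fun j _ hj => hf j hj),
          Finset.sum_map]
      have hnotin : ∀ j : Fin d, j ∉ Finset.univ.map g → ¬ ∃ i, g i = j := by
        intro j hj ⟨i, hi⟩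
        exact hj (Finset.mem_map.2 ⟨i, Finset.mem_univ _, hi⟩)
      refine ⟨(W, Z), ⟨⟨fun j => ?_, ?_⟩, fun j _ => ?_⟩, ?_⟩
      · by_cases h : ∃ i, g i = j
        · rw [hW]; simp only [dif_pos h]; exact (hw0 _).le
        · rw [hW]; simp [dif_neg h]
      · rw [hmapR W (fun j hj => by rw [hW]; simp [dif_neg (hnotin j hj)])]
        rw [← hw1]
        exact Finset.sum_congr rfl fun i _ => (hkey i).1
      · by_cases h : ∃ i, g i = j
        · rw [hZ]; simp only [dif_pos h]; exact hzS ⟨_, rfl⟩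
        · rw [hZ]; simp only [dif_neg h]; exact hs₀
      · show ∑ j, W j • Z j = x
        rw [hmap (fun j => W j • Z j) (fun j hj => by
          rw [hW]; simp [dif_neg (hnotin j hj)])]
        rw [← hxx]
        exact Finset.sum_congr rfl fun i _ => by rw [(hkey i).1, (hkey i).2]
    · rintro _ ⟨⟨w, z⟩, ⟨⟨hw0, hw1⟩, hz⟩, rfl⟩
      exact (convex_convexHull ℝ S).sum_mem (fun i _ => hw0 i) hw1
        (fun i _ => subset_convexHull ℝ S (hz i (Set.mem_univ i)))
  rw [himg]
  exact hT.image hcont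

lemma aux_exists_functional {P : Set N} (hPclosed : IsClosed P) (hPconv : Convex ℝ P)
    (hPcone : ∀ t : ℝ, 0 ≤ t → ∀ x ∈ P, t • x ∈ P)
    (hPpointed : P ∩ (-P) = {0}) :
    ∃ (f : N →L[ℝ] ℝ) (c : ℝ), 0 < c ∧ ∀ x ∈ P, c * ‖x‖ ≤ f x := by
  have h0P : (0 : N) ∈ P := by
    have : (0 : N) ∈ ({0} : Set N) := rfl
    rw [← hPpointed] at this; exact this.1
  have hPadd : ∀ x ∈ P, ∀ y ∈ P, x + y ∈ P := by
    intro x hx y hy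
    have := hPconv hx hy (le_of_lt one_half_pos) (le_of_lt one_half_pos) (by norm_num)
    have h2 := hPcone 2 (by norm_num) _ this
    rwa [smul_add, smul_smul, smul_smul, show (2:ℝ) * (1/2) = 1 by norm_num, one_smul,
      one_smul] at h2
  set S : Set N := P ∩ Metric.sphere 0 1 with hSdef
  have hScomp : IsCompact S := (isCompact_sphere 0 1).inter_left hPclosed
  have hC : IsCompact (convexHull ℝ S) := aux_isCompact_convexHull hScomp
  have h0C : (0 : N) ∉ convexHull ℝ S := by
    intro h0
    obtain ⟨ι, hfin, z, w, hzS, hai, hw0, hw1, hxx⟩ := eq_pos_convex_span_of_mem_convexHull h0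
    have hne : Nonempty ι := by
      by_contra h
      rw [not_nonempty_iff] at h
      simp [Finset.univ_eq_empty] at hw1
    obtain ⟨i₀⟩ := hne
    classical
    have hsplit : w i₀ • z i₀ + ∑ i ∈ Finset.univ.erase i₀, w i • z i = 0 := by
      rw [Finset.add_sum_erase _ (fun i => w i • z i) (Finset.mem_univ i₀)]; exact hxx
    have hmemP : ∀ i : ι, w i • z i ∈ P := fun i =>
      hPcone _ (hw0 i).le _ (hzS ⟨i, rfl⟩).1
    have hrest : ∑ i ∈ Finset.univ.erase i₀, w i • z i ∈ P := by
      refine Finset.sum_induction _ (· ∈ P) (fun a b ha hb => hPadd a ha b hb) h0P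
        (fun i _ => hmemP i)
    have hneg : w i₀ • z i₀ ∈ -P := by
      rw [Set.mem_neg, neg_eq_of_add_eq_zero_right hsplit]
      exact hrest
    have : w i₀ • z i₀ = 0 := by
      have := Set.mem_of_mem_of_subset (Set.mem_inter (hmemP i₀) hneg) hPpointed.le
      simpa using this
    have hz0 : z i₀ = 0 := by
      rcases smul_eq_zero.1 this with h | h
      · exact absurd h (hw0 i₀).ne'
      · exact h
    have := (hzS ⟨i₀, rfl⟩).2
    rw [hz0] at this
    simp at this
  obtain ⟨f, u, hfu, hu0⟩ := geometric_hahn_banach_closed_point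
    (convex_convexHull ℝ S) hC.isClosed h0C
  rw [map_zero] at hu0
  refine ⟨-f, -u, by linarith, ?_⟩
  intro x hx
  rcases eq_or_ne x 0 with rfl | hx0
  · simp
  · have hnx : ‖x‖ ≠ 0 := norm_ne_zero_iff.2 hx0
    have hxu : ‖x‖⁻¹ • x ∈ S := by
      refine ⟨hPcone _ (by positivity) _ hx, ?_⟩
      simp [norm_smul, abs_of_nonneg (inv_nonneg.2 (norm_nonneg x)), inv_mul_cancel₀ hnx]
    have := hfu _ (subset_convexHull ℝ S hxu)
    rw [map_smul, smul_eq_mul] at this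
    have h1 : -u * ‖x‖ ≤ -(‖x‖⁻¹ * f x) * ‖x‖ := by
      nlinarith [norm_nonneg x, norm_pos_iff.2 hx0]
    calc -u * ‖x‖ ≤ -(‖x‖⁻¹ * f x) * ‖x‖ := h1
      _ = -f x * (‖x‖⁻¹ * ‖x‖) := by ring
      _ = (-f) x := by rw [inv_mul_cancel₀ hnx]; simp

end Aux

/-- Lemma 5.4, a cone version of the Krein–Milman theorem: a closed convex
cone `P ≠ {0}` in a finite-dimensional real normed space is the closed convex hull of the
union of its extreme rays. -/
theorem cone_krein_milman
    (N : Type*) [NormedAddCommGroup N] [NormedSpace ℝ N] [FiniteDimensional ℝ N]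
    (P : Set N) (hPclosed : IsClosed P) (hPconv : Convex ℝ P)
    (hPcone : ∀ t : ℝ, 0 ≤ t → ∀ x ∈ P, t • x ∈ P)
    (hPpointed : P ∩ (-P) = {0})
    (hPne : P ≠ {0}) :
    P = closure (convexHull ℝ {y | ∃ R : Set N, IsExtremeRay P R ∧ y ∈ R}) := by
  obtain ⟨f, c, hc, hf⟩ := aux_exists_functional hPclosed hPconv hPcone hPpointed
  have h0P : (0 : N) ∈ P := by
    have : (0 : N) ∈ ({0} : Set N) := rfl
    rw [← hPpointed] at this; exact this.1
  have hfpos : ∀ x ∈ P, x ≠ 0 → 0 < f x := fun x hx hx0 =>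
    lt_of_lt_of_le (mul_pos hc (norm_pos_iff.2 hx0)) (hf x hx)
  set E : Set N := {y | ∃ R : Set N, IsExtremeRay P R ∧ y ∈ R} with hE
  -- E ⊆ P
  have hEP : E ⊆ P := by
    rintro y ⟨R, ⟨x, hxP, hx0, hReq, -⟩, hyR⟩
    rw [hReq] at hyR
    obtain ⟨t, ht, rfl⟩ := hyR
    exact hPcone t ht x hxP
  -- E is a cone
  have hEcone : ∀ t : ℝ, 0 ≤ t → ∀ y ∈ E, t • y ∈ E := by
    rintro t ht y ⟨R, hR, hyR⟩
    obtain ⟨x, hxP, hx0, hReq, hext⟩ := hR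
    refine ⟨R, ⟨x, hxP, hx0, hReq, hext⟩, ?_⟩
    rw [hReq] at hyR ⊢
    obtain ⟨s, hs, rfl⟩ := hyR
    exact ⟨t * s, mul_nonneg ht hs, (smul_smul t s x)⟩

  -- The base B
  set B : Set N := {x ∈ P | f x = 1} with hB
  have hBconv : Convex ℝ B := by
    have : B = P ∩ {x | f x = 1} := rfl
    rw [this]
    exact hPconv.inter (convex_hyperplane ⟨f.map_add, f.map_smul⟩ 1)
  have hBclosed : IsClosed B := hPclosed.inter (isClosed_eq f.continuous continuous_const)
  have hBbdd : Bornology.IsBounded B := by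
    rw [isBounded_iff_forall_norm_le]
    refine ⟨c⁻¹, fun x hx => ?_⟩
    have h1 : c * ‖x‖ ≤ 1 := by rw [← hx.2]; exact hf x hx.1
    calc ‖x‖ = c⁻¹ * (c * ‖x‖) := by field_simp
      _ ≤ c⁻¹ * 1 := by
          have : (0:ℝ) ≤ c⁻¹ := by positivity
          exact mul_le_mul_of_nonneg_left h1 this
      _ = c⁻¹ := mul_one _
  have hBcomp : IsCompact B := Metric.isCompact_of_isClosed_isBounded hBclosed hBbdd
  -- membership in B from nonzero elements of P
  have hmemB : ∀ x ∈ P, x ≠ 0 → (f x)⁻¹ • x ∈ B := by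
    intro x hx hx0
    have hfx : 0 < f x := hfpos x hx hx0
    refine ⟨hPcone _ (by positivity) _ hx, ?_⟩
    rw [map_smul, smul_eq_mul, inv_mul_cancel₀ hfx.ne']
  -- extreme points of B lie in E, and generate extreme rays
  have hextE : B.extremePoints ℝ ⊆ E := by
    intro x hx
    rw [mem_extremePoints] at hx
    obtain ⟨⟨hxP, hfx1⟩, hxext⟩ := hx
    have hx0 : x ≠ 0 := by
      intro h; rw [h, map_zero] at hfx1; norm_num at hfx1
    have hray : ∀ y ∈ P, x - y ∈ P → y ∈ {y | ∃ t : ℝ, 0 ≤ t ∧ y = t • x} := by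
      intro y hy hxy
      rcases eq_or_ne y 0 with rfl | hy0
      · exact ⟨0, le_refl _, (zero_smul ℝ x).symm⟩
      rcases eq_or_ne (x - y) 0 with hz0 | hz0
      · exact ⟨1, zero_le_one, by rw [one_smul]; exact (sub_eq_zero.1 hz0).symm⟩
      · have hfy : 0 < f y := hfpos y hy hy0
        have hfz : 0 < f (x - y) := hfpos _ hxy hz0
        have hsum : f y + f (x - y) = 1 := by
          rw [← map_add]; simp [hfx1]
        have haB : (f y)⁻¹ • y ∈ B := hmemB y hy hy0
        have hbB : (f (x - y))⁻¹ • (x - y) ∈ B := hmemB _ hxy hz0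
        have hseg : x ∈ openSegment ℝ ((f y)⁻¹ • y) ((f (x - y))⁻¹ • (x - y)) := by
          refine ⟨f y, f (x - y), hfy, hfz, hsum, ?_⟩
          rw [smul_inv_smul₀ hfy.ne', smul_inv_smul₀ hfz.ne']
          abel
        obtain ⟨ha, -⟩ := hxext _ haB _ hbB hseg
        refine ⟨f y, hfy.le, ?_⟩
        rw [← ha, smul_inv_smul₀ hfy.ne']
    exact ⟨{y | ∃ t : ℝ, 0 ≤ t ∧ y = t • x}, ⟨x, hxP, hx0, rfl, hray⟩, 1, zero_le_one,
      (one_smul ℝ x).symm⟩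
  -- B is nonempty
  have hBne : B.Nonempty := by
    obtain ⟨p, hpP, hp0⟩ : ∃ p ∈ P, p ≠ 0 := by
      by_contra h
      push_neg at h
      apply hPne
      apply Set.Subset.antisymm
      · intro x hx
        rcases eq_or_ne x 0 with rfl | hx0
        · rfl
        · exact absurd hx0 (not_ne_iff.2 (h x hx))
      · rintro x rfl; exact h0P
    exact ⟨_, hmemB p hpP hp0⟩
  -- 0 ∈ E
  have h0E : (0 : N) ∈ E := by
    obtain ⟨x, hx⟩ := hBcomp.extremePoints_nonempty hBne
    obtain ⟨R, hR, -⟩ := hextE hx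
    obtain ⟨x', hx'P, hx'0, hReq, -⟩ := id hR
    exact ⟨R, hR, by rw [hReq]; exact ⟨0, le_refl _, (zero_smul ℝ x').symm⟩⟩
  -- Krein-Milman on B
  have hKM : closure (convexHull ℝ (B.extremePoints ℝ)) = B :=
    closure_convexHull_extremePoints hBcomp hBconv
  set Q := closure (convexHull ℝ E) with hQ
  apply Set.Subset.antisymm
  · intro x hx
    rcases eq_or_ne x 0 with rfl | hx0
    · exact subset_closure (subset_convexHull ℝ E h0E)
    · have hfx : 0 < f x := hfpos x hx hx0
      have hbB : (f x)⁻¹ • x ∈ B := hmemB x hx hx0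
      have hbQ : (f x)⁻¹ • x ∈ Q := by
        rw [← hKM] at hbB
        exact closure_mono (convexHull_mono hextE) hbB
      have hxQ : x ∈ (f x) • Q := ⟨_, hbQ, smul_inv_smul₀ hfx.ne' x⟩
      have hsub : (f x) • Q ⊆ Q := by
        rw [hQ, ← closure_smul₀ (f x) (convexHull ℝ E), ← convexHull_smul]
        apply closure_mono
        apply convexHull_mono
        rintro _ ⟨y, hy, rfl⟩
        exact hEcone _ hfx.le y hy
      exact hsub hxQ
  · exact closure_minimal (convexHull_min hEP hPconv) hPclosed
end

section
/- Let N be a finite-dimensional real vector space of dimension d and let P ⊆ N be a closed convex cone with nonempty interior. Then there exists a linear isomorphism of N onto ℝ^d mapping P onto the quadrant [0,∞)^d if and only if P has exactly d extreme rays. (Lemma 5.5.) -/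
open Pointwise

section AuxLemmas

open Set

set_option linter.unusedSectionVars false

variable {N : Type*} [NormedAddCommGroup N] [NormedSpace ℝ N] [FiniteDimensional ℝ N]
variable {P : Set N}

lemma isCompact_convexHull_of_isCompact {s : Set N} (hs : IsCompact s) :
    IsCompact (convexHull ℝ s) := by
  classical
  rcases s.eq_empty_or_nonempty with rfl | ⟨s₀, hs₀⟩
  · simp
  set n := Module.finrank ℝ N + 1 with hn
  set g : (Fin n → ℝ) × (Fin n → N) → N := fun p => ∑ i, p.1 i • p.2 i with hgdef
  set K : Set ((Fin n → ℝ) × (Fin n → N)) :=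
    (stdSimplex ℝ (Fin n)) ×ˢ (Set.univ.pi fun _ : Fin n => s) with hKdef
  have hK : IsCompact K :=
    (isCompact_stdSimplex _ _).prod (isCompact_univ_pi fun _ => hs)
  have hg : Continuous g := by
    apply continuous_finset_sum
    intro i _
    exact (continuous_apply i |>.comp continuous_fst).smul
      (continuous_apply i |>.comp continuous_snd)
  have himg : convexHull ℝ s = g '' K := by
    apply Subset.antisymm
    · intro x hx
      rw [convexHull_eq_union] at hx
      simp only [Set.mem_iUnion] at hx
      obtain ⟨t, hts, hai, hx⟩ := hx
      have hcard : t.card ≤ n := by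
        rcases Finset.eq_empty_or_nonempty t with rfl | ht
        · simp [hn]
        · have : Nonempty (↑t : Type _) := ht.to_subtype
          have h1 := hai.finrank_vectorSpan_add_one (k := ℝ)
          rw [Fintype.card_coe] at h1
          have h2 := Submodule.finrank_le (vectorSpan ℝ (Set.range ((↑) : t → N)))
          omega
      obtain ⟨e⟩ : Nonempty ((↑t : Type _) ↪ Fin n) := by
        apply Function.Embedding.nonempty_of_card_le
        rwa [Fintype.card_coe, Fintype.card_fin]
      rw [Finset.convexHull_eq] at hx
      obtain ⟨w₀, hw₀, hw₀sum, hx⟩ := hx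
      rw [Finset.centerMass_eq_of_sum_1 _ _ hw₀sum] at hx
      set w : Fin n → ℝ :=
        fun j => if h : ∃ y : (↑t : Type _), e y = j then w₀ (h.choose : N) else 0 with hwdef
      set v : Fin n → N :=
        fun j => if h : ∃ y : (↑t : Type _), e y = j then (h.choose : N) else s₀ with hvdef
      set A : Finset (Fin n) := Finset.univ.map e with hA
      have hmemA : ∀ j, j ∈ A ↔ ∃ y : (↑t : Type _), e y = j := by
        intro j; simp [hA]
      have hwe : ∀ y : (↑t : Type _), w (e y) = w₀ (y : N) := by
        intro y
        have h : ∃ y' : (↑t : Type _), e y' = e y := ⟨y, rfl⟩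
        have hy : h.choose = y := e.injective h.choose_spec
        simp only [hwdef]
        rw [dif_pos h, hy]
      have hve : ∀ y : (↑t : Type _), v (e y) = (y : N) := by
        intro y
        have h : ∃ y' : (↑t : Type _), e y' = e y := ⟨y, rfl⟩
        have hy : h.choose = y := e.injective h.choose_spec
        simp only [hvdef]
        rw [dif_pos h, hy]
      have hsumR : ∀ (F : Fin n → ℝ),
          (∀ j, j ∉ A → F j = 0) → ∑ j, F j = ∑ y : (↑t : Type _), F (e y) := by
        intro F hF
        rw [← Finset.sum_subset (Finset.subset_univ A) (fun j _ hj => hF j hj), hA,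
          Finset.sum_map]
      have hsumN : ∀ (F : Fin n → N),
          (∀ j, j ∉ A → F j = 0) → ∑ j, F j = ∑ y : (↑t : Type _), F (e y) := by
        intro F hF
        rw [← Finset.sum_subset (Finset.subset_univ A) (fun j _ hj => hF j hj), hA,
          Finset.sum_map]
      refine ⟨⟨w, v⟩, ⟨⟨fun j => ?_, ?_⟩, fun j _ => ?_⟩, ?_⟩
      · simp only [hwdef]
        by_cases h : ∃ y : (↑t : Type _), e y = j
        · rw [dif_pos h]; exact hw₀ _ h.choose.2
        · rw [dif_neg h]
      · have : ∀ j, j ∉ A → w j = 0 := by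
          intro j hj
          rw [hwdef]
          exact dif_neg (fun h => hj ((hmemA j).2 h))
        calc ∑ j, w j = ∑ y : (↑t : Type _), w (e y) := hsumR w this
          _ = ∑ y : (↑t : Type _), w₀ (y : N) := by simp [hwe]
          _ = 1 := by rw [Finset.sum_coe_sort t (fun y => w₀ y)]; exact hw₀sum
      · simp only [hvdef]
        by_cases h : ∃ y : (↑t : Type _), e y = j
        · rw [dif_pos h]; exact hts h.choose.2
        · rw [dif_neg h]; exact hs₀
      · have hz : ∀ j, j ∉ A → w j • v j = 0 := by
          intro j hj
          have : w j = 0 := by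
            rw [hwdef]; exact dif_neg (fun h => hj ((hmemA j).2 h))
          simp [this]
        calc g (w, v) = ∑ j, w j • v j := rfl
          _ = ∑ y : (↑t : Type _), w (e y) • v (e y) := hsumN _ hz
          _ = ∑ y : (↑t : Type _), w₀ (y : N) • (y : N) := by
              simp only [hwe, hve]
          _ = ∑ y ∈ t, w₀ y • y := Finset.sum_coe_sort t (fun y => w₀ y • y)
          _ = x := hx
    · rintro x ⟨⟨w, v⟩, ⟨hw, hv⟩, rfl⟩
      exact (convex_convexHull ℝ s).sum_mem (fun i _ => hw.1 i) hw.2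
        (fun i _ => subset_convexHull ℝ s (hv i trivial))
  rw [himg]
  exact hK.image hg

lemma cone_add_mem' (hPconv : Convex ℝ P)
    (hPcone : ∀ t : ℝ, 0 ≤ t → ∀ x ∈ P, t • x ∈ P) :
    ∀ a ∈ P, ∀ b ∈ P, a + b ∈ P := by
  intro a ha b hb
  have h := hPconv ha hb (by norm_num : (0:ℝ) ≤ 1/2) (by norm_num : (0:ℝ) ≤ 1/2) (by norm_num)
  have h2 := hPcone 2 (by norm_num) _ h
  have : (2:ℝ) • ((1/2:ℝ) • a + (1/2:ℝ) • b) = a + b := by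
    rw [smul_add, smul_smul, smul_smul]; norm_num
  rwa [this] at h2

lemma cone_sum_mem' (hadd : ∀ a ∈ P, ∀ b ∈ P, a + b ∈ P) (h0 : (0:N) ∈ P)
    {ι : Type*} [DecidableEq ι] (t : Finset ι) (g : ι → N) (hg : ∀ i ∈ t, g i ∈ P) :
    ∑ i ∈ t, g i ∈ P := by
  induction t using Finset.induction with
  | empty => simpa
  | @insert a s hx ih =>
    rw [Finset.sum_insert hx]
    exact hadd _ (hg a (Finset.mem_insert_self a s)) _
      (ih fun i hi => hg i (Finset.mem_insert_of_mem hi))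

lemma exists_pos_functional (hPclosed : IsClosed P) (hPconv : Convex ℝ P)
    (hPcone : ∀ t : ℝ, 0 ≤ t → ∀ x ∈ P, t • x ∈ P)
    (hPpointed : P ∩ (-P) = {0}) :
    ∃ (f : N →L[ℝ] ℝ) (c : ℝ), 0 < c ∧ ∀ x ∈ P, c * ‖x‖ ≤ f x := by
  classical
  set S : Set N := P ∩ Metric.sphere (0:N) 1 with hSdef
  set C : Set N := convexHull ℝ S with hCdef
  have hCcomp : IsCompact C :=
    isCompact_convexHull_of_isCompact ((isCompact_sphere (0:N) 1).inter_left hPclosed)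
  have hadd := cone_add_mem' hPconv hPcone
  have h0C : (0:N) ∉ C := by
    intro h0
    rw [hCdef, convexHull_eq] at h0
    obtain ⟨ι, t, w, z, hw, hwsum, hz, hcm⟩ := h0
    rw [Finset.centerMass_eq_of_sum_1 _ _ hwsum] at hcm
    have h0P : (0:N) ∈ P := by
      obtain ⟨i, hi, hwi⟩ : ∃ i ∈ t, w i ≠ 0 := by
        by_contra h
        push_neg at h
        rw [Finset.sum_eq_zero h] at hwsum
        norm_num at hwsum
      have := hPcone 0 le_rfl _ (hz i hi).1
      simpa using this
    obtain ⟨i, hi, hwi⟩ : ∃ i ∈ t, 0 < w i := by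
      by_contra h
      push_neg at h
      have : ∑ i ∈ t, w i ≤ 0 := Finset.sum_nonpos fun i hi => h i hi
      rw [hwsum] at this; norm_num at this
    have hrest : ∑ j ∈ t.erase i, w j • z j ∈ P := by
      apply cone_sum_mem' hadd h0P
      intro j hj
      exact hPcone _ (hw j (Finset.mem_of_mem_erase hj)) _ (hz j (Finset.mem_of_mem_erase hj)).1
    have hsplit : w i • z i + ∑ j ∈ t.erase i, w j • z j = 0 := by
      rw [Finset.add_sum_erase _ (fun j => w j • z j) hi]; exact hcm
    have hmem : w i • z i ∈ P ∩ (-P) := by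
      constructor
      · exact hPcone _ hwi.le _ (hz i hi).1
      · rw [Set.mem_neg]
        rw [← eq_neg_of_add_eq_zero_right hsplit]
        exact hrest
    rw [hPpointed, Set.mem_singleton_iff, smul_eq_zero] at hmem
    rcases hmem with h | h
    · exact hwi.ne' h
    · have := (hz i hi).2
      rw [h, mem_sphere_iff_norm] at this
      simp at this
  obtain ⟨f, u, hfu, hu⟩ :=
    geometric_hahn_banach_point_closed (convex_convexHull ℝ S) hCcomp.isClosed h0C
  have hu0 : 0 < u := by simpa using hfu
  refine ⟨f, u, hu0, fun x hx => ?_⟩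
  rcases eq_or_ne x 0 with rfl | hx0
  · simp
  have hxn : (0:ℝ) < ‖x‖ := norm_pos_iff.2 hx0
  have hxS : ‖x‖⁻¹ • x ∈ S := by
    refine ⟨hPcone _ (by positivity) _ hx, ?_⟩
    rw [mem_sphere_iff_norm, sub_zero, norm_smul, norm_inv, norm_norm]
    field_simp
  have := hu _ (subset_convexHull ℝ S hxS)
  rw [map_smul, smul_eq_mul] at this
  have h1 : u < ‖x‖⁻¹ * f x := this
  have h2 := mul_lt_mul_of_pos_left h1 hxn
  rw [← mul_assoc, mul_inv_cancel₀ hxn.ne', one_mul] at h2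
  nlinarith

omit [FiniteDimensional ℝ N] in
lemma ray_eq_of_pos_smul {x e : N} {c : ℝ} (hc : 0 < c) (hx : x = c • e) :
    {y | ∃ t : ℝ, 0 ≤ t ∧ y = t • x} = {y | ∃ t : ℝ, 0 ≤ t ∧ y = t • e} := by
  ext y
  constructor
  · rintro ⟨t, ht, rfl⟩
    exact ⟨t * c, by positivity, by rw [hx, smul_smul]⟩
  · rintro ⟨t, ht, rfl⟩
    refine ⟨t / c, by positivity, ?_⟩
    rw [hx, smul_smul, div_mul_cancel₀ _ hc.ne']

lemma forward_count
    (φ : N ≃ₗ[ℝ] (Fin (Module.finrank ℝ N) → ℝ))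
    (hφ : ∀ x : N, x ∈ P ↔ ∀ i, 0 ≤ φ x i) :
    {R : Set N | IsExtremeRay P R}.ncard = Module.finrank ℝ N := by
  classical
  rcases Nat.eq_zero_or_pos (Module.finrank ℝ N) with hd0 | hdpos
  · have : Subsingleton (Fin (Module.finrank ℝ N) → ℝ) := by rw [hd0]; infer_instance
    have hsub : Subsingleton N := φ.toEquiv.subsingleton
    have hempty : {R : Set N | IsExtremeRay P R} = ∅ := by
      ext R
      simp only [mem_setOf_eq, mem_empty_iff_false, iff_false]
      rintro ⟨x, _, hx0, _⟩
      exact hx0 (Subsingleton.elim x 0)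
    rw [hempty, Set.ncard_empty, hd0]
  set e : Fin (Module.finrank ℝ N) → N := fun i => φ.symm (Pi.single i 1) with he
  set r : Fin (Module.finrank ℝ N) → Set N :=
    fun i => {y | ∃ t : ℝ, 0 ≤ t ∧ y = t • e i} with hr
  have he_coord : ∀ i, φ (e i) = Pi.single i 1 := fun i => φ.apply_symm_apply _
  have hssubs : {R : Set N | IsExtremeRay P R} = Set.range r := by
    ext R
    simp only [mem_setOf_eq, Set.mem_range]
    constructor
    · rintro ⟨x, hxP, hx0, hR, hext⟩
      have hu0 : φ x ≠ 0 := fun h => hx0 (by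
        have := congrArg φ.symm h
        simpa using this)
      obtain ⟨i, hi⟩ : ∃ i, φ x i ≠ 0 := Function.ne_iff.1 hu0
      have hui : 0 < φ x i := lt_of_le_of_ne ((hφ x).1 hxP i) (Ne.symm hi)
      set y := φ.symm (Pi.single i (φ x i)) with hy
      have hyc : φ y = Pi.single i (φ x i) := φ.apply_symm_apply _
      have hyP : y ∈ P := by
        rw [hφ y, hyc]
        intro j
        rcases eq_or_ne j i with rfl | hji
        · simp [hui.le]
        · simp [Pi.single_apply, hji]
      have hxyP : x - y ∈ P := by
        rw [hφ]
        intro j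
        rw [map_sub, Pi.sub_apply, hyc]
        rcases eq_or_ne j i with rfl | hji
        · simp
        · simp only [Pi.single_apply]
          rw [if_neg hji]
          simpa using (hφ x).1 hxP j
      have hyR := hext y hyP hxyP
      rw [hR] at hyR
      obtain ⟨t, ht, hyt⟩ := hyR
      have hut : Pi.single i (φ x i) = t • φ x := by
        rw [← hyc, hyt, map_smul]
      have ht1 : t = 1 := by
        have h1 := congrFun hut i
        simp only [Pi.single_eq_same, Pi.smul_apply, smul_eq_mul] at h1
        field_simp at h1
        nlinarith [hui]
      rw [ht1, one_smul] at hut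
      have hx_eq : x = (φ x i) • e i := by
        have hsingle : (Pi.single i (φ x i) : Fin (Module.finrank ℝ N) → ℝ)
            = (φ x i) • (Pi.single i 1 : Fin (Module.finrank ℝ N) → ℝ) := by
          rw [← Pi.single_smul, smul_eq_mul, mul_one]
        apply φ.injective
        rw [map_smul, he_coord, ← hsingle]
        exact hut.symm
      exact ⟨i, by rw [hR, ray_eq_of_pos_smul hui hx_eq]⟩
    · rintro ⟨i, rfl⟩
      refine ⟨e i, ?_, ?_, rfl, ?_⟩
      · rw [hφ]
        intro j
        rw [he_coord]
        rcases eq_or_ne j i with rfl | hji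
        · simp
        · simp [Pi.single_apply, hji]
      · intro h
        have h1 := congrFun (congrArg φ (h : e i = 0)) i
        rw [he_coord] at h1
        simp at h1
      · intro y hyP hxyP
        have hy0 : ∀ j, j ≠ i → φ y j = 0 := by
          intro j hji
          have h1 := (hφ y).1 hyP j
          have h2 := (hφ _).1 hxyP j
          rw [map_sub, Pi.sub_apply, he_coord] at h2
          have h3 : (Pi.single i (1:ℝ) : Fin (Module.finrank ℝ N) → ℝ) j = 0 := by
            simp [Pi.single_apply, hji]
          rw [h3] at h2
          linarith
        refine ⟨φ y i, (hφ y).1 hyP i, ?_⟩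
        apply φ.injective
        rw [map_smul, he_coord]
        ext j
        rcases eq_or_ne j i with rfl | hji
        · simp
        · simp [Pi.single_apply, hji, hy0 j hji]
  have hrinj : Function.Injective r := by
    intro i j hij
    have hei : e i ∈ r i := ⟨1, zero_le_one, (one_smul ℝ _).symm⟩
    rw [hij] at hei
    obtain ⟨t, ht, hei⟩ := hei
    have h1 := congrFun (congrArg φ hei) i
    rw [he_coord, map_smul, he_coord] at h1
    by_contra hne
    rw [Pi.single_eq_same, Pi.smul_apply, Pi.single_apply, if_neg hne] at h1
    simp at h1
  rw [hssubs, ← Set.image_univ, Set.ncard_image_of_injective _ hrinj, Set.ncard_univ,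
    Nat.card_eq_fintype_card, Fintype.card_fin]

theorem backward_dir
    (hPclosed : IsClosed P) (hPconv : Convex ℝ P)
    (hPcone : ∀ t : ℝ, 0 ≤ t → ∀ x ∈ P, t • x ∈ P)
    (hPpointed : P ∩ (-P) = {0})
    (hPint : (interior P).Nonempty)
    (hcount : {R : Set N | IsExtremeRay P R}.ncard = Module.finrank ℝ N) :
    ∃ φ : N ≃ₗ[ℝ] (Fin (Module.finrank ℝ N) → ℝ),
        ∀ x : N, x ∈ P ↔ ∀ i, 0 ≤ φ x i := by
  classical
  have h0P : (0:N) ∈ P := by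
    obtain ⟨x, hx⟩ := hPint
    simpa using hPcone 0 le_rfl x (interior_subset hx)
  rcases Nat.eq_zero_or_pos (Module.finrank ℝ N) with hd0 | hdpos
  · refine ⟨LinearEquiv.ofFinrankEq _ _ (by simp), fun x => ?_⟩
    have hsub : Subsingleton N := (Module.finrank_zero_iff (R := ℝ) (M := N)).1 hd0
    constructor
    · intro _ i
      exact (i.cast hd0).elim0
    · intro _
      rw [Subsingleton.elim x 0]
      exact h0P
  -- positive functional and compact base
  obtain ⟨f, c, hc, hfc⟩ := exists_pos_functional hPclosed hPconv hPcone hPpointed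
  have hfpos : ∀ x ∈ P, x ≠ 0 → 0 < f x := fun x hx hx0 =>
    lt_of_lt_of_le (mul_pos hc (norm_pos_iff.2 hx0)) (hfc x hx)
  have hfnonneg : ∀ x ∈ P, 0 ≤ f x := by
    intro x hx
    rcases eq_or_ne x 0 with rfl | hx0
    · simp
    · exact (hfpos x hx hx0).le
  set B : Set N := P ∩ {x | f x = 1} with hBdef
  have hBconv : Convex ℝ B := hPconv.inter (convex_hyperplane ⟨f.map_add, f.map_smul⟩ 1)
  have hBcomp : IsCompact B := by
    rw [Metric.isCompact_iff_isClosed_bounded]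
    refine ⟨hPclosed.inter (isClosed_eq f.continuous continuous_const), ?_⟩
    rw [Metric.isBounded_iff_subset_closedBall 0]
    refine ⟨c⁻¹, fun x hx => ?_⟩
    have h1 := hfc x hx.1
    rw [hx.2] at h1
    have h2 : c⁻¹ * (c * ‖x‖) ≤ c⁻¹ * 1 := mul_le_mul_of_nonneg_left h1 (inv_pos.2 hc).le
    rw [← mul_assoc, inv_mul_cancel₀ hc.ne', one_mul, mul_one] at h2
    rw [Metric.mem_closedBall, dist_zero_right]
    exact h2
  -- every extreme point of B spans an extreme ray of P
  set ρ : N → Set N := fun z => {y | ∃ t : ℝ, 0 ≤ t ∧ y = t • z} with hρ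
  have hextreme : ∀ z ∈ B.extremePoints ℝ, IsExtremeRay P (ρ z) := by
    intro z hz
    obtain ⟨⟨hzP, hzf⟩, hzext⟩ := hz
    have hzf : f z = 1 := hzf
    have hz0 : z ≠ 0 := by
      rintro rfl
      simp at hzf
    refine ⟨z, hzP, hz0, rfl, ?_⟩
    intro y hyP hzyP
    have hs0 : 0 ≤ f y := hfnonneg y hyP
    have hs1 : f y ≤ 1 := by
      have := hfnonneg _ hzyP
      rw [map_sub, hzf] at this
      linarith
    rcases eq_or_lt_of_le hs0 with h0 | hspos
    · have hy0 : y = 0 := by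
        by_contra hy0
        exact absurd h0.symm (hfpos y hyP hy0).ne'
      exact ⟨0, le_rfl, by simp [hy0]⟩
    rcases eq_or_lt_of_le hs1 with h1 | hslt
    · have hzy0 : z - y = 0 := by
        by_contra h
        have := hfpos _ hzyP h
        rw [map_sub, hzf] at this
        linarith
      rw [sub_eq_zero] at hzy0
      exact ⟨1, zero_le_one, by rw [one_smul, hzy0]⟩
    · set y1 := (f y)⁻¹ • y with hy1
      set y2 := (1 - f y)⁻¹ • (z - y) with hy2
      have hy1B : y1 ∈ B := by
        refine ⟨hPcone _ (inv_pos.2 hspos).le _ hyP, ?_⟩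
        show f _ = 1
        rw [hy1, map_smul, smul_eq_mul, inv_mul_cancel₀ hspos.ne']
      have hy2B : y2 ∈ B := by
        refine ⟨hPcone _ (inv_pos.2 (by linarith)).le _ hzyP, ?_⟩
        show f _ = 1
        rw [hy2, map_smul, smul_eq_mul, map_sub, hzf, inv_mul_cancel₀ (by linarith)]
      have hseg : z ∈ openSegment ℝ y1 y2 := by
        refine ⟨f y, 1 - f y, hspos, by linarith, by ring, ?_⟩
        rw [hy1, hy2, smul_smul, smul_smul, mul_inv_cancel₀ hspos.ne',
          mul_inv_cancel₀ (by linarith : (1:ℝ) - f y ≠ 0), one_smul, one_smul]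
        abel
      have hy1z := hzext hy1B hy2B hseg
      refine ⟨f y, hs0, ?_⟩
      rw [← hy1z, hy1, smul_smul, mul_inv_cancel₀ hspos.ne', one_smul]
  -- the set of extreme rays is finite, extreme points are finite
  have hfin : {R : Set N | IsExtremeRay P R}.Finite := by
    by_contra h
    have h' : {R : Set N | IsExtremeRay P R}.Infinite := h
    rw [h'.ncard] at hcount
    omega
  have hinj : Set.InjOn ρ (B.extremePoints ℝ) := by
    intro z hz w hw hzw
    have hzB : z ∈ B := hz.1
    have hwB : w ∈ B := hw.1
    have hzρ : z ∈ ρ w := by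
      rw [← hzw]
      exact ⟨1, zero_le_one, (one_smul ℝ z).symm⟩
    obtain ⟨t, ht, hzt⟩ := hzρ
    have : f z = t * f w := by rw [hzt, map_smul, smul_eq_mul]
    rw [hzB.2, hwB.2, mul_one] at this
    rw [hzt, ← this, one_smul]
  have hEfin : (B.extremePoints ℝ).Finite := by
    refine Set.Finite.of_finite_image (hfin.subset ?_) hinj
    rintro _ ⟨z, hz, rfl⟩
    exact hextreme z hz
  -- Krein-Milman / Minkowski
  have hB_eq : B = convexHull ℝ (B.extremePoints ℝ) := by
    conv_lhs => rw [← closure_convexHull_extremePoints hBcomp hBconv]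
    exact (hEfin.isCompact_convexHull ℝ).isClosed.closure_eq
  -- choose generators
  have hgen : ∀ R : ↥{R : Set N | IsExtremeRay P R}, ∃ x, x ∈ P ∧ x ≠ 0 ∧
      (R : Set N) = {y | ∃ t : ℝ, 0 ≤ t ∧ y = t • x} ∧ ∀ y ∈ P, x - y ∈ P → y ∈ (R : Set N) :=
    fun R => R.2
  choose gen hgenP hgen0 hgenR hgenext using hgen
  have : Finite ↥{R : Set N | IsExtremeRay P R} := hfin.to_subtype
  have hcard : Nat.card ↥{R : Set N | IsExtremeRay P R} = Module.finrank ℝ N := by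
    rw [Nat.card_coe_set_eq, hcount]
  have hfintype : Fintype ↥{R : Set N | IsExtremeRay P R} := hfin.fintype
  have hcard' : Fintype.card ↥{R : Set N | IsExtremeRay P R} = Module.finrank ℝ N := by
    rw [← Nat.card_eq_fintype_card, hcard]
  set eqv := Fintype.equivFinOfCardEq hcard' with heqv
  set v : Fin (Module.finrank ℝ N) → N := fun i => gen (eqv.symm i) with hv
  -- every extreme point lies on a generator ray
  have hzrep : ∀ z ∈ B.extremePoints ℝ, ∃ i, ∃ t : ℝ, 0 ≤ t ∧ z = t • v i := by
    intro z hz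
    set R : ↥{R : Set N | IsExtremeRay P R} := ⟨ρ z, hextreme z hz⟩ with hR
    have hzρ : z ∈ (R : Set N) := ⟨1, zero_le_one, (one_smul ℝ z).symm⟩
    rw [hgenR R] at hzρ
    obtain ⟨t, ht, hzt⟩ := hzρ
    refine ⟨eqv R, t, ht, ?_⟩
    rw [hv]
    simp only [Equiv.symm_apply_apply]
    exact hzt
  -- span
  have hPW : P ⊆ ↑(Submodule.span ℝ (Set.range v)) := by
    set W := Submodule.span ℝ (Set.range v) with hW
    have hEW : B.extremePoints ℝ ⊆ ↑W := by
      intro z hz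
      obtain ⟨i, t, ht, rfl⟩ := hzrep z hz
      exact W.smul_mem t (Submodule.subset_span (Set.mem_range_self i))
    have hBW : B ⊆ ↑W := by
      rw [hB_eq]
      exact convexHull_min hEW W.convex
    intro x hx
    rcases eq_or_ne x 0 with rfl | hx0
    · exact W.zero_mem
    · have hfx : 0 < f x := hfpos x hx hx0
      have hx' : (f x)⁻¹ • x ∈ B := by
        refine ⟨hPcone _ (inv_pos.2 hfx).le _ hx, ?_⟩
        show f _ = 1
        rw [map_smul, smul_eq_mul, inv_mul_cancel₀ hfx.ne']
      have := W.smul_mem (f x) (hBW hx')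
      rwa [smul_inv_smul₀ hfx.ne'] at this
  have hspan : ⊤ ≤ Submodule.span ℝ (Set.range v) := by
    have h1 : Submodule.span ℝ P = ⊤ := by
      apply Submodule.eq_top_of_nonempty_interior'
      exact hPint.mono (interior_mono Submodule.subset_span)
    rw [← h1]
    exact Submodule.span_le.2 hPW
  set b := basisOfTopLeSpanOfCardEqFinrank v hspan (by rw [Fintype.card_fin]) with hb
  have hbv : ⇑b = v := coe_basisOfTopLeSpanOfCardEqFinrank v _ _
  refine ⟨b.equivFun, fun x => ?_⟩
  have hviP : ∀ i, v i ∈ P := fun i => hgenP _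
  constructor
  · -- x ∈ P → nonneg coordinates
    intro hx
    have hQconv : Convex ℝ {z : N | ∀ i, 0 ≤ b.repr z i} := by
      intro z hz w hw a a' ha ha' haa i
      rw [map_add, map_smul, map_smul]
      simp only [Finsupp.coe_add, Finsupp.coe_smul, Pi.add_apply, Pi.smul_apply, smul_eq_mul]
      have := hz i; have := hw i
      positivity
    have hQE : B.extremePoints ℝ ⊆ {z : N | ∀ i, 0 ≤ b.repr z i} := by
      intro z hz i
      obtain ⟨j, t, ht, rfl⟩ := hzrep z hz
      rw [map_smul]
      have : b.repr (v j) = Finsupp.single j 1 := by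
        rw [← hbv]
        exact b.repr_self j
      rw [this]
      simp only [Finsupp.coe_smul, Pi.smul_apply, smul_eq_mul]
      rcases eq_or_ne j i with rfl | hji
      · simp [ht]
      · simp [Finsupp.single_apply, hji]
    have hQB : B ⊆ {z : N | ∀ i, 0 ≤ b.repr z i} := by
      rw [hB_eq]
      exact convexHull_min hQE hQconv
    intro i
    rw [Module.Basis.equivFun_apply]
    rcases eq_or_ne x 0 with rfl | hx0
    · simp
    · have hfx : 0 < f x := hfpos x hx hx0
      have hx' : (f x)⁻¹ • x ∈ B := by
        refine ⟨hPcone _ (inv_pos.2 hfx).le _ hx, ?_⟩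
        show f _ = 1
        rw [map_smul, smul_eq_mul, inv_mul_cancel₀ hfx.ne']
      have h1 := hQB hx' i
      have h2 : b.repr x i = f x * b.repr ((f x)⁻¹ • x) i := by
        rw [map_smul]
        simp only [Finsupp.coe_smul, Pi.smul_apply, smul_eq_mul]
        rw [← mul_assoc, mul_inv_cancel₀ hfx.ne', one_mul]
      rw [h2]
      positivity
  · -- nonneg coordinates → x ∈ P
    intro hx
    have hsum := b.sum_equivFun x
    rw [← hsum]
    apply cone_sum_mem' (cone_add_mem' hPconv hPcone) h0P
    intro i _
    have : b i = v i := by rw [hbv]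
    rw [this]
    exact hPcone _ (hx i) _ (hviP i)

end AuxLemmas

/-- Lemma 5.5: a closed convex cone with nonempty interior in a
`d`-dimensional real vector space is linearly isomorphic to the quadrant `[0,∞)^d` if and
only if it has exactly `d` extreme rays. -/
theorem cone_quadrant_iff_extreme_rays
    (N : Type*) [NormedAddCommGroup N] [NormedSpace ℝ N] [FiniteDimensional ℝ N]
    (P : Set N) (hPclosed : IsClosed P) (hPconv : Convex ℝ P)
    (hPcone : ∀ t : ℝ, 0 ≤ t → ∀ x ∈ P, t • x ∈ P)
    (hPpointed : P ∩ (-P) = {0})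
    (hPint : (interior P).Nonempty) :
    (∃ φ : N ≃ₗ[ℝ] (Fin (Module.finrank ℝ N) → ℝ),
        ∀ x : N, x ∈ P ↔ ∀ i, 0 ≤ φ x i) ↔
    {R : Set N | IsExtremeRay P R}.ncard = Module.finrank ℝ N := by
  constructor
  · rintro ⟨φ, hφ⟩
    exact forward_count φ hφ
  · intro hcount
    exact backward_dir hPclosed hPconv hPcone hPpointed hPint hcount
end

section
/- Let N be a finite-dimensional linear subspace of E = ℝ^n × W such that C ∩ N is a closed convex cone (in particular (C ∩ N) ∩ (−(C ∩ N)) = {0}). If a ∈ C ∩ N is nonzero and generates an extreme ray [0,∞)·a of C ∩ N, then dim N − 1 ≤ #σ_a. (First part of Lemma 5.6.) -/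
open Pointwise

/-- Auxiliary: a uniform small `ε` keeping `a ± ε v` nonnegative. -/
lemma exists_eps_aux {n : ℕ} (a v : Fin n → ℝ) (ha : ∀ i, 0 ≤ a i)
    (hv : ∀ i, a i = 0 → v i = 0) :
    ∃ ε : ℝ, 0 < ε ∧ ∀ i, 0 ≤ a i + ε * v i ∧ 0 ≤ a i - ε * v i := by
  classical
  suffices h : ∃ ε : ℝ, 0 < ε ∧ ∀ i, ε * |v i| ≤ a i by
    obtain ⟨ε, hε, hle⟩ := h
    refine ⟨ε, hε, fun i => ?_⟩
    have h1 := hle i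
    have h2 : |ε * v i| = ε * |v i| := by
      rw [abs_mul, abs_of_pos hε]
    constructor
    · nlinarith [neg_abs_le (ε * v i)]
    · nlinarith [le_abs_self (ε * v i)]
  set S := Finset.univ.filter (fun i : Fin n => a i ≠ 0) with hSdef
  by_cases hS : S.Nonempty
  · refine ⟨min 1 (S.inf' hS fun i => a i / (|v i| + 1)), ?_, ?_⟩
    · refine lt_min one_pos ?_
      rw [Finset.lt_inf'_iff]
      intro i hi
      have hai : a i ≠ 0 := by simpa [hSdef] using hi
      have : 0 < a i := lt_of_le_of_ne (ha i) (Ne.symm hai)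
      positivity
    · intro i
      by_cases hai : a i = 0
      · simp [hv i hai, hai]
      · have hiS : i ∈ S := by simp [hSdef, hai]
        have h1 : min 1 (S.inf' hS fun i => a i / (|v i| + 1)) ≤ a i / (|v i| + 1) :=
          le_trans (min_le_right _ _) (Finset.inf'_le _ hiS)
        have h2 : (0:ℝ) < |v i| + 1 := by positivity
        have h3 : (0:ℝ) ≤ min 1 (S.inf' hS fun i => a i / (|v i| + 1)) := by
          refine le_min zero_le_one ?_
          rw [Finset.le_inf'_iff]
          intro j hj
          have haj : a j ≠ 0 := by simpa [hSdef] using hj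
          have : 0 < a j := lt_of_le_of_ne (ha j) (Ne.symm haj)
          positivity
        have h4 : (a i / (|v i| + 1)) * (|v i| + 1) = a i := by
          field_simp
        nlinarith [abs_nonneg (v i)]
  · refine ⟨1, one_pos, fun i => ?_⟩
    have : a i = 0 := by
      by_contra h
      exact hS ⟨i, by simp [hSdef, h]⟩
    simp [hv i this, this]

/-- first part of Lemma 5.6: if `C ∩ N` is a closed convex cone and the
nonzero point `a ∈ C ∩ N` generates an extreme ray of `C ∩ N`, then
`dim N − 1 ≤ #σ_a`, where `σ_a = {i : a_i = 0}`. -/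
theorem extreme_ray_dim_le
    (n : ℕ) (W : Type*) [NormedAddCommGroup W] [NormedSpace ℝ W]
    (C : Set ((Fin n → ℝ) × W)) (hC : C = {p : (Fin n → ℝ) × W | ∀ i : Fin n, 0 ≤ p.1 i})
    (N : Submodule ℝ ((Fin n → ℝ) × W)) [FiniteDimensional ℝ N]
    -- C ∩ N is a closed convex cone; the nontrivial requirement is pointedness
    (hpointed : (C ∩ (N : Set ((Fin n → ℝ) × W))) ∩ (-(C ∩ (N : Set ((Fin n → ℝ) × W)))) = {0})
    (a : (Fin n → ℝ) × W) (haC : a ∈ C) (haN : a ∈ N) (ha0 : a ≠ 0)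
    -- a generates an extreme ray of C ∩ N
    (hextreme : ∀ y, y ∈ C → y ∈ N → a - y ∈ C → a - y ∈ N →
      ∃ t : ℝ, 0 ≤ t ∧ y = t • a) :
    Module.finrank ℝ N - 1 ≤ Set.ncard {i : Fin n | a.1 i = 0} := by
  classical
  subst hC
  set σ : Set (Fin n) := {i : Fin n | a.1 i = 0} with hσ
  -- the coordinate projection on the zero set of `a`
  let T : N →ₗ[ℝ] (σ → ℝ) :=
    { toFun := fun v i => (v : (Fin n → ℝ) × W).1 i.1
      map_add' := fun v w => rfl
      map_smul' := fun c v => rfl }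
  -- kernel of T is contained in the span of a
  have hker : LinearMap.ker T ≤ Submodule.span ℝ {(⟨a, haN⟩ : N)} := by
    intro v hv
    have hvz : ∀ i : Fin n, a.1 i = 0 → (v : (Fin n → ℝ) × W).1 i = 0 := by
      intro i hi
      have := congrFun (LinearMap.mem_ker.mp hv) ⟨i, hi⟩
      simpa [T] using this
    obtain ⟨ε, hε, heps⟩ := exists_eps_aux a.1 (v : (Fin n → ℝ) × W).1
      (fun i => haC i) hvz
    set v' : (Fin n → ℝ) × W := (v : (Fin n → ℝ) × W) with hv'
    set y : (Fin n → ℝ) × W := (2⁻¹ : ℝ) • (a + ε • v') with hy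
    have hyC : y ∈ {p : (Fin n → ℝ) × W | ∀ i : Fin n, 0 ≤ p.1 i} := by
      intro i
      have := (heps i).1
      simp only [hy, Prod.smul_fst, Prod.fst_add, Pi.smul_apply, Pi.add_apply,
        smul_eq_mul]
      nlinarith
    have hyN : y ∈ N := N.smul_mem _ (N.add_mem haN (N.smul_mem _ v.2))
    have hsub : a - y = (2⁻¹ : ℝ) • (a - ε • v') := by
      rw [hy]; module
    have hsubC : a - y ∈ {p : (Fin n → ℝ) × W | ∀ i : Fin n, 0 ≤ p.1 i} := by
      intro i
      have := (heps i).2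
      rw [hsub]
      simp only [Prod.smul_fst, Prod.fst_sub, Pi.smul_apply, Pi.sub_apply,
        smul_eq_mul]
      nlinarith
    have hsubN : a - y ∈ N := N.sub_mem haN hyN
    obtain ⟨t, ht, hty⟩ := hextreme y hyC hyN hsubC hsubN
    -- extract v' = c • a
    have h1 : (2⁻¹ * ε : ℝ) • v' = (t - 2⁻¹) • a := by
      have h := hty
      rw [hy, smul_add, smul_smul] at h
      rw [sub_smul]
      exact eq_sub_of_add_eq' h
    have hne : (2⁻¹ * ε : ℝ) ≠ 0 := by positivity
    rw [Submodule.mem_span_singleton]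
    refine ⟨(2⁻¹ * ε : ℝ)⁻¹ * (t - 2⁻¹), ?_⟩
    apply Subtype.ext
    show ((2⁻¹ * ε : ℝ)⁻¹ * (t - 2⁻¹)) • a = v'
    rw [mul_smul, ← h1, smul_smul, inv_mul_cancel₀ hne, one_smul]
  -- dimension count
  have hkerdim : Module.finrank ℝ (LinearMap.ker T) ≤ 1 := by
    calc Module.finrank ℝ (LinearMap.ker T)
        ≤ Module.finrank ℝ (Submodule.span ℝ {(⟨a, haN⟩ : N)}) :=
          Submodule.finrank_mono hker
      _ ≤ 1 := le_of_eq (finrank_span_singleton (by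
            intro h
            exact ha0 (congrArg Subtype.val h)))
  have hrange : Module.finrank ℝ (LinearMap.range T) ≤ Module.finrank ℝ (σ → ℝ) :=
    (LinearMap.range T).finrank_le
  have htarget : Module.finrank ℝ (σ → ℝ) = Set.ncard σ := by
    rw [Module.finrank_pi, ← Nat.card_eq_fintype_card, Nat.card_coe_set_eq]
  have hrn := LinearMap.finrank_range_add_finrank_ker T
  omega
end

section
/- Let N be a finite-dimensional linear subspace of E = ℝ^n × W which is in good position to C and such that C ∩ N is a closed convex cone. If a ∈ C ∩ N is nonzero and generates an extreme ray [0,∞)·a of C ∩ N, then dim N − 1 = #σ_a. (Second part of Lemma 5.6.) -/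
open Pointwise

/-- second part of Lemma 5.6: if in addition `N` is in good position to
the partial quadrant `C`, then `dim N − 1 = #σ_a` for every nonzero `a ∈ C ∩ N` generating
an extreme ray of `C ∩ N`. -/
theorem extreme_ray_dim_eq
    (n : ℕ) (W : Type*) [NormedAddCommGroup W] [NormedSpace ℝ W]
    (C : Set ((Fin n → ℝ) × W)) (hC : C = {p : (Fin n → ℝ) × W | ∀ i : Fin n, 0 ≤ p.1 i})
    (N : Submodule ℝ ((Fin n → ℝ) × W)) [FiniteDimensional ℝ N]
    -- N is in good position to C: nonempty interior of N ∩ C in N …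
    (hint : ∃ x, x ∈ N ∧ x ∈ C ∧ ∃ ε > 0, ∀ y ∈ N, ‖y - x‖ < ε → y ∈ C)
    -- … together with a good complement N⊥ and constant c
    (Nperp : Submodule ℝ ((Fin n → ℝ) × W))
    (hclosed : IsClosed (Nperp : Set ((Fin n → ℝ) × W)))
    (hcompl : IsCompl N Nperp)
    (c : ℝ) (hc : 0 < c)
    (hgood : ∀ v ∈ N, ∀ m ∈ Nperp, ‖m‖ ≤ c * ‖v‖ → ((v + m ∈ C) ↔ v ∈ C))
    -- C ∩ N is a closed convex cone; the nontrivial requirement is pointedness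
    (hpointed : (C ∩ (N : Set ((Fin n → ℝ) × W))) ∩ (-(C ∩ (N : Set ((Fin n → ℝ) × W)))) = {0})
    (a : (Fin n → ℝ) × W) (haC : a ∈ C) (haN : a ∈ N) (ha0 : a ≠ 0)
    -- a generates an extreme ray of C ∩ N
    (hextreme : ∀ y, y ∈ C → y ∈ N → a - y ∈ C → a - y ∈ N →
      ∃ t : ℝ, 0 ≤ t ∧ y = t • a) :
    Module.finrank ℝ N - 1 = Set.ncard {i : Fin n | a.1 i = 0} := by
  classical
  subst hC
  set σ : Set (Fin n) := {i : Fin n | a.1 i = 0} with hσ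
  have haC' : ∀ i, 0 ≤ a.1 i := haC
  -- the coordinate-restriction linear map
  let L : ((Fin n → ℝ) × W) →ₗ[ℝ] (σ → ℝ) :=
    { toFun := fun p i => p.1 i.1
      map_add' := by intro p q; funext i; simp
      map_smul' := by intro r p; funext i; simp }
  let φ : N →ₗ[ℝ] (σ → ℝ) := L.comp N.subtype
  have haσ : ∀ i : σ, a.1 i.1 = 0 := fun i => i.2
  -- kernel of φ is the span of a
  have hker : LinearMap.ker φ = Submodule.span ℝ {(⟨a, haN⟩ : N)} := by
    apply le_antisymm
    · rintro ⟨v, hvN⟩ hv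
      have hv0 : ∀ i : Fin n, a.1 i = 0 → v.1 i = 0 := by
        intro i hi
        have := congrFun hv ⟨i, hi⟩
        simpa [φ, L] using this
      -- choose a small t > 0 with t * |v.1 i| ≤ a.1 i for all i
      obtain ⟨t, ht0, ht⟩ : ∃ t : ℝ, 0 < t ∧ ∀ i, t * |v.1 i| ≤ a.1 i := by
        have : ∀ i : Fin n, ∀ᶠ t in nhdsWithin (0:ℝ) (Set.Ioi 0),
            t * |v.1 i| ≤ a.1 i := by
          intro i
          by_cases hvi : v.1 i = 0
          · filter_upwards with t; simp [hvi, haC' i]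
          · have hai : 0 < a.1 i := lt_of_le_of_ne (haC' i)
              (fun h => hvi (hv0 i h.symm))
            have htd : Filter.Tendsto (fun t : ℝ => t * |v.1 i|)
                (nhdsWithin (0:ℝ) (Set.Ioi 0)) (nhds 0) := by
              have h1 : Filter.Tendsto (fun t : ℝ => t * |v.1 i|)
                  (nhds (0:ℝ)) (nhds (0 * |v.1 i|)) :=
                (Filter.tendsto_id (x := nhds (0:ℝ))).mul_const _
              simpa using h1.mono_left nhdsWithin_le_nhds
            filter_upwards [htd.eventually_le_const hai] with t ht using ht
        have := ((Filter.eventually_all (ι := Fin n)).2 this).and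
          (self_mem_nhdsWithin (s := Set.Ioi (0:ℝ)) (a := 0))
        obtain ⟨t, h1, h2⟩ := this.exists
        exact ⟨t, h2, h1⟩
      -- use extremality with y = (a + t v)/2
      set y : (Fin n → ℝ) × W := (2⁻¹ : ℝ) • a + (2⁻¹ * t) • v with hy
      have hyC : ∀ i, 0 ≤ y.1 i := by
        intro i
        simp only [hy, Prod.fst_add, Prod.smul_fst, Pi.add_apply, Pi.smul_apply,
          smul_eq_mul]
        nlinarith [haC' i, ht i,
          mul_le_mul_of_nonneg_left (neg_abs_le (v.1 i)) ht0.le]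
      have hayC : ∀ i, 0 ≤ (a - y).1 i := by
        intro i
        simp only [hy, Prod.fst_sub, Prod.fst_add, Prod.smul_fst, Pi.sub_apply,
          Pi.add_apply, Pi.smul_apply, smul_eq_mul]
        nlinarith [haC' i, ht i,
          mul_le_mul_of_nonneg_left (le_abs_self (v.1 i)) ht0.le]
      have hyN : y ∈ N := N.add_mem (N.smul_mem _ haN) (N.smul_mem _ hvN)
      have hayN : a - y ∈ N := N.sub_mem haN hyN
      obtain ⟨t', _, ht'⟩ := hextreme y hyC hyN hayC hayN
      -- solve for v
      have hvv : (2⁻¹ * t) • v = (t' - 2⁻¹) • a := by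
        have : (2⁻¹ : ℝ) • a + (2⁻¹ * t) • v = t' • a := ht' ▸ hy ▸ rfl
        rw [sub_smul]
        rw [eq_sub_iff_add_eq, add_comm]
        exact this
      rw [Submodule.mem_span_singleton]
      refine ⟨(2⁻¹ * t)⁻¹ * (t' - 2⁻¹), ?_⟩
      have htne : (2⁻¹ * t : ℝ) ≠ 0 := by positivity
      apply Subtype.ext
      show ((2⁻¹ * t)⁻¹ * (t' - 2⁻¹)) • a = v
      rw [mul_smul, ← hvv, smul_smul, inv_mul_cancel₀ htne, one_smul]
    · rw [Submodule.span_singleton_le_iff_mem]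
      show φ ⟨a, haN⟩ = 0
      funext i
      simpa [φ, L] using haσ i
  -- φ is surjective
  have hrange : LinearMap.range φ = ⊤ := by
    by_contra h
    have hlt : LinearMap.range φ < ⊤ := lt_top_iff_ne_top.2 h
    obtain ⟨f, hf0, hfmap⟩ :=
      (LinearMap.range φ).exists_dual_map_eq_bot_of_lt_top hlt inferInstance
    have hfker : ∀ x ∈ LinearMap.range φ, f x = 0 := by
      intro x hx
      have : f x ∈ (LinearMap.range φ).map f := Submodule.mem_map_of_mem hx
      rwa [hfmap, Submodule.mem_bot] at this
    -- find a basis vector on which f is nonzero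
    obtain ⟨j, hj⟩ : ∃ j : σ, f (fun i => if j = i then (1:ℝ) else 0) ≠ 0 := by
      by_contra hall
      push_neg at hall
      apply hf0
      apply LinearMap.ext
      intro x
      rw [LinearMap.pi_apply_eq_sum_univ f x]
      simp [hall]
    -- decompose the basis vector e_j of E along N ⊕ Nperp
    have hsup : (⊤ : Submodule ℝ ((Fin n → ℝ) × W)) = N ⊔ Nperp :=
      (codisjoint_iff.1 hcompl.codisjoint).symm
    have : ((Pi.single (j:Fin n) 1, (0:W)) : (Fin n → ℝ) × W) ∈ N ⊔ Nperp := by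
      rw [← hsup]; trivial
    obtain ⟨v, hvN, m, hmN, hvm⟩ := Submodule.mem_sup.1 this
    -- f applied to the σ-coordinates of m is nonzero
    have hfm : f (fun i : σ => m.1 i.1) ≠ 0 := by
      have h1 : (fun i : σ => m.1 i.1)
          = (fun i : σ => (Pi.single (j:Fin n) 1 : Fin n → ℝ) i.1) - φ ⟨v, hvN⟩ := by
        funext i
        have := congrFun (congrArg Prod.fst hvm) i.1
        simp only [Prod.fst_add, Pi.add_apply] at this
        simp [φ, L, ← this]
      have h2 : (fun i : σ => (Pi.single (j:Fin n) 1 : Fin n → ℝ) i.1)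
          = (fun i : σ => if j = i then (1:ℝ) else 0) := by
        funext i
        by_cases hij : j = i
        · subst hij; simp
        · have : (i : Fin n) ≠ (j : Fin n) := fun h => hij (Subtype.ext h.symm)
          simp [Pi.single_apply, this, hij]
      rw [h1, map_sub, hfker _ (LinearMap.mem_range_self φ _), sub_zero, h2]
      exact hj
    have hm0 : ∃ i : σ, m.1 i.1 ≠ 0 := by
      by_contra hall
      push_neg at hall
      apply hfm
      have : (fun i : σ => m.1 i.1) = 0 := funext fun i => hall i
      rw [this, map_zero]
    obtain ⟨i0, hi0⟩ := hm0
    -- derive a contradiction with good position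
    have hmne : m ≠ 0 := by
      intro h; rw [h] at hi0; exact hi0 rfl
    have hmnorm : 0 < ‖m‖ := norm_pos_iff.2 hmne
    have hanorm : 0 < ‖a‖ := norm_pos_iff.2 ha0
    set t : ℝ := (c * ‖a‖ / ‖m‖) * (if 0 < m.1 i0.1 then -1 else 1) with htdef
    have htm : t • m ∈ Nperp := Nperp.smul_mem t hmN
    have htnorm : ‖t • m‖ ≤ c * ‖a‖ := by
      rw [norm_smul]
      have : |t| = c * ‖a‖ / ‖m‖ := by
        rw [htdef, abs_mul]
        have h1 : |c * ‖a‖ / ‖m‖| = c * ‖a‖ / ‖m‖ := abs_of_pos (by positivity)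
        rcases le_or_gt (m.1 i0.1) 0 with h | h
        · simp [not_lt.2 h, h1]
        · simp [h, h1]
      rw [Real.norm_eq_abs, this, div_mul_cancel₀ _ (ne_of_gt hmnorm)]
    have hmem := (hgood a haN (t • m) htm htnorm).2 haC
    have := hmem i0.1
    simp only [Prod.fst_add, Prod.smul_fst, Pi.add_apply, Pi.smul_apply,
      smul_eq_mul, haσ i0, zero_add] at this
    -- this : 0 ≤ t * m.1 i0.1, but t * m.1 i0.1 < 0
    have hneg : t * m.1 i0.1 < 0 := by
      rcases lt_or_gt_of_ne hi0 with h | h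
      · have ht' : 0 < t := by
          rw [htdef]; simp [not_lt.2 (le_of_lt h)]; positivity
        exact mul_neg_of_pos_of_neg ht' h
      · have ht' : t < 0 := by
          rw [htdef]
          simp only [h, if_pos, mul_neg_one]
          have : 0 < c * ‖a‖ / ‖m‖ := by positivity
          linarith
        exact mul_neg_of_neg_of_pos ht' h
    linarith
  -- rank-nullity
  have hcount := LinearMap.finrank_range_add_finrank_ker φ
  rw [hrange, hker] at hcount
  rw [finrank_top] at hcount
  rw [Module.finrank_fintype_fun_eq_card] at hcount
  have hane : (⟨a, haN⟩ : N) ≠ 0 := by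
    intro h
    exact ha0 (congrArg Subtype.val h)
  rw [finrank_span_singleton hane] at hcount
  have hncard : Set.ncard σ = Fintype.card σ := by
    rw [Set.ncard_eq_toFinset_card', Set.toFinset_card]
  omega
end

section
/- Let N be a finite-dimensional linear subspace of E = ℝ^n × W in good position to C, with good complement N⊥ and constant c > 0. Let Σ = ⋃ { σ_a : a ∈ (C ∩ N)∖{0} }. Then N⊥ ⊆ ℝ^{Σᶜ} ⊕ W; that is, every m = (m₁,…,m_n, m_∞) ∈ N⊥ satisfies m_i = 0 for all i ∈ Σ. (Lemma 5.7.) -/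
/-- Lemma 5.7: a good complement `N⊥` of a subspace `N` in good position
to `C = [0,∞)^n × W` is contained in `ℝ^{Σᶜ} ⊕ W`, where
`Σ = ⋃ {σ_a : a ∈ (C ∩ N)∖{0}}`. -/
theorem good_complement_vanishes_on_Sigma
    (n : ℕ) (W : Type*) [NormedAddCommGroup W] [NormedSpace ℝ W]
    (C : Set ((Fin n → ℝ) × W)) (hC : C = {p : (Fin n → ℝ) × W | ∀ i : Fin n, 0 ≤ p.1 i})
    (N Nperp : Submodule ℝ ((Fin n → ℝ) × W)) [FiniteDimensional ℝ N]
    -- N in good position to C with good complement N⊥ and constant c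
    (hint : ∃ x, x ∈ N ∧ x ∈ C ∧ ∃ ε > 0, ∀ y ∈ N, ‖y - x‖ < ε → y ∈ C)
    (hclosed : IsClosed (Nperp : Set ((Fin n → ℝ) × W)))
    (hcompl : IsCompl N Nperp)
    (c : ℝ) (hc : 0 < c)
    (hgood : ∀ v ∈ N, ∀ m ∈ Nperp, ‖m‖ ≤ c * ‖v‖ → ((v + m ∈ C) ↔ v ∈ C)) :
    ∀ m ∈ Nperp, ∀ i : Fin n,
      (∃ a : (Fin n → ℝ) × W, a ∈ C ∧ a ∈ N ∧ a ≠ 0 ∧ a.1 i = 0) → m.1 i = 0 := by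
  intro m hm i ⟨a, haC, haN, ha0, hai⟩
  have hna : 0 < ‖a‖ := norm_pos_iff.mpr ha0
  set t : ℝ := ‖m‖ / (c * ‖a‖) with ht
  have htpos : 0 ≤ t := div_nonneg (norm_nonneg m) (le_of_lt (mul_pos hc hna))
  have key : c * (t * ‖a‖) = ‖m‖ := by
    rw [ht]; field_simp
  have hnorm : ‖m‖ ≤ c * ‖t • a‖ := by
    rw [norm_smul, Real.norm_eq_abs, abs_of_nonneg htpos, key]
  have htaN : t • a ∈ N := N.smul_mem t haN
  have htaC : t • a ∈ C := by
    rw [hC] at haC ⊢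
    intro j
    have := haC j
    simpa using mul_nonneg htpos this
  have htai : (t • a).1 i = 0 := by simp [hai]
  have h1 : t • a + m ∈ C := (hgood _ htaN m hm hnorm).mpr htaC
  have h2 : t • a + (-m) ∈ C := by
    refine (hgood _ htaN (-m) (Nperp.neg_mem hm) ?_).mpr htaC
    simpa using hnorm
  rw [hC] at h1 h2
  have e1 : 0 ≤ m.1 i := by simpa [hai] using h1 i
  have e2 : m.1 i ≤ 0 := by simpa [hai] using h2 i
  linarith
end

section
/- Let N be a finite-dimensional linear subspace of E = ℝ^n × W in good position to C with good complement N⊥. Identify W with {0} × W, and let Ñ be any linear complement of N ∩ W in N, so that N = Ñ ⊕ (N ∩ W). Then Ñ is in good position to C, and Ñ⊥ := (N ∩ W) ⊕ N⊥ is a good complement of Ñ in E. (Lemma 5.8.) -/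
/-- Lemma 5.8: if `N` is in good position to `C = [0,∞)^n × W` with good
complement `N⊥`, and `Ñ` is a linear complement of `N ∩ ({0} × W)` in `N`, then `Ñ` is in
good position to `C` and `Ñ⊥ = (N ∩ ({0} × W)) ⊕ N⊥` is a good complement of `Ñ`. -/
theorem complement_good_position
    (n : ℕ) (W : Type*) [NormedAddCommGroup W] [NormedSpace ℝ W] [CompleteSpace W]
    (C : Set ((Fin n → ℝ) × W)) (hC : C = {p : (Fin n → ℝ) × W | ∀ i : Fin n, 0 ≤ p.1 i})
    -- W identified with {0} × W
    (W₀ : Submodule ℝ ((Fin n → ℝ) × W))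
    (hW₀ : W₀ = Submodule.prod (⊥ : Submodule ℝ (Fin n → ℝ)) (⊤ : Submodule ℝ W))
    (N Nperp Ntilde : Submodule ℝ ((Fin n → ℝ) × W)) [FiniteDimensional ℝ N]
    -- N in good position to C with good complement N⊥ and constant c
    (hint : ∃ x, x ∈ N ∧ x ∈ C ∧ ∃ ε > 0, ∀ y ∈ N, ‖y - x‖ < ε → y ∈ C)
    (hclosed : IsClosed (Nperp : Set ((Fin n → ℝ) × W)))
    (hcompl : IsCompl N Nperp)
    (c : ℝ) (hc : 0 < c)
    (hgood : ∀ v ∈ N, ∀ m ∈ Nperp, ‖m‖ ≤ c * ‖v‖ → ((v + m ∈ C) ↔ v ∈ C))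
    -- Ñ is a linear complement of N ∩ W₀ in N
    (hNt : Ntilde ≤ N)
    (hNtdisj : Ntilde ⊓ (N ⊓ W₀) = ⊥)
    (hNtsup : Ntilde ⊔ (N ⊓ W₀) = N) :
    -- Ñ⊥ := (N ∩ W₀) ⊕ N⊥ is a closed complement of Ñ …
    IsClosed (((N ⊓ W₀) ⊔ Nperp : Submodule ℝ ((Fin n → ℝ) × W)) : Set ((Fin n → ℝ) × W)) ∧
    IsCompl Ntilde ((N ⊓ W₀) ⊔ Nperp) ∧
    -- … Ñ ∩ C has nonempty interior in Ñ …
    (∃ x, x ∈ Ntilde ∧ x ∈ C ∧ ∃ ε > 0, ∀ y ∈ Ntilde, ‖y - x‖ < ε → y ∈ C) ∧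
    -- … and Ñ⊥ is a good complement of Ñ for some constant c' > 0
    (∃ c' : ℝ, 0 < c' ∧ ∀ v ∈ Ntilde, ∀ m ∈ (N ⊓ W₀) ⊔ Nperp,
      ‖m‖ ≤ c' * ‖v‖ → ((v + m ∈ C) ↔ v ∈ C)) := by
  -- C depends only on the first coordinate; elements of W₀ have zero first coordinate
  have hfst : ∀ a ∈ W₀, (a : (Fin n → ℝ) × W).1 = 0 := by
    intro a ha
    rw [hW₀, Submodule.mem_prod] at ha
    simpa using ha.1
  have hCadd : ∀ (v a : (Fin n → ℝ) × W), a ∈ W₀ → ((v + a ∈ C) ↔ v ∈ C) := by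
    intro v a ha
    simp only [hC, Set.mem_setOf_eq, Prod.fst_add, hfst a ha]
    simp
  have hNclosed : IsClosed (N : Set ((Fin n → ℝ) × W)) :=
    N.closed_of_finiteDimensional
  -- the continuous projection onto N along Nperp
  set P : ((Fin n → ℝ) × W) →L[ℝ] N :=
    N.linearProjOfClosedCompl Nperp hcompl hNclosed hclosed with hP
  have hPapply : ∀ a ∈ N, ∀ b ∈ Nperp, (P (a + b) : (Fin n → ℝ) × W) = a := by
    intro a ha b hb
    have : P (a + b) = (⟨a, ha⟩ : N) := by
      rw [hP, Submodule.coe_continuous_linearProjOfClosedCompl']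
      rw [map_add, Submodule.linearProjOfIsCompl_apply_left hcompl ⟨a, ha⟩,
        Submodule.linearProjOfIsCompl_apply_right hcompl ⟨b, hb⟩, add_zero]
    rw [this]
  haveI : FiniteDimensional ℝ (N ⊓ W₀ : Submodule ℝ ((Fin n → ℝ) × W)) :=
    Submodule.finiteDimensional_of_le inf_le_left
  have hFclosed : IsClosed ((N ⊓ W₀ : Submodule ℝ ((Fin n → ℝ) × W)) : Set ((Fin n → ℝ) × W)) :=
    Submodule.closed_of_finiteDimensional _
  -- the sum is the preimage of N ⊓ W₀ under the continuous projection
  have hsum_eq : (((N ⊓ W₀) ⊔ Nperp : Submodule ℝ ((Fin n → ℝ) × W)) : Set ((Fin n → ℝ) × W))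
      = (fun x => (P x : (Fin n → ℝ) × W)) ⁻¹'
        ((N ⊓ W₀ : Submodule ℝ ((Fin n → ℝ) × W)) : Set ((Fin n → ℝ) × W)) := by
    ext x
    simp only [SetLike.mem_coe, Set.mem_preimage]
    constructor
    · rintro hx
      obtain ⟨a, ha, b, hb, rfl⟩ := Submodule.mem_sup.mp hx
      rw [hPapply a ((Submodule.mem_inf.mp ha).1) b hb]
      exact ha
    · intro hx
      have hxP : (P x : (Fin n → ℝ) × W) ∈ N := (P x).2
      refine Submodule.mem_sup.mpr ⟨(P x : (Fin n → ℝ) × W), hx, x - P x, ?_, by abel⟩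
      -- x - P x ∈ Nperp
      have hcoe : ⇑P = ⇑(N.projectionOnto Nperp hcompl) :=
        Submodule.coe_continuous_linearProjOfClosedCompl' hcompl hNclosed hclosed
      have hproj : (N.projectionOnto Nperp hcompl) x = P x :=
        (congrFun hcoe x).symm
      have hker : x - (P x : (Fin n → ℝ) × W) ∈
          LinearMap.ker (N.projectionOnto Nperp hcompl) := by
        rw [LinearMap.mem_ker, map_sub, hproj,
          Submodule.linearProjOfIsCompl_apply_left hcompl (P x), sub_self]
      rwa [Submodule.linearProjOfIsCompl_ker hcompl] at hker
  have hclosed_sum :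
      IsClosed (((N ⊓ W₀) ⊔ Nperp : Submodule ℝ ((Fin n → ℝ) × W)) : Set ((Fin n → ℝ) × W)) := by
    rw [hsum_eq]
    exact hFclosed.preimage (continuous_subtype_val.comp P.continuous)
  refine ⟨hclosed_sum, ?_, ?_, ?_⟩
  · -- IsCompl
    constructor
    · rw [disjoint_iff]
      ext x
      simp only [Submodule.mem_inf, Submodule.mem_bot]
      constructor
      · rintro ⟨hxt, hxs⟩
        obtain ⟨a, ha, b, hb, hab⟩ := Submodule.mem_sup.mp hxs
        have hbN : b ∈ N := by
          have : b = x - a := by rw [← hab]; abel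
          rw [this]
          exact N.sub_mem (hNt hxt) ((Submodule.mem_inf.mp ha).1)
        have hb0 : b = 0 := by
          have := hcompl.disjoint
          rw [disjoint_iff] at this
          have : b ∈ (⊥ : Submodule ℝ ((Fin n → ℝ) × W)) := by
            rw [← this]; exact ⟨hbN, hb⟩
          simpa using this
        have hxa : x = a := by rw [← hab, hb0, add_zero]
        have : x ∈ Ntilde ⊓ (N ⊓ W₀) := ⟨hxt, hxa ▸ ha⟩
        rw [hNtdisj] at this
        simpa using this
      · rintro rfl
        exact ⟨Ntilde.zero_mem, Submodule.zero_mem _⟩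
    · rw [codisjoint_iff, ← sup_assoc, hNtsup]
      exact codisjoint_iff.mp hcompl.codisjoint
  · -- interior point
    obtain ⟨x, hxN, hxC, ε, hε, hball⟩ := hint
    have hxN' : x ∈ Ntilde ⊔ (N ⊓ W₀) := by rw [hNtsup]; exact hxN
    obtain ⟨xt, hxt, w, hw, hxw⟩ := Submodule.mem_sup.mp hxN'
    refine ⟨xt, hxt, ?_, ε, hε, ?_⟩
    · have := (hCadd xt w ((Submodule.mem_inf.mp hw).2)).mp (by rw [hxw]; exact hxC)
      exact this
    · intro y hy hynorm
      have hyw : y + w ∈ C := by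
        apply hball (y + w) (N.add_mem (hNt hy) ((Submodule.mem_inf.mp hw).1))
        have : y + w - x = y - xt := by rw [← hxw]; abel
        rwa [this]
      exact (hCadd y w ((Submodule.mem_inf.mp hw).2)).mp hyw
  · -- good constant
    set K : ℝ := 1 + ‖P‖ with hK
    have hK1 : 1 ≤ K := by have := P.opNorm_nonneg; rw [hK]; linarith
    have hKpos : 0 < K := lt_of_lt_of_le one_pos hK1
    refine ⟨min 1 c / (2 * K), by positivity, ?_⟩
    intro v hv m hm hnorm
    obtain ⟨a, ha, b, hb, hab⟩ := Submodule.mem_sup.mp hm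
    have haW : a ∈ W₀ := (Submodule.mem_inf.mp ha).2
    have haN : a ∈ N := (Submodule.mem_inf.mp ha).1
    have hPa : (P m : (Fin n → ℝ) × W) = a := by rw [← hab]; exact hPapply a haN b hb
    have hanorm : ‖a‖ ≤ ‖P‖ * ‖m‖ := by
      rw [← hPa]
      calc ‖(P m : (Fin n → ℝ) × W)‖ = ‖P m‖ := rfl
        _ ≤ ‖P‖ * ‖m‖ := P.le_opNorm m
    have hbnorm : ‖b‖ ≤ K * ‖m‖ := by
      have hbe : b = m - a := by rw [← hab]; abel
      rw [hbe, hK]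
      calc ‖m - a‖ ≤ ‖m‖ + ‖a‖ := norm_sub_le m a
        _ ≤ ‖m‖ + ‖P‖ * ‖m‖ := by linarith
        _ = (1 + ‖P‖) * ‖m‖ := by ring
    have hKm : K * ‖m‖ ≤ min 1 c / 2 * ‖v‖ := by
      have h1 : ‖m‖ ≤ min 1 c / (2 * K) * ‖v‖ := hnorm
      have h2 : K * ‖m‖ ≤ K * (min 1 c / (2 * K) * ‖v‖) :=
        mul_le_mul_of_nonneg_left h1 (le_of_lt hKpos)
      have h3 : K * (min 1 c / (2 * K) * ‖v‖) = min 1 c / 2 * ‖v‖ := by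
        field_simp
      linarith
    have hmin1 : min 1 c ≤ 1 := min_le_left _ _
    have hminc : min 1 c ≤ c := min_le_right _ _
    have hminpos : 0 < min 1 c := lt_min one_pos hc
    have hva : ‖v‖ / 2 ≤ ‖v + a‖ := by
      have h1 : ‖v‖ ≤ ‖v + a‖ + ‖a‖ := by
        have := norm_add_le (v + a) (-a)
        simpa using this
      have ha2 : ‖a‖ ≤ ‖v‖ / 2 := by
        have hPleK : ‖P‖ ≤ K := by rw [hK]; linarith
        have haK : ‖a‖ ≤ K * ‖m‖ :=
          hanorm.trans (mul_le_mul_of_nonneg_right hPleK (norm_nonneg m))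
        have h4 : min 1 c / 2 * ‖v‖ ≤ 1 / 2 * ‖v‖ :=
          mul_le_mul_of_nonneg_right (by linarith) (norm_nonneg v)
        have h5 : ‖a‖ ≤ 1 / 2 * ‖v‖ := haK.trans (hKm.trans h4)
        linarith
      linarith
    have hbc : ‖b‖ ≤ c * ‖v + a‖ := by
      have h1 : ‖b‖ ≤ min 1 c / 2 * ‖v‖ := hbnorm.trans hKm
      have h2 : min 1 c / 2 * ‖v‖ ≤ c / 2 * ‖v‖ :=
        mul_le_mul_of_nonneg_right (by linarith) (norm_nonneg v)
      have h3 : c / 2 * ‖v‖ ≤ c * ‖v + a‖ := by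
        have := mul_le_mul_of_nonneg_left hva hc.le
        linarith
      linarith
    have hkey : v + a + b ∈ C ↔ v + a ∈ C :=
      hgood (v + a) (N.add_mem (hNt hv) haN) b hb hbc
    have hvm : v + m = v + a + b := by rw [← hab]; abel
    rw [hvm, hkey]
    exact hCadd v a haW
end

section
/- Let N be a finite-dimensional linear subspace of E = ℝ^n × W in good position to C, let Ñ be a linear complement of N ∩ ({0} × W) in N, and let Σ = ⋃ { σ_a : a ∈ (C ∩ N)∖{0} }. Then either Ñ ∩ (ℝ^{Σᶜ} ⊕ W) = {0}, or Ñ ⊆ ℝ^{Σᶜ} ⊕ W; and in the second case dim Ñ = 1 and Σ = ∅. (Lemma 5.10.) -/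
set_option maxHeartbeats 1600000 in
/-- Lemma 5.10: for `N` in good position to `C = [0,∞)^n × W`, a linear
complement `Ñ` of `N ∩ ({0} × W)` in `N`, and `Σ = ⋃ {σ_a : a ∈ (C ∩ N)∖{0}}`, either
`Ñ ∩ (ℝ^{Σᶜ} ⊕ W) = {0}`, or `Ñ ⊆ ℝ^{Σᶜ} ⊕ W`; in the second case `dim Ñ = 1` and
`Σ = ∅`. -/
theorem complement_position_dichotomy
    (n : ℕ) (W : Type*) [NormedAddCommGroup W] [NormedSpace ℝ W]
    (C : Set ((Fin n → ℝ) × W)) (hC : C = {p : (Fin n → ℝ) × W | ∀ i : Fin n, 0 ≤ p.1 i})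
    (W₀ : Submodule ℝ ((Fin n → ℝ) × W))
    (hW₀ : W₀ = Submodule.prod (⊥ : Submodule ℝ (Fin n → ℝ)) (⊤ : Submodule ℝ W))
    (N Nperp Ntilde : Submodule ℝ ((Fin n → ℝ) × W)) [FiniteDimensional ℝ N]
    -- N in good position to C with good complement N⊥ and constant c
    (hint : ∃ x, x ∈ N ∧ x ∈ C ∧ ∃ ε > 0, ∀ y ∈ N, ‖y - x‖ < ε → y ∈ C)
    (hclosed : IsClosed (Nperp : Set ((Fin n → ℝ) × W)))
    (hcompl : IsCompl N Nperp)
    (c : ℝ) (hc : 0 < c)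
    (hgood : ∀ v ∈ N, ∀ m ∈ Nperp, ‖m‖ ≤ c * ‖v‖ → ((v + m ∈ C) ↔ v ∈ C))
    -- Ñ is a linear complement of N ∩ W₀ in N
    (hNt : Ntilde ≤ N)
    (hNtdisj : Ntilde ⊓ (N ⊓ W₀) = ⊥)
    (hNtsup : Ntilde ⊔ (N ⊓ W₀) = N)
    -- Σ is the union of the σ_a over nonzero a ∈ C ∩ N
    (S : Set (Fin n))
    (hS : S = {i : Fin n | ∃ a : (Fin n → ℝ) × W, a ∈ C ∧ a ∈ N ∧ a ≠ 0 ∧ a.1 i = 0}) :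
    (∀ x ∈ Ntilde, (∀ i ∈ S, x.1 i = 0) → x = 0) ∨
    ((∀ x ∈ Ntilde, ∀ i ∈ S, x.1 i = 0) ∧ Module.finrank ℝ Ntilde = 1 ∧ S = ∅) := by

  by_cases hw : ∃ x, x ∈ Ntilde ∧ x ≠ 0 ∧ ∀ i ∈ S, x.1 i = 0
  · right
    obtain ⟨x, hxNt, hx0, hxS⟩ := hw
    have hxN : x ∈ N := hNt hxNt
    have memC : ∀ p : (Fin n → ℝ) × W, p ∈ C ↔ ∀ i, 0 ≤ p.1 i := fun p => by
      rw [hC]; exact Iff.rfl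
    have hSmem : ∀ (v : (Fin n → ℝ) × W) (j : Fin n),
        v ∈ N → (∀ k, 0 ≤ v.1 k) → v ≠ 0 → v.1 j = 0 → j ∈ S := by
      intro v j hvN hvC hv0 hvj
      rw [hS]
      exact ⟨v, (memC v).mpr hvC, hvN, hv0, hvj⟩
    have hNW : ∀ w, w ∈ N → (∀ i, w.1 i = 0) → w = 0 := by
      intro w hwN hw1
      by_contra hw0
      have hx1 : ∀ i, x.1 i = 0 := fun i =>
        hxS i (hSmem w i hwN (fun k => le_of_eq (hw1 k).symm) hw0 (hw1 i))
      have hxmem : x ∈ Ntilde ⊓ (N ⊓ W₀) := by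
        refine ⟨hxNt, hxN, ?_⟩
        rw [hW₀]
        exact Submodule.mem_prod.mpr ⟨(by funext i; exact hx1 i : x.1 = 0), trivial⟩
      rw [hNtdisj] at hxmem
      exact hx0 hxmem
    rcases Nat.eq_zero_or_pos n with hn0 | hn
    · exact absurd (hNW x hxN (fun i => absurd i.isLt (by omega))) hx0
    obtain ⟨x₀, hx₀N, hx₀C, ε, hε, hball⟩ := hint
    have hx₀0 : x₀ ≠ 0 := by
      intro h0
      refine hx0 (hNW x hxN fun i => ?_)
      set t : ℝ := ε / (2 * (‖x‖ + 1)) with ht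
      have htpos : 0 < t := by positivity
      have hnorm : ∀ s : ℝ, |s| = t → ‖s • x - x₀‖ < ε := by
        intro s hs
        rw [h0, sub_zero, norm_smul, Real.norm_eq_abs, hs]
        calc t * ‖x‖ < t * (2 * (‖x‖ + 1)) := by
              have hlt : ‖x‖ < 2 * (‖x‖ + 1) := by nlinarith [norm_nonneg x]
              exact mul_lt_mul_of_pos_left hlt htpos
          _ = ε := by
              rw [ht]; exact div_mul_cancel₀ _ (by positivity)
      have h1 : 0 ≤ t * x.1 i := by
        have h := (memC _).mp (hball _ (Submodule.smul_mem N t hxN) (hnorm t (abs_of_pos htpos)))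
        simpa using h i
      have h2 : 0 ≤ -t * x.1 i := by
        have h := (memC _).mp (hball _ (Submodule.smul_mem N (-t) hxN)
          (hnorm (-t) (by rw [abs_neg]; exact abs_of_pos htpos)))
        simpa using h i
      nlinarith
    have klam : ∀ i ∈ S, ∀ m ∈ Nperp, m.1 i = 0 := by
      intro i hi m hm
      rw [hS] at hi
      obtain ⟨a, haC, haN, ha0, hai⟩ := hi
      rcases eq_or_ne m 0 with rfl | hm0
      · simp
      have hma : 0 < ‖m‖ := norm_pos_iff.mpr hm0
      have hna : 0 < ‖a‖ := norm_pos_iff.mpr ha0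
      set r : ℝ := c * ‖a‖ / ‖m‖ with hr
      have hrpos : 0 < r := by positivity
      have key : ∀ s : ℝ, |s| = r → 0 ≤ s * m.1 i := by
        intro s hs
        have hmem : s • m ∈ Nperp := Submodule.smul_mem _ _ hm
        have hnm : ‖s • m‖ ≤ c * ‖a‖ := by
          rw [norm_smul, Real.norm_eq_abs, hs, hr, div_mul_cancel₀ _ hma.ne']
        have hCm := (hgood a haN (s • m) hmem hnm).mpr haC
        have h := (memC _).mp hCm i
        simpa [hai] using h
      have h1 := key r (abs_of_pos hrpos)
      have h2 := key (-r) (by rw [abs_neg]; exact abs_of_pos hrpos)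
      nlinarith
    have pos : ∀ j, 0 < x₀.1 j := by
      intro j
      rcases lt_or_eq_of_le ((memC _).mp hx₀C j) with h | h
      · exact h
      exfalso
      have hjS : j ∈ S := hSmem x₀ j hx₀N ((memC _).mp hx₀C) hx₀0 h.symm
      have htop : ((Pi.single j (1:ℝ), 0) : (Fin n → ℝ) × W) ∈ N ⊔ Nperp := by
        rw [hcompl.sup_eq_top]; trivial
      obtain ⟨u, huN, m, hmNp, hum⟩ := Submodule.mem_sup.mp htop
      have hm1 : m.1 j = 0 := klam j hjS m hmNp
      have hu1 : u.1 j = 1 := by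
        have h2 : (u + m).1 j = 1 := by rw [hum]; simp
        simpa [hm1] using h2
      set δ : ℝ := ε / (2 * (‖u‖ + 1)) with hδ
      have hδpos : 0 < δ := by positivity
      have hnrm : ‖x₀ - δ • u - x₀‖ < ε := by
        have heq : x₀ - δ • u - x₀ = -(δ • u) := by abel
        rw [heq, norm_neg, norm_smul, Real.norm_eq_abs, abs_of_pos hδpos]
        calc δ * ‖u‖ < δ * (2 * (‖u‖ + 1)) := by
              have hlt : ‖u‖ < 2 * (‖u‖ + 1) := by nlinarith [norm_nonneg u]
              exact mul_lt_mul_of_pos_left hlt hδpos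
          _ = ε := by rw [hδ]; exact div_mul_cancel₀ _ (by positivity)
      have hyC := hball (x₀ - δ • u)
        (Submodule.sub_mem N hx₀N (Submodule.smul_mem N δ huN)) hnrm
      have hco := (memC _).mp hyC j
      rw [show (x₀ - δ • u).1 j = x₀.1 j - δ * u.1 j from by simp] at hco
      rw [← h, hu1] at hco
      linarith
    have dichot : ∀ v ∈ N, (∃ τ : ℝ, v = τ • x₀) ∨
        (∃ j : Fin n,
          (v - (v.1 j / x₀.1 j) • x₀) ≠ 0 ∧
          (∀ k, 0 ≤ (v - (v.1 j / x₀.1 j) • x₀).1 k) ∧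
          (v - (v.1 j / x₀.1 j) • x₀).1 j = 0 ∧
          (v - (v.1 j / x₀.1 j) • x₀) ∈ N) := by
      intro v hv
      obtain ⟨j, -, hj⟩ := Finset.exists_min_image Finset.univ
        (fun k => v.1 k / x₀.1 k) ⟨⟨0, hn⟩, Finset.mem_univ _⟩
      set τ := v.1 j / x₀.1 j with hτ
      by_cases h0 : v - τ • x₀ = 0
      · exact Or.inl ⟨τ, by rwa [sub_eq_zero] at h0⟩
      refine Or.inr ⟨j, h0, fun k => ?_, ?_,
        Submodule.sub_mem N hv (Submodule.smul_mem N τ hx₀N)⟩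
      · have h1 : τ ≤ v.1 k / x₀.1 k := hj k (Finset.mem_univ k)
        have h2 : τ * x₀.1 k ≤ v.1 k := (le_div_iff₀ (pos k)).mp h1
        simp only [Prod.fst_sub, Pi.sub_apply, Prod.smul_fst, Pi.smul_apply, smul_eq_mul]
        linarith
      · simp only [Prod.fst_sub, Pi.sub_apply, Prod.smul_fst, Pi.smul_apply, smul_eq_mul]
        rw [div_mul_cancel₀ _ (pos j).ne']
        ring
    obtain ⟨y, hyNt, hy0, hyS, hyC⟩ :
        ∃ y, y ∈ Ntilde ∧ y ≠ 0 ∧ (∀ i ∈ S, y.1 i = 0) ∧ ∀ k, 0 ≤ y.1 k := by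
      rcases dichot x hxN with ⟨τ, hτ⟩ | ⟨j, hu0, huge, huj, huN⟩
      · rcases le_or_gt 0 τ with ht | ht
        · refine ⟨x, hxNt, hx0, hxS, fun k => ?_⟩
          rw [hτ]
          simpa using mul_nonneg ht (pos k).le
        · refine ⟨-x, Submodule.neg_mem _ hxNt, neg_ne_zero.mpr hx0,
            fun i hi => by simp [hxS i hi], fun k => ?_⟩
          rw [hτ]
          simp only [Prod.fst_neg, Pi.neg_apply, Prod.smul_fst, Pi.smul_apply, smul_eq_mul]
          nlinarith [pos k]
      · have hjS : j ∈ S := hSmem _ j huN huge hu0 huj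
        have hxj : x.1 j = 0 := hxS j hjS
        have hxx : x - (x.1 j / x₀.1 j) • x₀ = x := by
          rw [hxj, zero_div, zero_smul, sub_zero]
        rw [hxx] at huge
        exact ⟨x, hxNt, hx0, hxS, huge⟩
    have hyN : y ∈ N := hNt hyNt
    have hSempty : S = ∅ := by
      rw [Set.eq_empty_iff_forall_notMem]
      intro i hi
      have hyi : y.1 i = 0 := hyS i hi
      have hex : ∃ j, 0 < y.1 j := by
        by_contra hcon
        push_neg at hcon
        exact hy0 (hNW y hyN (fun k => le_antisymm (hcon k) (hyC k)))
      obtain ⟨j₁, hj₁⟩ := hex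
      set P : Finset (Fin n) := Finset.univ.filter (fun k => 0 < y.1 k) with hP
      have hPne : P.Nonempty := ⟨j₁, by simp [hP, hj₁]⟩
      obtain ⟨j₀, hj₀P, hj₀⟩ := Finset.exists_min_image P (fun k => x₀.1 k / y.1 k) hPne
      have hyj₀ : 0 < y.1 j₀ := by simpa [hP] using hj₀P
      obtain ⟨t, htdef⟩ : ∃ t : ℝ, t = x₀.1 j₀ / y.1 j₀ := ⟨_, rfl⟩
      obtain ⟨z, hz⟩ : ∃ z, z = x₀ - t • y := ⟨_, rfl⟩
      have hzN : z ∈ N := by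
        rw [hz]; exact Submodule.sub_mem N hx₀N (Submodule.smul_mem N t hyN)
      have hz1 : ∀ k, z.1 k = x₀.1 k - t * y.1 k := by
        intro k
        rw [hz]
        simp [Prod.fst_sub, Pi.sub_apply, Prod.smul_fst, Pi.smul_apply, smul_eq_mul]
      have hzc : ∀ k, 0 ≤ z.1 k := by
        intro k
        rw [hz1]
        by_cases hk : 0 < y.1 k
        · have hmin : t ≤ x₀.1 k / y.1 k := by
            rw [htdef]; exact hj₀ k (by simp [hP, hk])
          have hmin2 := (le_div_iff₀ hk).mp hmin
          linarith
        · have hy0k : y.1 k = 0 := le_antisymm (not_lt.mp hk) (hyC k)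
          rw [hy0k]
          nlinarith [pos k]
      have hzj₀ : z.1 j₀ = 0 := by
        rw [hz1, htdef, div_mul_cancel₀ _ hyj₀.ne']
        ring
      have hz0 : z ≠ 0 := by
        intro hzeq
        have hzi : z.1 i = x₀.1 i := by rw [hz1, hyi]; ring
        rw [hzeq] at hzi
        have h0i : (0 : ℝ) = x₀.1 i := by simpa using hzi
        nlinarith [pos i]
      have hj₀S : j₀ ∈ S := hSmem z j₀ hzN hzc hz0 hzj₀
      have : y.1 j₀ = 0 := hyS j₀ hj₀S
      linarith
    have hspan : N ≤ Submodule.span ℝ {x₀} := by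
      intro v hv
      rcases dichot v hv with ⟨τ, hτ⟩ | ⟨j, hu0, huge, huj, huN⟩
      · rw [hτ]
        exact Submodule.smul_mem _ _ (Submodule.mem_span_singleton_self x₀)
      · exact absurd (hSmem _ j huN huge hu0 huj)
          (by rw [hSempty]; exact Set.notMem_empty j)
    haveI : FiniteDimensional ℝ Ntilde := Submodule.finiteDimensional_of_le hNt
    have hrank : Module.finrank ℝ Ntilde = 1 := by
      have hle : Ntilde ≤ Submodule.span ℝ {x₀} := le_trans hNt hspan
      have h1 : Module.finrank ℝ Ntilde ≤ Module.finrank ℝ (Submodule.span ℝ {x₀}) :=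
        Submodule.finrank_mono hle
      rw [finrank_span_singleton hx₀0] at h1
      have h2 : 0 < Module.finrank ℝ Ntilde := by
        rw [Module.finrank_pos_iff_exists_ne_zero]
        exact ⟨⟨x, hxNt⟩, by simpa [Submodule.mk_eq_zero] using hx0⟩
      omega
    exact ⟨fun x hx i hi => absurd hi (by rw [hSempty]; exact Set.notMem_empty i),
      hrank, hSempty⟩
  · left
    intro x hx hxS
    by_contra hx0
    exact hw ⟨x, hx, hx0, hxS⟩
end

section
/- Let E and F be real Banach spaces, U an open neighborhood of 0 in E, and f : U → F a map of class C¹ with f(0) = 0 whose derivative T := Df(0) is a Fredholm operator: K := ker T is finite-dimensional with a closed complement X in E, and Y := range T is closed with a finite-dimensional complement C in F. Let P : F → F denote the projection onto Y along C, and let (T|X)⁻¹ : Y → X be the inverse of the isomorphism T|X : X → Y. Define B(k,y) := P f(k + (T|X)⁻¹ y) − y for (k,y) ∈ K × Y near (0,0). Then B(0,0) = 0, DB(0,0) = 0, and for every ε > 0 there exists δ > 0 such that ‖B(k,y) − B(k,y′)‖ ≤ ε‖y − y′‖ whenever k ∈ K, y, y′ ∈ Y satisfy ‖k‖ < δ,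 ‖y‖ < δ, ‖y′‖ < δ. (Classical contraction-germ normal form of a nonlinear Fredholm map, as established in the introduction.) -/
/-- classical contraction-germ normal form of a nonlinear Fredholm map, as
established in the introduction. -/
theorem fredholm_contraction_normal_form
    (E F : Type*) [NormedAddCommGroup E] [NormedSpace ℝ E] [CompleteSpace E]
    [NormedAddCommGroup F] [NormedSpace ℝ F] [CompleteSpace F]
    (U : Set E) (hU : IsOpen U) (h0U : (0 : E) ∈ U)
    (f : E → F) (hf : ContDiffOn ℝ 1 f U) (hf0 : f 0 = 0)
    -- T = Df(0)
    (T : E →L[ℝ] F) (hT : HasFDerivAt f T 0)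
    -- T is Fredholm: finite-dimensional kernel with closed complement X,
    -- closed range with finite-dimensional complement C
    [FiniteDimensional ℝ (LinearMap.ker (T : E →ₗ[ℝ] F))]
    (X : Submodule ℝ E) (hXclosed : IsClosed (X : Set E))
    (hX : IsCompl (LinearMap.ker (T : E →ₗ[ℝ] F)) X)
    (hYclosed : IsClosed ((LinearMap.range (T : E →ₗ[ℝ] F) : Submodule ℝ F) : Set F))
    (Cc : Submodule ℝ F) [FiniteDimensional ℝ Cc]
    (hCc : IsCompl (LinearMap.range (T : E →ₗ[ℝ] F)) Cc)
    -- P is the projection onto Y = range T along C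
    (P : F →L[ℝ] F) (hPY : ∀ y ∈ LinearMap.range (T : E →ₗ[ℝ] F), P y = y) (hPC : ∀ z ∈ Cc, P z = 0)
    -- Tinv realizes (T|X)⁻¹ : Y → X
    (Tinv : F →L[ℝ] E)
    (hTinvX : ∀ y ∈ LinearMap.range (T : E →ₗ[ℝ] F), Tinv y ∈ X)
    (hTinvT : ∀ y ∈ LinearMap.range (T : E →ₗ[ℝ] F), T (Tinv y) = y)
    -- B(k,y) = P f(k + (T|X)⁻¹ y) − y
    (B : E × F → F) (hB : ∀ p : E × F, B p = P (f (p.1 + Tinv p.2)) - p.2) :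
    B (0, 0) = 0 ∧
    HasFDerivWithinAt B (0 : E × F →L[ℝ] F)
      (((LinearMap.ker (T : E →ₗ[ℝ] F) : Submodule ℝ E) : Set E) ×ˢ
        ((LinearMap.range (T : E →ₗ[ℝ] F) : Submodule ℝ F) : Set F)) (0, 0) ∧
    ∀ ε > 0, ∃ δ > 0, ∀ k ∈ LinearMap.ker (T : E →ₗ[ℝ] F), ∀ y ∈ LinearMap.range (T : E →ₗ[ℝ] F),
      ∀ y' ∈ LinearMap.range (T : E →ₗ[ℝ] F), ‖k‖ < δ → ‖y‖ < δ → ‖y'‖ < δ →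
        ‖B (k, y) - B (k, y')‖ ≤ ε * ‖y - y'‖ := by
  have hB0 : B (0, 0) = 0 := by rw [hB]; simp [hf0]
  refine ⟨hB0, ?_, ?_⟩
  · -- derivative within K × Y at (0,0) is 0
    set J : E × F →L[ℝ] E :=
      (ContinuousLinearMap.fst ℝ E F) + Tinv.comp (ContinuousLinearMap.snd ℝ E F) with hJ
    have hJ0 : J (0, 0) = 0 := by simp [hJ]
    have hfJ : HasFDerivAt (fun p : E × F => f (J p)) (T.comp J) (0, 0) := by
      have h1 : HasFDerivAt f T (J (0, 0)) := by rw [hJ0]; exact hT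
      exact h1.comp (0, 0) J.hasFDerivAt
    have hPfJ : HasFDerivAt (fun p : E × F => P (f (J p))) (P.comp (T.comp J)) (0, 0) :=
      P.hasFDerivAt.comp (0, 0) hfJ
    set L : E × F →L[ℝ] F :=
      P.comp (T.comp J) - ContinuousLinearMap.snd ℝ E F with hL
    have hBL : HasFDerivAt B L (0, 0) := by
      have : HasFDerivAt (fun p : E × F => P (f (J p)) - p.2) L (0, 0) :=
        hPfJ.sub (ContinuousLinearMap.snd ℝ E F).hasFDerivAt
      convert this using 1
      funext p
      rw [hB]
      simp [hJ]
    set s : Set (E × F) := (((LinearMap.ker (T : E →ₗ[ℝ] F) : Submodule ℝ E) : Set E) ×ˢ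
        ((LinearMap.range (T : E →ₗ[ℝ] F) : Submodule ℝ F) : Set F)) with hs
    have hLz : ∀ p ∈ s, L p = 0 := by
      rintro ⟨k, y⟩ ⟨hk, hy⟩
      simp only [hL, hJ, ContinuousLinearMap.sub_apply, ContinuousLinearMap.comp_apply,
        ContinuousLinearMap.add_apply, ContinuousLinearMap.coe_fst',
        ContinuousLinearMap.coe_snd']
      rw [map_add, (show T k = 0 from LinearMap.mem_ker.mp hk), hTinvT y hy, zero_add, hPY y hy]
      simp
    have h1 : HasFDerivWithinAt B L s (0, 0) := hBL.hasFDerivWithinAt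
    have h2 := h1.isLittleO
    refine hasFDerivWithinAt_iff_isLittleO.mpr ?_
    have heq : (fun p : E × F => B p - B (0, 0) - L (p - (0, 0))) =ᶠ[nhdsWithin (0, 0) s]
        (fun p : E × F => B p - B (0, 0) - (0 : E × F →L[ℝ] F) (p - (0, 0))) := by
      filter_upwards [self_mem_nhdsWithin] with p hp
      have hp0 : p - ((0, 0) : E × F) = p := by simp
      rw [hp0, hLz p hp]
      simp
    exact h2.congr' heq (Filter.EventuallyEq.refl _ _)
  · -- Lipschitz estimate
    intro ε hε
    set M : ℝ := ‖Tinv‖ + 1 with hM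
    set N : ℝ := ‖P‖ + 1 with hN
    have hM0 : 0 < M := by positivity
    have hN0 : 0 < N := by positivity
    set ε' : ℝ := ε / (M * N) with hε'
    have hε'0 : 0 < ε' := by positivity
    -- continuity of the derivative at 0
    have hcont : ContinuousOn (fderiv ℝ f) U :=
      hf.continuousOn_fderiv_of_isOpen hU le_rfl
    have hc0 : ContinuousAt (fderiv ℝ f) 0 :=
      hcont.continuousAt (hU.mem_nhds h0U)
    have hfd0 : fderiv ℝ f 0 = T := hT.fderiv
    have hev : ∀ᶠ x in nhds (0 : E), ‖fderiv ℝ f x - T‖ < ε' := by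
      have : Filter.Tendsto (fderiv ℝ f) (nhds 0) (nhds T) := by
        rw [← hfd0]; exact hc0
      have := Metric.tendsto_nhds.mp this ε' hε'0
      filter_upwards [this] with x hx
      rwa [dist_eq_norm] at hx
    obtain ⟨δ₀, hδ₀, hball⟩ := Metric.mem_nhds_iff.mp
      (Filter.inter_mem hev (hU.mem_nhds h0U))
    set δ : ℝ := δ₀ / (2 * M) with hδ
    have hδ0 : 0 < δ := by positivity
    refine ⟨δ, hδ0, ?_⟩
    intro k hk y hy y' hy' hkδ hyδ hy'δ
    -- the two points
    set a : E := k + Tinv y with ha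
    set b : E := k + Tinv y' with hb
    have hmem : ∀ z : F, z ∈ LinearMap.range (T : E →ₗ[ℝ] F) → ‖z‖ < δ → k + Tinv z ∈ Metric.ball (0 : E) δ₀ := by
      intro z hz hzδ
      rw [Metric.mem_ball, dist_zero_right]
      have h1 : ‖Tinv z‖ ≤ ‖Tinv‖ * ‖z‖ := Tinv.le_opNorm z
      have h2 : ‖k + Tinv z‖ ≤ ‖k‖ + ‖Tinv z‖ := norm_add_le _ _
      have hTn : (0 : ℝ) ≤ ‖Tinv‖ := norm_nonneg _
      have h3 : ‖Tinv‖ * ‖z‖ ≤ ‖Tinv‖ * δ := mul_le_mul_of_nonneg_left hzδ.le hTn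
      have h4 : M * δ = δ₀ / 2 := by rw [hδ, hM]; field_simp
      nlinarith [norm_nonneg z]
    have haU : a ∈ Metric.ball (0 : E) δ₀ := hmem y hy hyδ
    have hbU : b ∈ Metric.ball (0 : E) δ₀ := hmem y' hy' hy'δ
    -- auxiliary function h x = P (f x) - P (T x)
    set g : E → F := fun x => P (f x) - P (T x) with hg
    have hgderiv : ∀ x ∈ Metric.ball (0 : E) δ₀,
        HasFDerivWithinAt g (P.comp (fderiv ℝ f x) - P.comp T) (Metric.ball (0 : E) δ₀) x := by
      intro x hx
      have hxU : x ∈ U := (hball hx).2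
      have hdf : HasFDerivAt f (fderiv ℝ f x) x :=
        ((hf.differentiableOn one_ne_zero).differentiableAt (hU.mem_nhds hxU)).hasFDerivAt
      have h1 : HasFDerivAt (fun x => P (f x)) (P.comp (fderiv ℝ f x)) x :=
        P.hasFDerivAt.comp x hdf
      have h2 : HasFDerivAt (fun x => P (T x)) (P.comp T) x := (P.comp T).hasFDerivAt
      exact (h1.sub h2).hasFDerivWithinAt
    have hgbound : ∀ x ∈ Metric.ball (0 : E) δ₀,
        ‖P.comp (fderiv ℝ f x) - P.comp T‖ ≤ N * ε' := by
      intro x hx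
      have hx' : ‖fderiv ℝ f x - T‖ < ε' := (hball hx).1
      calc ‖P.comp (fderiv ℝ f x) - P.comp T‖ = ‖P.comp (fderiv ℝ f x - T)‖ := by
            rw [ContinuousLinearMap.comp_sub]
        _ ≤ ‖P‖ * ‖fderiv ℝ f x - T‖ := ContinuousLinearMap.opNorm_comp_le _ _
        _ ≤ N * ε' := by
            apply mul_le_mul
            · rw [hN]; linarith
            · exact le_of_lt hx'
            · exact norm_nonneg _
            · linarith
    have hmvt : ‖g a - g b‖ ≤ (N * ε') * ‖a - b‖ :=
      (convex_ball (0 : E) δ₀).norm_image_sub_le_of_norm_hasFDerivWithin_le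
        hgderiv hgbound hbU haU
    -- identify B(k,y) - B(k,y') with g a - g b
    have hab : a - b = Tinv (y - y') := by rw [ha, hb, map_sub]; abel
    have hPT : P (T a) - P (T b) = y - y' := by
      rw [← map_sub, ← map_sub, hab, hTinvT _ (sub_mem hy hy'), hPY _ (sub_mem hy hy')]
    have hkey : B (k, y) - B (k, y') = g a - g b := by
      show _ = P (f a) - P (T a) - (P (f b) - P (T b))
      rw [hB, hB]
      show P (f a) - y - (P (f b) - y') = _
      rw [sub_sub_sub_comm, sub_sub_sub_comm (P (f a)) (P (T a)), hPT]
    have hab_le : ‖a - b‖ ≤ M * ‖y - y'‖ := by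
      rw [hab]
      calc ‖Tinv (y - y')‖ ≤ ‖Tinv‖ * ‖y - y'‖ := Tinv.le_opNorm _
        _ ≤ M * ‖y - y'‖ := by gcongr; rw [hM]; linarith
    calc ‖B (k, y) - B (k, y')‖ = ‖g a - g b‖ := by rw [hkey]
      _ ≤ (N * ε') * ‖a - b‖ := hmvt
      _ ≤ (N * ε') * (M * ‖y - y'‖) := by gcongr
      _ = ε * ‖y - y'‖ := by rw [hε']; field_simp
end
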